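/- arXiv:1704.00964 — 7 statements merged into one kernel-verified Lean document; each statement's English description precedes it below -/
import Mathlib

section
/- If G is a tree on an odd number n ≥ 3 of vertices, then the Wiener index W(G) = Σ_{u,v ∈ V(G)} d(u,v) (sum over unordered pairs) is an even number. -/
/-- The Wiener index: sum of distances over unordered pairs of vertices. -/
noncomputable def wiener {V : Type*} [Fintype V] (G : SimpleGraph V) : ℕ :=
  (∑ u : V, ∑ v : V, G.dist u v) / 2

/-- Vertex set for a caterpillar with spine `u_{-d}, …, u_d` and `L i` leaves at `u_i`.
`(0, i)` is the spine vertex `u_i`; `(j, i)` for `1 ≤ j ≤ L i` is the `j`-th leaf at `u_i`. -/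
noncomputable def catVerts (d : ℤ) (L : ℤ → ℕ) : Finset (ℤ × ℤ) :=
  (Finset.Icc (-d) d).biUnion (fun i => (Finset.Icc (0:ℤ) (L i : ℤ)).image (fun j => (j, i)))

/-- The caterpillar graph with spine `u_{-d}, …, u_d` and `L i` leaves appended to `u_i`. -/
def caterpillar (d : ℤ) (L : ℤ → ℕ) : SimpleGraph ↥(catVerts d L) :=
  SimpleGraph.fromRel (fun a b =>
    (a.1.1 = 0 ∧ b.1.1 = 0 ∧ a.1.2 + 1 = b.1.2) ∨
    (a.1.2 = b.1.2 ∧ a.1.1 = 0 ∧ b.1.1 ≠ 0))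

/-- Leaf-count function of the caterpillar `B₁(n,d,x)`. -/
def B1L (n d x : ℤ) : ℤ → ℕ := fun i =>
  (if i = -d - 1 + x ∨ i = d + 1 - x then 1 else 0) +
  (if |i| ≤ (n - 2*d - 4)/2 then 1 else 0)

/-- The caterpillar `B₁(n,d,x)`. -/
noncomputable def B1 (n d x : ℤ) := caterpillar d (B1L n d x)

/-- Leaf-count function of the caterpillar `B₂(n,d,x)`. -/
def B2L (n d x : ℤ) : ℤ → ℕ := fun i =>
  (if |i| ≤ d - 2 then 1 else 0) +
  (if |i| = d - 1 then x.toNat else 0) +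
  (if |i| = d then ((n - 4*d - 2*x + 2)/2).toNat else 0)

/-- The caterpillar `B₂(n,d,x)`. -/
noncomputable def B2 (n d x : ℤ) := caterpillar d (B2L n d x)

/-- `G₁(n,d,x,s)`: `B₁(n−2,d,x)` with an extra leaf at `u_s` and at `u_d`. -/
noncomputable def G1 (n d x s : ℤ) :=
  caterpillar d (fun i => B1L (n-2) d x i + (if i = s then 1 else 0) + (if i = d then 1 else 0))

/-- `G₂(n,d,x,s)`: `B₂(n−2,d,x)` with an extra leaf at `u_s` and at `u_d`. -/
noncomputable def G2 (n d x s : ℤ) :=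
  caterpillar d (fun i => B2L (n-2) d x i + (if i = s then 1 else 0) + (if i = d then 1 else 0))

/-- `G₃(n,d,x,s)`: `B₁(n−1,d,x)` with an extra leaf at `u_s`. -/
noncomputable def G3 (n d x s : ℤ) :=
  caterpillar d (fun i => B1L (n-1) d x i + (if i = s then 1 else 0))

/-- `G₄(n,d,x,s)`: `B₂(n−1,d,x)` with an extra leaf at `u_s`. -/
noncomputable def G4 (n d x s : ℤ) :=
  caterpillar d (fun i => B2L (n-1) d x i + (if i = s then 1 else 0))

/-- The star on `n` vertices: vertex `0` adjacent to all others. -/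
def starGraph (n : ℕ) : SimpleGraph (Fin n) :=
  SimpleGraph.fromRel (fun a _ => a.val = 0)

private lemma tree_dist_eq_path_length' {V : Type*} {G : SimpleGraph V} (hT : G.IsTree)
    {u v : V} {p : G.Walk u v} (hp : p.IsPath) : G.dist u v = p.length := by
  classical
  obtain ⟨q, hq⟩ := hT.isConnected.exists_walk_length_eq_dist u v
  have h1 : G.dist u v ≤ p.length := SimpleGraph.dist_le p
  have h2 : (⟨p, hp⟩ : G.Path u v) = q.toPath := hT.IsAcyclic.path_unique _ _
  have h3 : p.length ≤ q.length := by
    have := congrArg (fun r : G.Path u v => (r : G.Walk u v).length) h2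
    simp only [SimpleGraph.Walk.toPath] at this
    rw [this]
    exact q.length_bypass_le
  omega

private lemma tree_dist_adj' {V : Type*} {G : SimpleGraph V} (hT : G.IsTree)
    (u : V) {v w : V} (h : G.Adj v w) :
    (G.dist u w : ZMod 2) = (G.dist u v : ZMod 2) + 1 := by
  classical
  obtain ⟨q, hq⟩ := hT.isConnected.exists_walk_length_eq_dist u v
  have hp : q.bypass.IsPath := q.bypass_isPath
  set p : G.Walk u v := q.bypass with hpdef
  have hpl : G.dist u v = p.length := tree_dist_eq_path_length' hT hp
  by_cases hw : w ∈ p.support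
  · have ht : (p.takeUntil w hw).IsPath := hp.takeUntil hw
    have hd : (p.dropUntil w hw).IsPath := hp.dropUntil hw
    have hlen : (p.takeUntil w hw).length + (p.dropUntil w hw).length = p.length := by
      rw [← SimpleGraph.Walk.length_append, SimpleGraph.Walk.take_spec]
    have hedge : (SimpleGraph.Walk.cons h.symm SimpleGraph.Walk.nil : G.Walk w v).IsPath := by
      simp [SimpleGraph.Walk.cons_isPath_iff, h.symm.ne]
    have heq : (⟨p.dropUntil w hw, hd⟩ : G.Path w v) = ⟨_, hedge⟩ :=
      hT.IsAcyclic.path_unique _ _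
    have hd1 : (p.dropUntil w hw).length = 1 := by
      have := congrArg (fun r : G.Path w v => (r : G.Walk w v).length) heq
      simpa using this
    have huw : G.dist u w = (p.takeUntil w hw).length := tree_dist_eq_path_length' hT ht
    have hfin : G.dist u v = G.dist u w + 1 := by omega
    have e2 : (2 : ZMod 2) = 0 := by decide
    rw [hfin]; push_cast; linear_combination -e2
  · have hp' : (SimpleGraph.Walk.cons h.symm p.reverse).IsPath := by
      rw [SimpleGraph.Walk.cons_isPath_iff]
      exact ⟨hp.reverse, by rwa [SimpleGraph.Walk.support_reverse, List.mem_reverse]⟩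
    have hp'' : (SimpleGraph.Walk.cons h.symm p.reverse).reverse.IsPath := hp'.reverse
    have hfin : G.dist u w = G.dist u v + 1 := by
      have := tree_dist_eq_path_length' hT hp''
      simp only [SimpleGraph.Walk.length_reverse, SimpleGraph.Walk.length_cons] at this
      omega
    rw [hfin]; push_cast; ring

private lemma sum_swap_filter' {V M : Type*} [Fintype V] [AddCommMonoid M]
    (e : V ≃ Fin (Fintype.card V)) (g : V × V → M) :
    ∑ p ∈ Finset.univ.filter (fun p : V × V => e p.2 < e p.1), g p
      = ∑ p ∈ Finset.univ.filter (fun p : V × V => e p.1 < e p.2), g (p.2, p.1) := by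
  apply Finset.sum_nbij' (i := Prod.swap) (j := Prod.swap) <;> simp [Prod.swap]

private lemma three_split' {V M : Type*} [Fintype V] [AddCommMonoid M]
    (e : V ≃ Fin (Fintype.card V)) (g : V × V → M) :
    ∑ p : V × V, g p =
      ((∑ p ∈ Finset.univ.filter (fun p : V × V => e p.1 < e p.2), g p)
      + ∑ p ∈ Finset.univ.filter (fun p : V × V => e p.2 < e p.1), g p)
      + ∑ u : V, g (u, u) := by
  classical
  rw [← Finset.sum_filter_add_sum_filter_not Finset.univ (fun p : V × V => e p.1 < e p.2) g,
    add_assoc]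
  congr 1
  rw [← Finset.sum_filter_add_sum_filter_not
      (Finset.univ.filter (fun p : V × V => ¬ e p.1 < e p.2))
      (fun p : V × V => e p.2 < e p.1) g]
  congr 1
  · rw [Finset.filter_filter]
    apply Finset.sum_congr _ (fun _ _ => rfl)
    apply Finset.filter_congr
    intro p _
    simp only [and_iff_right_iff_imp]
    exact fun hq => lt_asymm hq
  · rw [Finset.filter_filter]
    have : Finset.filter (fun p : V × V => ¬e p.1 < e p.2 ∧ ¬e p.2 < e p.1) Finset.univ
        = Finset.filter (fun p : V × V => p.1 = p.2) Finset.univ := by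
      apply Finset.filter_congr
      intro p _
      simp only [not_lt]
      constructor
      · rintro ⟨h1, h2⟩
        exact e.injective (le_antisymm h2 h1)
      · rintro h
        rw [h]
        exact ⟨le_rfl, le_rfl⟩
    rw [this]
    apply Finset.sum_nbij' (i := fun p => p.1) (j := fun u => (u, u)) <;>
      simp +contextual [Prod.ext_iff, eq_comm]

/-- A tree on an odd number `n ≥ 3` of vertices has even Wiener index. -/
theorem wiener_even_of_odd_card {V : Type*} [Fintype V] (G : SimpleGraph V)
    (hT : G.IsTree) (hodd : Odd (Fintype.card V)) (hn : 3 ≤ Fintype.card V) :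
    Even (wiener G) := by
  classical
  have e2 : (2 : ZMod 2) = 0 := by decide
  have hne : Nonempty V := Fintype.card_pos_iff.mp (by omega)
  obtain ⟨r⟩ := hne
  set f : V → ZMod 2 := fun v => (G.dist r v : ZMod 2) with hf
  have key : ∀ u v : V, (G.dist u v : ZMod 2) = f u + f v := by
    intro u v
    obtain ⟨p⟩ := hT.isConnected u v
    induction p with
    | nil =>
      rw [SimpleGraph.dist_self]
      push_cast
      exact (CharTwo.add_self_eq_zero _).symm
    | @cons a b c hadj q ih =>
      have h1 : (G.dist c a : ZMod 2) = (G.dist c b : ZMod 2) + 1 :=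
        tree_dist_adj' hT c hadj.symm
      have h2 : f a = f b + 1 := tree_dist_adj' hT r hadj.symm
      have hcomm1 : ((G.dist a c : ℕ) : ZMod 2) = ((G.dist c a : ℕ) : ZMod 2) := by
        rw [SimpleGraph.dist_comm]
      have hcomm2 : ((G.dist c b : ℕ) : ZMod 2) = ((G.dist b c : ℕ) : ZMod 2) := by
        rw [SimpleGraph.dist_comm]
      linear_combination hcomm1 + h1 + hcomm2 + ih - h2
  let e := Fintype.equivFin V
  set A := Finset.univ.filter (fun p : V × V => e p.1 < e p.2) with hA
  set T := ∑ p ∈ A, G.dist p.1 p.2 with hT2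
  have hS : ∑ u : V, ∑ v : V, G.dist u v = 2 * T := by
    have hpt : ∑ p : V × V, G.dist p.1 p.2 = ∑ u : V, ∑ v : V, G.dist u v :=
      Fintype.sum_prod_type (f := fun p : V × V => G.dist p.1 p.2)
    rw [← hpt]
    rw [three_split' e (fun p : V × V => G.dist p.1 p.2)]
    rw [sum_swap_filter' e (fun p : V × V => G.dist p.1 p.2)]
    simp only [SimpleGraph.dist_self, Finset.sum_const_zero, add_zero]
    have hd : ∑ p ∈ A, G.dist (p.2, p.1).1 (p.2, p.1).2 = ∑ p ∈ A, G.dist p.1 p.2 :=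
      Finset.sum_congr rfl (fun p _ => SimpleGraph.dist_comm)
    rw [hd, ← hA, ← hT2]
    omega
  have hw : wiener G = T := by
    rw [wiener, hS]
    omega
  rw [hw]
  suffices hz : ((T : ℕ) : ZMod 2) = 0 by
    rw [ZMod.natCast_eq_zero_iff] at hz
    obtain ⟨k, hk⟩ := hz
    exact ⟨k, by omega⟩
  rw [hT2]
  rw [Nat.cast_sum]
  rw [Finset.sum_congr rfl (fun p _ => key p.1 p.2)]
  rw [Finset.sum_add_distrib]
  have h4 : ∑ p ∈ A, f p.2
      = ∑ p ∈ Finset.univ.filter (fun p : V × V => e p.2 < e p.1), f p.1 := by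
    rw [sum_swap_filter' e (fun p : V × V => f p.1)]
  rw [h4]
  have h5 := three_split' e (fun p : V × V => f p.1)
  have hcard : ((Fintype.card V : ℕ) : ZMod 2) = 1 := by
    obtain ⟨m, hm⟩ := hodd
    rw [hm]
    push_cast
    linear_combination (m : ZMod 2) * e2
  have h6 : ∑ p : V × V, f p.1 = ∑ u, f u := by
    rw [Fintype.sum_prod_type]
    simp only [Finset.sum_const, Finset.card_univ, ← Finset.smul_sum]
    rw [nsmul_eq_mul, hcard, one_mul]
  rw [h6] at h5
  exact add_right_cancel (h5.symm.trans (zero_add (∑ u, f u)).symm)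
end

section
/- Let G be a tree containing a vertex u of degree 4 whose neighbors include two leaves v₁, v₂ and two non-leaf vertices w₁, w₂. Let G′ be the tree obtained from G by deleting the edges uv₁ and uv₂ and adding the edges w₁v₁ and w₂v₂. Then W(G′) = W(G) + 4. -/
open SimpleGraph Finset

namespace WienerAux

variable {V : Type*} [DecidableEq V]

lemma exists_path_length_dist {G : SimpleGraph V} {x y : V} (h : G.Reachable x y) :
    ∃ p : G.Walk x y, p.IsPath ∧ p.length = G.dist x y := by
  obtain ⟨p, hp⟩ := h.exists_walk_length_eq_dist
  exact ⟨p.bypass, p.bypass_isPath,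
    le_antisymm (le_trans p.length_bypass_le hp.le) (SimpleGraph.dist_le _)⟩

/-- A path between two non-`v` vertices avoids a leaf `v`. -/
lemma leaf_not_mem_support {G : SimpleGraph V} {v w : V}
    (hleaf : ∀ z, G.Adj v z → z = w) :
    ∀ {x y : V} (p : G.Walk x y), p.IsPath → x ≠ v → y ≠ v → v ∉ p.support := by
  intro x y p
  induction p with
  | nil => intro _ hx _; simp [Ne.symm hx]
  | @cons x a y h q ih =>
    intro hp hx hy
    rw [SimpleGraph.Walk.support_cons, List.mem_cons]
    push_neg
    refine ⟨Ne.symm hx, ?_⟩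
    by_cases hav : a = v
    · subst hav
      -- then x = w (x is adjacent to the leaf a = v)
      have hxw : x = w := hleaf x h.symm
      cases q with
      | nil => exact absurd rfl hy
      | @cons _ b _ h2 q2 =>
        exfalso
        have hbw : b = w := hleaf b h2
        have hxs : x ∉ (SimpleGraph.Walk.cons h2 q2).support :=
          ((SimpleGraph.Walk.cons_isPath_iff _ _).mp hp).2
        apply hxs
        rw [SimpleGraph.Walk.support_cons, List.mem_cons]
        right
        rw [hxw, ← hbw]
        exact q2.start_mem_support
    · exact ih ((SimpleGraph.Walk.cons_isPath_iff _ _).mp hp).1 hav hy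

/-- Transfer a shortest walk between non-leaf vertices to another graph agreeing off two leaves. -/
lemma exists_walk_transfer {G H : SimpleGraph V} {v₁ w₁ v₂ w₂ : V}
    (hleaf₁ : ∀ z, G.Adj v₁ z → z = w₁) (hleaf₂ : ∀ z, G.Adj v₂ z → z = w₂)
    (hagree : ∀ a b, a ≠ v₁ → b ≠ v₁ → a ≠ v₂ → b ≠ v₂ → G.Adj a b → H.Adj a b)
    {x y : V} (hr : G.Reachable x y)
    (hx1 : x ≠ v₁) (hx2 : x ≠ v₂) (hy1 : y ≠ v₁) (hy2 : y ≠ v₂) :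
    ∃ q : H.Walk x y, q.length = G.dist x y := by
  obtain ⟨p, hp, hpl⟩ := exists_path_length_dist hr
  have h1 : v₁ ∉ p.support := leaf_not_mem_support hleaf₁ p hp hx1 hy1
  have h2 : v₂ ∉ p.support := leaf_not_mem_support hleaf₂ p hp hx2 hy2
  have hedges : ∀ e ∈ p.edges, e ∈ H.edgeSet := by
    intro e he
    induction e with
    | _ a b =>
      have ha := p.fst_mem_support_of_mem_edges he
      have hb := p.snd_mem_support_of_mem_edges he
      have hadj : G.Adj a b := p.adj_of_mem_edges he
      exact H.mem_edgeSet.mpr (hagree a b (fun h => h1 (h ▸ ha)) (fun h => h1 (h ▸ hb))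
        (fun h => h2 (h ▸ ha)) (fun h => h2 (h ▸ hb)) hadj)
  exact ⟨p.transfer H hedges, by rw [SimpleGraph.Walk.length_transfer]; exact hpl⟩

/-- Distance from a leaf. -/
lemma dist_leaf {G : SimpleGraph V} (hc : G.Connected) {v w : V} (hadj : G.Adj v w)
    (hleaf : ∀ z, G.Adj v z → z = w) {x : V} (hx : x ≠ v) :
    G.dist v x = G.dist w x + 1 := by
  have hvw : G.dist v w = 1 := SimpleGraph.dist_eq_one_iff_adj.mpr hadj
  have htri : G.dist v x ≤ G.dist v w + G.dist w x := hc.dist_triangle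
  have h2 : G.dist w x + 1 ≤ G.dist v x := by
    obtain ⟨p, hpl⟩ := (hc v x).exists_walk_length_eq_dist
    cases p with
    | nil => exact absurd rfl (Ne.symm hx)
    | @cons _ b _ h q =>
      have hbw : b = w := hleaf b h
      have hle : G.dist w x ≤ q.length := by rw [← hbw]; exact SimpleGraph.dist_le q
      rw [SimpleGraph.Walk.length_cons] at hpl
      omega
  omega

/-- In a tree, distances to the two ends of an edge always differ. -/
lemma dist_ne_of_adj {G : SimpleGraph V} (hT : G.IsTree) {u w : V} (h : G.Adj u w) (x : V) :
    G.dist x u ≠ G.dist x w := by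
  intro heq
  obtain ⟨q, hq, hql⟩ := exists_path_length_dist (hT.isConnected x w)
  have hus : u ∉ q.support := by
    intro hu
    have h1 : G.dist x u ≤ (q.takeUntil u hu).length := SimpleGraph.dist_le _
    have h2 := congrArg SimpleGraph.Walk.length (q.take_spec hu)
    rw [SimpleGraph.Walk.length_append] at h2
    have h3 : (q.dropUntil u hu).length = 0 := by omega
    exact h.ne (SimpleGraph.Walk.eq_of_length_eq_zero h3)
  obtain ⟨p, hp, hpl⟩ := exists_path_length_dist (hT.isConnected x u)
  have hr1 : (SimpleGraph.Walk.cons h q.reverse).IsPath :=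
    hq.reverse.cons (by simpa [SimpleGraph.Walk.support_reverse] using hus)
  have hEq := (hT.existsUnique_path u x).unique hr1 hp.reverse
  have hlen := congrArg SimpleGraph.Walk.length hEq
  rw [SimpleGraph.Walk.length_cons, SimpleGraph.Walk.length_reverse,
    SimpleGraph.Walk.length_reverse] at hlen
  omega

/-- Every non-`u` vertex has a neighbor of `u` one step closer. -/
lemma exists_down {G : SimpleGraph V} (hc : G.Connected) {u x : V} (hx : x ≠ u) :
    ∃ w, G.Adj u w ∧ G.dist x w + 1 = G.dist x u := by
  obtain ⟨p, hpl⟩ := (hc u x).exists_walk_length_eq_dist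
  cases p with
  | nil => exact absurd rfl (Ne.symm hx)
  | @cons _ b _ h q =>
    refine ⟨b, h, ?_⟩
    have e1 : G.dist x b ≤ q.length := by
      rw [SimpleGraph.dist_comm]; exact SimpleGraph.dist_le q
    have e2 : G.dist x u ≤ G.dist x b + G.dist b u := hc.dist_triangle
    have e3 : G.dist b u = 1 := SimpleGraph.dist_eq_one_iff_adj.mpr h.symm
    have e4 : G.dist u x = G.dist x u := SimpleGraph.dist_comm
    rw [SimpleGraph.Walk.length_cons] at hpl
    omega

/-- In a tree the closer neighbor is unique. -/
lemma unique_down {G : SimpleGraph V} (hT : G.IsTree) {u w w' x : V}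
    (h1 : G.Adj u w) (h2 : G.Adj u w')
    (hd1 : G.dist x w + 1 = G.dist x u) (hd2 : G.dist x w' + 1 = G.dist x u) : w = w' := by
  obtain ⟨p, hp, hpl⟩ := exists_path_length_dist (hT.isConnected x w)
  obtain ⟨q, hq, hql⟩ := exists_path_length_dist (hT.isConnected x w')
  have hup : u ∉ p.support := by
    intro hu
    have a1 : G.dist x u ≤ (p.takeUntil u hu).length := SimpleGraph.dist_le _
    have a2 := p.length_takeUntil_le hu
    omega
  have huq : u ∉ q.support := by
    intro hu
    have a1 : G.dist x u ≤ (q.takeUntil u hu).length := SimpleGraph.dist_le _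
    have a2 := q.length_takeUntil_le hu
    omega
  have r1 : (SimpleGraph.Walk.cons h1 p.reverse).IsPath :=
    hp.reverse.cons (by simpa [SimpleGraph.Walk.support_reverse] using hup)
  have r2 : (SimpleGraph.Walk.cons h2 q.reverse).IsPath :=
    hq.reverse.cons (by simpa [SimpleGraph.Walk.support_reverse] using huq)
  have hEq := (hT.existsUnique_path u x).unique r1 r2
  have hsup := congrArg SimpleGraph.Walk.support hEq
  rw [SimpleGraph.Walk.support_cons, SimpleGraph.Walk.support_cons,
    SimpleGraph.Walk.support_eq_cons p.reverse, SimpleGraph.Walk.support_eq_cons q.reverse] at hsup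
  simp only [List.cons.injEq] at hsup
  exact hsup.2.1

end WienerAux

set_option maxHeartbeats 1600000
open WienerAux Finset

/-- Transformation A increases the Wiener index by exactly 4. -/
theorem wiener_transformationA {V : Type*} [Fintype V] [DecidableEq V]
    (G : SimpleGraph V) [DecidableRel G.Adj] (hT : G.IsTree)
    (u v₁ v₂ w₁ w₂ : V) (hv : v₁ ≠ v₂) (hw : w₁ ≠ w₂)
    (huv₁ : G.Adj u v₁) (huv₂ : G.Adj u v₂) (huw₁ : G.Adj u w₁) (huw₂ : G.Adj u w₂)
    (hdu : G.degree u = 4)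
    (hdv₁ : G.degree v₁ = 1) (hdv₂ : G.degree v₂ = 1)
    (hdw₁ : G.degree w₁ ≠ 1) (hdw₂ : G.degree w₂ ≠ 1) :
    wiener (SimpleGraph.fromEdgeSet
        ((G.edgeSet \ {s(u, v₁), s(u, v₂)}) ∪ {s(w₁, v₁), s(w₂, v₂)}))
      = wiener G + 4 := by
  classical
  set G' : SimpleGraph V := SimpleGraph.fromEdgeSet
      ((G.edgeSet \ {s(u, v₁), s(u, v₂)}) ∪ {s(w₁, v₁), s(w₂, v₂)}) with hG'
  have hconn : G.Connected := hT.isConnected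
  -- distinctness
  have huv1 : u ≠ v₁ := huv₁.ne
  have huv2 : u ≠ v₂ := huv₂.ne
  have huw1 : u ≠ w₁ := huw₁.ne
  have huw2 : u ≠ w₂ := huw₂.ne
  have hv1w1 : v₁ ≠ w₁ := fun h => hdw₁ (h ▸ hdv₁)
  have hv1w2 : v₁ ≠ w₂ := fun h => hdw₂ (h ▸ hdv₁)
  have hv2w1 : v₂ ≠ w₁ := fun h => hdw₁ (h ▸ hdv₂)
  have hv2w2 : v₂ ≠ w₂ := fun h => hdw₂ (h ▸ hdv₂)
  -- v₁, v₂ are leaves of G with unique neighbor u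
  have hleaf₁ : ∀ z, G.Adj v₁ z → z = u := by
    intro z hz
    exact Finset.card_le_one.mp (le_of_eq hdv₁) z
      ((SimpleGraph.mem_neighborFinset _ _ _).mpr hz) u
      ((SimpleGraph.mem_neighborFinset _ _ _).mpr huv₁.symm)
  have hleaf₂ : ∀ z, G.Adj v₂ z → z = u := by
    intro z hz
    exact Finset.card_le_one.mp (le_of_eq hdv₂) z
      ((SimpleGraph.mem_neighborFinset _ _ _).mpr hz) u
      ((SimpleGraph.mem_neighborFinset _ _ _).mpr huv₂.symm)
  -- the neighbors of u are exactly v₁, v₂, w₁, w₂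
  have hquad : ∀ z, G.Adj u z → z = v₁ ∨ z = v₂ ∨ z = w₁ ∨ z = w₂ := by
    intro z hz
    have hsub : ({v₁, v₂, w₁, w₂} : Finset V) ⊆ G.neighborFinset u := by
      intro x hx
      simp only [Finset.mem_insert, Finset.mem_singleton] at hx
      rw [SimpleGraph.mem_neighborFinset]
      rcases hx with rfl | rfl | rfl | rfl
      · exact huv₁
      · exact huv₂
      · exact huw₁
      · exact huw₂
    have hcard : ({v₁, v₂, w₁, w₂} : Finset V).card = 4 := by
      rw [Finset.card_insert_of_notMem (by simp [hv, hv1w1, hv1w2]),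
        Finset.card_insert_of_notMem (by simp [hv2w1, hv2w2]),
        Finset.card_insert_of_notMem (by simp [hw]), Finset.card_singleton]
    have heq := Finset.eq_of_subset_of_card_le hsub (by rw [hcard]; exact le_of_eq hdu)
    have hzmem : z ∈ ({v₁, v₂, w₁, w₂} : Finset V) := by
      rw [heq, SimpleGraph.mem_neighborFinset]; exact hz
    simpa using hzmem
  -- distances in G from the leaves
  have hdist₁ : ∀ x, x ≠ v₁ → G.dist v₁ x = G.dist u x + 1 :=
    fun x hx => dist_leaf hconn huv₁.symm hleaf₁ hx
  have hdist₂ : ∀ x, x ≠ v₂ → G.dist v₂ x = G.dist u x + 1 :=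
    fun x hx => dist_leaf hconn huv₂.symm hleaf₂ hx
  have hu1 : G.dist u w₁ = 1 := SimpleGraph.dist_eq_one_iff_adj.mpr huw₁
  have hu2 : G.dist u w₂ = 1 := SimpleGraph.dist_eq_one_iff_adj.mpr huw₂
  -- the key identity
  have hKey : ∀ a, a ≠ u → a ≠ v₁ → a ≠ v₂ →
      G.dist a w₁ + G.dist a w₂ = 2 * G.dist a u := by
    intro a hau ha1 ha2
    obtain ⟨w₀, hw₀adj, hw₀⟩ := exists_down hconn hau
    have t1 : G.dist a w₁ ≤ G.dist a u + G.dist u w₁ := hconn.dist_triangle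
    have t1' : G.dist a u ≤ G.dist a w₁ + G.dist w₁ u := hconn.dist_triangle
    have t2 : G.dist a w₂ ≤ G.dist a u + G.dist u w₂ := hconn.dist_triangle
    have t2' : G.dist a u ≤ G.dist a w₂ + G.dist w₂ u := hconn.dist_triangle
    have c1 : G.dist w₁ u = 1 := by rw [SimpleGraph.dist_comm]; exact hu1
    have c2 : G.dist w₂ u = 1 := by rw [SimpleGraph.dist_comm]; exact hu2
    have n1 : G.dist a u ≠ G.dist a w₁ := dist_ne_of_adj hT huw₁ a
    have n2 : G.dist a u ≠ G.dist a w₂ := dist_ne_of_adj hT huw₂ a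
    have hcase : ¬(G.dist a w₁ + 1 = G.dist a u ∧ G.dist a w₂ + 1 = G.dist a u) := by
      rintro ⟨x1, x2⟩
      exact hw (unique_down hT huw₁ huw₂ x1 x2)
    have hor : G.dist a w₁ + 1 = G.dist a u ∨ G.dist a w₂ + 1 = G.dist a u := by
      rcases hquad w₀ hw₀adj with h | h | h | h <;> rw [h] at hw₀
      · exfalso
        have hd := hdist₁ a ha1
        have e : G.dist a v₁ = G.dist v₁ a := SimpleGraph.dist_comm
        have e2 : G.dist u a = G.dist a u := SimpleGraph.dist_comm
        omega
      · exfalso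
        have hd := hdist₂ a ha2
        have e : G.dist a v₂ = G.dist v₂ a := SimpleGraph.dist_comm
        have e2 : G.dist u a = G.dist a u := SimpleGraph.dist_comm
        omega
      · exact Or.inl hw₀
      · exact Or.inr hw₀
    omega
  -- distance between w₁ and w₂
  have hww : G.dist w₁ w₂ = 2 := by
    have n := dist_ne_of_adj hT huw₂ w₁
    have c1 : G.dist w₁ u = 1 := by rw [SimpleGraph.dist_comm]; exact hu1
    have t : G.dist w₁ w₂ ≤ G.dist w₁ u + G.dist u w₂ := hconn.dist_triangle
    have p : 0 < G.dist w₁ w₂ := hconn.pos_dist_of_ne hw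
    omega
  -- adjacency in G'
  have hadj' : ∀ a b : V, G'.Adj a b ↔
      ((G.Adj a b ∧ s(a,b) ≠ s(u,v₁) ∧ s(a,b) ≠ s(u,v₂)) ∨
        s(a,b) = s(w₁,v₁) ∨ s(a,b) = s(w₂,v₂)) ∧ a ≠ b := by
    intro a b
    rw [hG', SimpleGraph.fromEdgeSet_adj]
    simp only [Set.mem_union, Set.mem_diff, Set.mem_insert_iff, Set.mem_singleton_iff,
      SimpleGraph.mem_edgeSet]
    tauto
  have hagree : ∀ a b : V, a ≠ v₁ → b ≠ v₁ → a ≠ v₂ → b ≠ v₂ → (G.Adj a b ↔ G'.Adj a b) := by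
    intro a b ha1 hb1 ha2 hb2
    rw [hadj']
    constructor
    · intro h
      refine ⟨Or.inl ⟨h, ?_, ?_⟩, h.ne⟩
      · intro heq
        rcases Sym2.eq_iff.mp heq with ⟨rfl, rfl⟩ | ⟨rfl, rfl⟩
        · exact hb1 rfl
        · exact ha1 rfl
      · intro heq
        rcases Sym2.eq_iff.mp heq with ⟨rfl, rfl⟩ | ⟨rfl, rfl⟩
        · exact hb2 rfl
        · exact ha2 rfl
    · rintro ⟨(⟨hm, _, _⟩ | he | he), hne⟩
      · exact hm
      · rcases Sym2.eq_iff.mp he with ⟨rfl, rfl⟩ | ⟨rfl, rfl⟩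
        · exact absurd rfl hb1
        · exact absurd rfl ha1
      · rcases Sym2.eq_iff.mp he with ⟨rfl, rfl⟩ | ⟨rfl, rfl⟩
        · exact absurd rfl hb2
        · exact absurd rfl ha2
  have hG'leaf₁ : ∀ z, G'.Adj v₁ z → z = w₁ := by
    intro z hz
    rw [hadj'] at hz
    obtain ⟨h, hne⟩ := hz
    rcases h with ⟨hm, hne1, _⟩ | he | he
    · exfalso
      have hzu : z = u := hleaf₁ z hm
      subst hzu
      exact hne1 (Sym2.eq_swap)
    · rw [Sym2.eq_iff] at he
      rcases he with ⟨h1, _⟩ | ⟨_, h2⟩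
      · exact absurd h1 hv1w1
      · exact h2
    · rw [Sym2.eq_iff] at he
      rcases he with ⟨h1, _⟩ | ⟨h1, _⟩
      · exact absurd h1 hv1w2
      · exact absurd h1 hv
  have hG'leaf₂ : ∀ z, G'.Adj v₂ z → z = w₂ := by
    intro z hz
    rw [hadj'] at hz
    obtain ⟨h, hne⟩ := hz
    rcases h with ⟨hm, _, hne2⟩ | he | he
    · exfalso
      have hzu : z = u := hleaf₂ z hm
      subst hzu
      exact hne2 (Sym2.eq_swap)
    · rw [Sym2.eq_iff] at he
      rcases he with ⟨h1, _⟩ | ⟨h1, _⟩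
      · exact absurd h1 hv2w1
      · exact absurd h1 (Ne.symm hv)
    · rw [Sym2.eq_iff] at he
      rcases he with ⟨h1, _⟩ | ⟨_, h2⟩
      · exact absurd h1 hv2w2
      · exact h2
  have hG'a₁ : G'.Adj w₁ v₁ := by
    rw [hadj']; exact ⟨Or.inr (Or.inl rfl), Ne.symm hv1w1⟩
  have hG'a₂ : G'.Adj w₂ v₂ := by
    rw [hadj']; exact ⟨Or.inr (Or.inr rfl), Ne.symm hv2w2⟩
  -- reachability in G'
  have hreach' : ∀ x y : V, x ≠ v₁ → x ≠ v₂ → y ≠ v₁ → y ≠ v₂ → G'.Reachable x y := by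
    intro x y hx1 hx2 hy1 hy2
    obtain ⟨q, _⟩ := exists_walk_transfer hleaf₁ hleaf₂
      (fun a b ha1 hb1 ha2 hb2 h => (hagree a b ha1 hb1 ha2 hb2).mp h)
      (hconn x y) hx1 hx2 hy1 hy2
    exact ⟨q⟩
  have hreachAll : ∀ x : V, G'.Reachable u x := by
    intro x
    by_cases hx1 : x = v₁
    · subst hx1
      exact (hreach' u w₁ huv1 huv2 (Ne.symm hv1w1) (Ne.symm hv2w1)).trans hG'a₁.reachable
    by_cases hx2 : x = v₂
    · subst hx2
      exact (hreach' u w₂ huv1 huv2 (Ne.symm hv1w2) (Ne.symm hv2w2)).trans hG'a₂.reachable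
    exact hreach' u x huv1 huv2 hx1 hx2
  have hG'conn : G'.Connected :=
    (SimpleGraph.connected_iff_exists_forall_reachable (G := G')).mpr ⟨u, hreachAll⟩
  -- distances agree away from the two leaves
  have hP1 : ∀ x y : V, x ≠ v₁ → x ≠ v₂ → y ≠ v₁ → y ≠ v₂ → G'.dist x y = G.dist x y := by
    intro x y hx1 hx2 hy1 hy2
    apply le_antisymm
    · obtain ⟨q, hq⟩ := exists_walk_transfer hleaf₁ hleaf₂
        (fun a b ha1 hb1 ha2 hb2 h => (hagree a b ha1 hb1 ha2 hb2).mp h)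
        (hconn x y) hx1 hx2 hy1 hy2
      exact hq ▸ SimpleGraph.dist_le q
    · obtain ⟨q, hq⟩ := exists_walk_transfer hG'leaf₁ hG'leaf₂
        (fun a b ha1 hb1 ha2 hb2 h => (hagree a b ha1 hb1 ha2 hb2).mpr h)
        (hreach' x y hx1 hx2 hy1 hy2) hx1 hx2 hy1 hy2
      exact hq ▸ SimpleGraph.dist_le q
  have hd'leaf₁ : ∀ x, x ≠ v₁ → G'.dist v₁ x = G'.dist w₁ x + 1 :=
    fun x hx => dist_leaf hG'conn hG'a₁.symm hG'leaf₁ hx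
  have hd'leaf₂ : ∀ x, x ≠ v₂ → G'.dist v₂ x = G'.dist w₂ x + 1 :=
    fun x hx => dist_leaf hG'conn hG'a₂.symm hG'leaf₂ hx
  -- the distance table
  have A2 : ∀ a, a ≠ v₁ → a ≠ v₂ → G'.dist a v₁ = G.dist a w₁ + 1 := by
    intro a h1 h2
    have e1 : G'.dist a v₁ = G'.dist v₁ a := SimpleGraph.dist_comm
    have e2 := hd'leaf₁ a h1
    have e3 := hP1 w₁ a (Ne.symm hv1w1) (Ne.symm hv2w1) h1 h2
    have e4 : G.dist w₁ a = G.dist a w₁ := SimpleGraph.dist_comm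
    omega
  have A3 : ∀ a, a ≠ v₁ → a ≠ v₂ → G'.dist a v₂ = G.dist a w₂ + 1 := by
    intro a h1 h2
    have e1 : G'.dist a v₂ = G'.dist v₂ a := SimpleGraph.dist_comm
    have e2 := hd'leaf₂ a h2
    have e3 := hP1 w₂ a (Ne.symm hv1w2) (Ne.symm hv2w2) h1 h2
    have e4 : G.dist w₂ a = G.dist a w₂ := SimpleGraph.dist_comm
    omega
  have A4 : G'.dist v₁ v₂ = 4 := by
    have e1 := hd'leaf₁ v₂ (Ne.symm hv)
    have e2 : G'.dist w₁ v₂ = G'.dist v₂ w₁ := SimpleGraph.dist_comm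
    have e3 := hd'leaf₂ w₁ (Ne.symm hv2w1)
    have e4 := hP1 w₂ w₁ (Ne.symm hv1w2) (Ne.symm hv2w2) (Ne.symm hv1w1) (Ne.symm hv2w1)
    have e5 : G.dist w₂ w₁ = G.dist w₁ w₂ := SimpleGraph.dist_comm
    omega
  have A5 : ∀ a, a ≠ v₁ → G.dist a v₁ = G.dist a u + 1 := by
    intro a h1
    have e1 : G.dist a v₁ = G.dist v₁ a := SimpleGraph.dist_comm
    have e2 := hdist₁ a h1
    have e3 : G.dist u a = G.dist a u := SimpleGraph.dist_comm
    omega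
  have A5' : ∀ a, a ≠ v₂ → G.dist a v₂ = G.dist a u + 1 := by
    intro a h2
    have e1 : G.dist a v₂ = G.dist v₂ a := SimpleGraph.dist_comm
    have e2 := hdist₂ a h2
    have e3 : G.dist u a = G.dist a u := SimpleGraph.dist_comm
    omega
  have A6 : G.dist v₁ v₂ = 2 := by
    have e1 := hdist₁ v₂ (Ne.symm hv)
    have e2 : G.dist u v₂ = 1 := SimpleGraph.dist_eq_one_iff_adj.mpr huv₂
    omega
  -- SUMMATION
  have split : ∀ h : V → ℕ, ∑ x : V, h x = ∑ x ∈ Finset.univ \ {v₁, v₂}, h x + (h v₁ + h v₂) := by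
    intro h
    rw [← Finset.sum_sdiff (Finset.subset_univ ({v₁, v₂} : Finset V)), Finset.sum_pair hv]
  set T : Finset V := Finset.univ \ {v₁, v₂} with hTdef
  have memT : ∀ x, x ∈ T → x ≠ v₁ ∧ x ≠ v₂ := by
    intro x hx
    rw [hTdef, Finset.mem_sdiff] at hx
    simpa using hx.2
  have huT : u ∈ T := by rw [hTdef]; simp [huv1, huv2]
  -- rows of G'
  have hrow' : ∀ a ∈ T, ∑ b : V, G'.dist a b
      = ∑ b ∈ T, G.dist a b + (G.dist a w₁ + G.dist a w₂ + 2) := by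
    intro a ha
    obtain ⟨ha1, ha2⟩ := memT a ha
    rw [split (fun b => G'.dist a b)]
    have e1 : ∑ b ∈ T, G'.dist a b = ∑ b ∈ T, G.dist a b :=
      Finset.sum_congr rfl (fun b hb => hP1 a b ha1 ha2 (memT b hb).1 (memT b hb).2)
    rw [e1, A2 a ha1 ha2, A3 a ha1 ha2]
    ring
  have hrowv₁' : ∑ b : V, G'.dist v₁ b = ∑ b ∈ T, G.dist b w₁ + T.card + 4 := by
    rw [split (fun b => G'.dist v₁ b)]
    have e1 : ∑ b ∈ T, G'.dist v₁ b = ∑ b ∈ T, (G.dist b w₁ + 1) :=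
      Finset.sum_congr rfl (fun b hb => by
        have e : G'.dist v₁ b = G'.dist b v₁ := SimpleGraph.dist_comm
        rw [e, A2 b (memT b hb).1 (memT b hb).2])
    rw [e1, Finset.sum_add_distrib, Finset.sum_const, smul_eq_mul, mul_one,
      SimpleGraph.dist_self, A4]
  have hrowv₂' : ∑ b : V, G'.dist v₂ b = ∑ b ∈ T, G.dist b w₂ + T.card + 4 := by
    rw [split (fun b => G'.dist v₂ b)]
    have e1 : ∑ b ∈ T, G'.dist v₂ b = ∑ b ∈ T, (G.dist b w₂ + 1) :=
      Finset.sum_congr rfl (fun b hb => by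
        have e : G'.dist v₂ b = G'.dist b v₂ := SimpleGraph.dist_comm
        rw [e, A3 b (memT b hb).1 (memT b hb).2])
    have e2 : G'.dist v₂ v₁ = 4 := by
      have : G'.dist v₂ v₁ = G'.dist v₁ v₂ := SimpleGraph.dist_comm
      omega
    rw [e1, Finset.sum_add_distrib, Finset.sum_const, smul_eq_mul, mul_one,
      SimpleGraph.dist_self, e2]
  -- rows of G
  have hrow : ∀ a ∈ T, ∑ b : V, G.dist a b
      = ∑ b ∈ T, G.dist a b + (2 * G.dist a u + 2) := by
    intro a ha
    obtain ⟨ha1, ha2⟩ := memT a ha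
    rw [split (fun b => G.dist a b), A5 a ha1, A5' a ha2]
    ring
  have hrowv₁ : ∑ b : V, G.dist v₁ b = ∑ b ∈ T, G.dist b u + T.card + 2 := by
    rw [split (fun b => G.dist v₁ b)]
    have e1 : ∑ b ∈ T, G.dist v₁ b = ∑ b ∈ T, (G.dist b u + 1) :=
      Finset.sum_congr rfl (fun b hb => by
        have e : G.dist v₁ b = G.dist b v₁ := SimpleGraph.dist_comm
        rw [e, A5 b (memT b hb).1])
    rw [e1, Finset.sum_add_distrib, Finset.sum_const, smul_eq_mul, mul_one,
      SimpleGraph.dist_self, A6]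
  have hrowv₂ : ∑ b : V, G.dist v₂ b = ∑ b ∈ T, G.dist b u + T.card + 2 := by
    rw [split (fun b => G.dist v₂ b)]
    have e1 : ∑ b ∈ T, G.dist v₂ b = ∑ b ∈ T, (G.dist b u + 1) :=
      Finset.sum_congr rfl (fun b hb => by
        have e : G.dist v₂ b = G.dist b v₂ := SimpleGraph.dist_comm
        rw [e, A5' b (memT b hb).2])
    have e2 : G.dist v₂ v₁ = 2 := by
      have : G.dist v₂ v₁ = G.dist v₁ v₂ := SimpleGraph.dist_comm
      omega
    rw [e1, Finset.sum_add_distrib, Finset.sum_const, smul_eq_mul, mul_one,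
      SimpleGraph.dist_self, e2]
  -- the key summed identity
  have hB : ∑ a ∈ T, (G.dist a w₁ + G.dist a w₂) = ∑ a ∈ T, 2 * G.dist a u + 2 := by
    rw [← Finset.sum_erase_add T _ huT, ← Finset.sum_erase_add T (fun a => 2 * G.dist a u) huT]
    have e1 : ∑ a ∈ T.erase u, (G.dist a w₁ + G.dist a w₂)
        = ∑ a ∈ T.erase u, 2 * G.dist a u :=
      Finset.sum_congr rfl (fun a ha => by
        obtain ⟨hau, haT⟩ := Finset.mem_erase.mp ha
        exact hKey a hau (memT a haT).1 (memT a haT).2)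
    rw [e1, hu1, hu2, SimpleGraph.dist_self]
  -- put everything together
  have hS' : ∑ a : V, ∑ b : V, G'.dist a b
      = (∑ a ∈ T, ∑ b ∈ T, G.dist a b)
        + (∑ a ∈ T, (G.dist a w₁ + G.dist a w₂)) + 2 * T.card
        + (∑ b ∈ T, G.dist b w₁ + T.card + 4) + (∑ b ∈ T, G.dist b w₂ + T.card + 4) := by
    rw [split (fun a => ∑ b : V, G'.dist a b), hrowv₁', hrowv₂',
      Finset.sum_congr rfl hrow', Finset.sum_add_distrib]
    have e : ∑ a ∈ T, (G.dist a w₁ + G.dist a w₂ + 2)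
        = ∑ a ∈ T, (G.dist a w₁ + G.dist a w₂) + 2 * T.card := by
      rw [Finset.sum_add_distrib, Finset.sum_const, smul_eq_mul]
      ring
    rw [e]
    ring
  have hS : ∑ a : V, ∑ b : V, G.dist a b
      = (∑ a ∈ T, ∑ b ∈ T, G.dist a b)
        + 2 * (∑ a ∈ T, G.dist a u) + 2 * T.card
        + (∑ b ∈ T, G.dist b u + T.card + 2) + (∑ b ∈ T, G.dist b u + T.card + 2) := by
    rw [split (fun a => ∑ b : V, G.dist a b), hrowv₁, hrowv₂,
      Finset.sum_congr rfl hrow, Finset.sum_add_distrib]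
    have e : ∑ a ∈ T, (2 * G.dist a u + 2)
        = 2 * (∑ a ∈ T, G.dist a u) + 2 * T.card := by
      rw [Finset.sum_add_distrib, Finset.sum_const, smul_eq_mul, ← Finset.mul_sum]
      ring
    rw [e]
    ring
  have hBsplit : ∑ a ∈ T, (G.dist a w₁ + G.dist a w₂)
      = ∑ b ∈ T, G.dist b w₁ + ∑ b ∈ T, G.dist b w₂ := Finset.sum_add_distrib
  have hB2 : ∑ a ∈ T, 2 * G.dist a u = 2 * ∑ a ∈ T, G.dist a u := by
    rw [Finset.mul_sum]
  have hfinal : ∑ a : V, ∑ b : V, G'.dist a b = ∑ a : V, ∑ b : V, G.dist a b + 2 * 4 := by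
    omega
  rw [wiener, wiener, hfinal, Nat.add_mul_div_left _ _ (by norm_num : (0:ℕ) < 2)]
end

section
/- For even n ≥ 18, integers d with 4 ≤ d ≤ ⌊n/4⌋, and integer x with 1 ≤ x ≤ (n−4d+2)/2, the Wiener index of the caterpillar B₂(n,d,x) equals (d/2 + 1)n² + (−2d − 2)n − 8d³/3 + 32d/3 − 5 + 8x − 8dx − 2x². -/
namespace CatProof

open Finset SimpleGraph

lemma mem_catVerts {d : ℤ} {L : ℤ → ℕ} {a : ℤ × ℤ} :
    a ∈ catVerts d L ↔ -d ≤ a.2 ∧ a.2 ≤ d ∧ 0 ≤ a.1 ∧ a.1 ≤ (L a.2 : ℤ) := by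
  unfold catVerts
  simp only [Finset.mem_biUnion, Finset.mem_image, Finset.mem_Icc]
  constructor
  · rintro ⟨i, ⟨h1, h2⟩, j, ⟨h3, h4⟩, rfl⟩
    exact ⟨h1, h2, h3, h4⟩
  · rintro ⟨h1, h2, h3, h4⟩
    exact ⟨a.2, ⟨h1, h2⟩, a.1, ⟨h3, h4⟩, rfl⟩

/-- candidate distance function -/
def D (a b : ℤ × ℤ) : ℕ :=
  (a.2 - b.2).natAbs + (if a.1 = 0 then 0 else 1) + (if b.1 = 0 then 0 else 1)

variable {d : ℤ} {L : ℤ → ℕ}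

lemma adj_iff {u v : ↥(catVerts d L)} :
    (caterpillar d L).Adj u v ↔ u.val ≠ v.val ∧
      ((u.val.1 = 0 ∧ v.val.1 = 0 ∧ u.val.2 + 1 = v.val.2) ∨
       (u.val.2 = v.val.2 ∧ u.val.1 = 0 ∧ v.val.1 ≠ 0) ∨
       (v.val.1 = 0 ∧ u.val.1 = 0 ∧ v.val.2 + 1 = u.val.2) ∨
       (v.val.2 = u.val.2 ∧ v.val.1 = 0 ∧ u.val.1 ≠ 0)) := by
  unfold caterpillar
  rw [SimpleGraph.fromRel_adj]
  rw [ne_eq, Subtype.ext_iff]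
  tauto

lemma D_adj {u v : ↥(catVerts d L)} (h : (caterpillar d L).Adj u v) :
    D u.val v.val = 1 := by
  rw [adj_iff] at h
  obtain ⟨hne, h⟩ := h
  have hne' : u.val.1 ≠ v.val.1 ∨ u.val.2 ≠ v.val.2 := by
    by_contra hc
    push_neg at hc
    exact hne (Prod.ext hc.1 hc.2)
  unfold D
  rcases h with ⟨h1,h2,h3⟩|⟨h1,h2,h3⟩|⟨h1,h2,h3⟩|⟨h1,h2,h3⟩ <;> split_ifs <;> omega

lemma D_step {u c : ↥(catVerts d L)} (b : ℤ × ℤ)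
    (h : (caterpillar d L).Adj u c) :
    D u.val b ≤ 1 + D c.val b := by
  rw [adj_iff] at h
  obtain ⟨-, h⟩ := h
  unfold D
  rcases h with ⟨h1,h2,h3⟩|⟨h1,h2,h3⟩|⟨h1,h2,h3⟩|⟨h1,h2,h3⟩ <;> split_ifs <;> omega

lemma length_lower {u v : ↥(catVerts d L)} (w : (caterpillar d L).Walk u v) :
    u ≠ v → D u.val v.val ≤ w.length := by
  induction w with
  | nil => intro h; exact absurd rfl h
  | @cons a b c h p ih =>
    intro _
    by_cases hbc : b = c
    · subst hbc
      rw [D_adj h]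
      simp [SimpleGraph.Walk.length_cons]
    · calc D a.val c.val ≤ 1 + D b.val c.val := D_step c.val h
        _ ≤ 1 + p.length := Nat.add_le_add_left (ih hbc) 1
        _ = (SimpleGraph.Walk.cons h p).length := by
            rw [SimpleGraph.Walk.length_cons]; omega

/-- spine vertex -/
def sv (d : ℤ) (L : ℤ → ℕ) (i : ℤ) (h1 : -d ≤ i) (h2 : i ≤ d) : ↥(catVerts d L) :=
  ⟨(0, i), mem_catVerts.mpr ⟨h1, h2, le_refl 0, Int.natCast_nonneg _⟩⟩

lemma adj_spine (i : ℤ) (h1 : -d ≤ i) (h2 : i + 1 ≤ d) :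
    (caterpillar d L).Adj (sv d L i h1 (by omega)) (sv d L (i+1) (by omega) h2) := by
  rw [adj_iff]
  refine ⟨?_, Or.inl ⟨rfl, rfl, rfl⟩⟩
  simp only [sv, ne_eq, Prod.mk.injEq]
  rintro ⟨-, h⟩
  omega

lemma adj_leaf {a : ℤ × ℤ} (ha : a ∈ catVerts d L) (h0 : a.1 ≠ 0) :
    (caterpillar d L).Adj
      (sv d L a.2 (mem_catVerts.mp ha).1 (mem_catVerts.mp ha).2.1) ⟨a, ha⟩ := by
  rw [adj_iff]
  refine ⟨?_, Or.inr (Or.inl ⟨rfl, rfl, h0⟩)⟩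
  simp only [sv, ne_eq]
  intro h
  apply h0
  rw [← h]

lemma exists_walk_spine (k : ℕ) :
    ∀ (i i' : ℤ) (h1 : -d ≤ i) (h1' : i ≤ d) (h2 : -d ≤ i') (h2' : i' ≤ d),
    i' = i + k →
    ∃ w : (caterpillar d L).Walk (sv d L i h1 h1') (sv d L i' h2 h2'), w.length = k := by
  induction k with
  | zero =>
    intro i i' h1 h1' h2 h2' hk
    obtain rfl : i' = i := by omega
    exact ⟨SimpleGraph.Walk.nil, rfl⟩
  | succ p ih =>
    intro i i' h1 h1' h2 h2' hk
    obtain rfl : i' = i + (p:ℤ) + 1 := by push_cast at hk; omega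
    obtain ⟨w, hw⟩ := ih i (i + (p:ℤ)) h1 h1' (by omega) (by omega) rfl
    refine ⟨w.concat (adj_spine (i + (p:ℤ)) (by omega) h2'), ?_⟩
    rw [SimpleGraph.Walk.length_concat, hw]

lemma dist_spine_le (i i' : ℤ) (h1 : -d ≤ i) (h1' : i ≤ d) (h2 : -d ≤ i') (h2' : i' ≤ d) :
    (caterpillar d L).dist (sv d L i h1 h1') (sv d L i' h2 h2') ≤ (i - i').natAbs := by
  rcases le_total i i' with hle | hle
  · obtain ⟨w, hw⟩ := exists_walk_spine ((i' - i).toNat) i i' h1 h1' h2 h2' (by omega)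
    calc (caterpillar d L).dist _ _ ≤ w.length := SimpleGraph.dist_le w
      _ = (i - i').natAbs := by omega
  · obtain ⟨w, hw⟩ := exists_walk_spine ((i - i').toNat) i' i h2 h2' h1 h1' (by omega)
    rw [SimpleGraph.dist_comm]
    calc (caterpillar d L).dist _ _ ≤ w.length := SimpleGraph.dist_le w
      _ = (i - i').natAbs := by omega

lemma dist_to_spine (u : ↥(catVerts d L)) :
    (caterpillar d L).dist u
      (sv d L u.val.2 (mem_catVerts.mp u.2).1 (mem_catVerts.mp u.2).2.1)
      ≤ (if u.val.1 = 0 then 0 else 1) := by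
  by_cases h0 : u.val.1 = 0
  · rw [if_pos h0]
    have : u = sv d L u.val.2 (mem_catVerts.mp u.2).1 (mem_catVerts.mp u.2).2.1 := by
      apply Subtype.ext
      exact Prod.ext h0 rfl
    rw [← this, SimpleGraph.dist_self]
  · rw [if_neg h0]
    rw [SimpleGraph.dist_comm]
    exact le_of_eq (SimpleGraph.dist_eq_one_iff_adj.mpr (adj_leaf u.2 h0))

lemma reachable_all (u v : ↥(catVerts d L)) : (caterpillar d L).Reachable u v := by
  have ru : (caterpillar d L).Reachable u
      (sv d L u.val.2 (mem_catVerts.mp u.2).1 (mem_catVerts.mp u.2).2.1) := by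
    by_cases h0 : u.val.1 = 0
    · have : u = sv d L u.val.2 (mem_catVerts.mp u.2).1 (mem_catVerts.mp u.2).2.1 :=
        Subtype.ext (Prod.ext h0 rfl)
      rw [← this]
    · exact ((adj_leaf u.2 h0).reachable).symm
  have rv : (caterpillar d L).Reachable v
      (sv d L v.val.2 (mem_catVerts.mp v.2).1 (mem_catVerts.mp v.2).2.1) := by
    by_cases h0 : v.val.1 = 0
    · have : v = sv d L v.val.2 (mem_catVerts.mp v.2).1 (mem_catVerts.mp v.2).2.1 :=
        Subtype.ext (Prod.ext h0 rfl)
      rw [← this]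
    · exact ((adj_leaf v.2 h0).reachable).symm
  have rs : (caterpillar d L).Reachable
      (sv d L u.val.2 (mem_catVerts.mp u.2).1 (mem_catVerts.mp u.2).2.1)
      (sv d L v.val.2 (mem_catVerts.mp v.2).1 (mem_catVerts.mp v.2).2.1) := by
    rcases le_total u.val.2 v.val.2 with hle | hle
    · obtain ⟨w, -⟩ := exists_walk_spine (L := L) ((v.val.2 - u.val.2).toNat) u.val.2 v.val.2
        (mem_catVerts.mp u.2).1 (mem_catVerts.mp u.2).2.1
        (mem_catVerts.mp v.2).1 (mem_catVerts.mp v.2).2.1 (by omega)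
      exact ⟨w⟩
    · obtain ⟨w, -⟩ := exists_walk_spine (L := L) ((u.val.2 - v.val.2).toNat) v.val.2 u.val.2
        (mem_catVerts.mp v.2).1 (mem_catVerts.mp v.2).2.1
        (mem_catVerts.mp u.2).1 (mem_catVerts.mp u.2).2.1 (by omega)
      exact SimpleGraph.Reachable.symm ⟨w⟩
  exact (ru.trans rs).trans rv.symm

lemma connected (hd : 0 ≤ d) : (caterpillar d L).Connected := by
  rw [SimpleGraph.connected_iff]
  exact ⟨reachable_all, ⟨sv d L 0 (by omega) (by omega)⟩⟩

lemma dist_le_D (hd : 0 ≤ d) (u v : ↥(catVerts d L)) :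
    (caterpillar d L).dist u v ≤ D u.val v.val := by
  have hc := connected (L := L) hd
  calc (caterpillar d L).dist u v
      ≤ (caterpillar d L).dist u
          (sv d L u.val.2 (mem_catVerts.mp u.2).1 (mem_catVerts.mp u.2).2.1)
        + (caterpillar d L).dist
          (sv d L u.val.2 (mem_catVerts.mp u.2).1 (mem_catVerts.mp u.2).2.1) v := by
        exact hc.dist_triangle
    _ ≤ (caterpillar d L).dist u
          (sv d L u.val.2 (mem_catVerts.mp u.2).1 (mem_catVerts.mp u.2).2.1)
        + ((caterpillar d L).dist
            (sv d L u.val.2 (mem_catVerts.mp u.2).1 (mem_catVerts.mp u.2).2.1)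
            (sv d L v.val.2 (mem_catVerts.mp v.2).1 (mem_catVerts.mp v.2).2.1)
          + (caterpillar d L).dist
            (sv d L v.val.2 (mem_catVerts.mp v.2).1 (mem_catVerts.mp v.2).2.1) v) := by
        exact Nat.add_le_add_left hc.dist_triangle _
    _ ≤ (if u.val.1 = 0 then 0 else 1) + ((u.val.2 - v.val.2).natAbs
          + (if v.val.1 = 0 then 0 else 1)) := by
        apply Nat.add_le_add (dist_to_spine u)
        apply Nat.add_le_add (dist_spine_le _ _ _ _ _ _)
        rw [SimpleGraph.dist_comm]
        exact dist_to_spine v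
    _ = D u.val v.val := by unfold D; omega

theorem dist_eq (hd : 0 ≤ d) (u v : ↥(catVerts d L)) :
    (caterpillar d L).dist u v = if u.val = v.val then 0 else D u.val v.val := by
  split_ifs with h
  · have : u = v := Subtype.ext h
    subst this
    exact SimpleGraph.dist_self
  · refine le_antisymm (dist_le_D hd u v) ?_
    obtain ⟨p, hp⟩ := (reachable_all u v).exists_walk_length_eq_dist
    rw [← hp]
    exact length_lower p (fun he => h (congrArg Subtype.val he))


section Sums

lemma sum_catVerts {M : Type*} [AddCommMonoid M] (d : ℤ) (L : ℤ → ℕ) (F : ℤ × ℤ → M) :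
    ∑ a ∈ catVerts d L, F a
      = ∑ i ∈ Finset.Icc (-d) d, ∑ j ∈ Finset.Icc (0:ℤ) (L i : ℤ), F (j, i) := by
  unfold catVerts
  rw [Finset.sum_biUnion]
  · refine Finset.sum_congr rfl fun i _ => ?_
    rw [Finset.sum_image]
    intro j1 _ j2 _ h
    exact congrArg Prod.fst h
  · intro i _ i' _ hne
    simp only [Function.onFun]
    rw [Finset.disjoint_left]
    rintro p hp hp'
    simp only [Finset.mem_image] at hp hp'
    obtain ⟨j, -, rfl⟩ := hp
    obtain ⟨j', -, h⟩ := hp'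
    exact hne ((congrArg Prod.snd h).symm)

lemma card_Icc0 (A : ℕ) : (Finset.Icc (0:ℤ) (A:ℤ)).card = A + 1 := by
  rw [Int.card_Icc]; omega

lemma sum_Icc_chi (A : ℕ) :
    ∑ j ∈ Finset.Icc (0:ℤ) (A:ℤ), (if j = 0 then (0:ℤ) else 1) = A := by
  have h : Finset.Icc (0:ℤ) (A:ℤ) = insert 0 (Finset.Icc 1 (A:ℤ)) := by
    ext i; simp only [Finset.mem_insert, Finset.mem_Icc]; omega
  rw [h, Finset.sum_insert (by simp), if_pos rfl,
    Finset.sum_congr rfl (fun j hj => if_neg (by simp only [Finset.mem_Icc] at hj; omega)),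
    Finset.sum_const, nsmul_eq_mul, Int.card_Icc, mul_one]
  omega

lemma sum_Icc_id_zero (m : ℤ) : ∑ i ∈ Finset.Icc (-m) m, i = 0 := by
  have h : ∑ i ∈ Finset.Icc (-m) m, i = ∑ i ∈ Finset.Icc (-m) m, (-i) := by
    apply Finset.sum_nbij' (i := fun i => -i) (j := fun i => -i) <;>
      intros <;> simp_all [Finset.mem_Icc] <;> omega
  have h2 : ∑ i ∈ Finset.Icc (-m) m, (-i) = -∑ i ∈ Finset.Icc (-m) m, i :=
    Finset.sum_neg_distrib (fun i => i)
  omega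

lemma sum_abs_hi (m c : ℤ) (hm : 0 ≤ m) (hc : m < c) :
    ∑ i ∈ Finset.Icc (-m) m, |i - c| = (2*m+1)*c := by
  rw [Finset.sum_congr rfl (fun i hi => show |i - c| = c - i by
    rw [abs_of_nonpos (by simp only [Finset.mem_Icc] at hi; omega)]; ring)]
  rw [Finset.sum_sub_distrib, sum_Icc_id_zero, Finset.sum_const, nsmul_eq_mul, Int.card_Icc]
  have h : ((m + 1 - -m).toNat : ℤ) = 2*m+1 := by omega
  rw [h]; ring

lemma sum_abs_lo (m c : ℤ) (hm : 0 ≤ m) (hc : c < -m) :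
    ∑ i ∈ Finset.Icc (-m) m, |i - c| = (2*m+1)*(-c) := by
  rw [Finset.sum_congr rfl (fun i hi => show |i - c| = i - c by
    rw [abs_of_nonneg (by simp only [Finset.mem_Icc] at hi; omega)])]
  rw [Finset.sum_sub_distrib, sum_Icc_id_zero, Finset.sum_const, nsmul_eq_mul, Int.card_Icc]
  have h : ((m + 1 - -m).toNat : ℤ) = 2*m+1 := by omega
  rw [h]; ring

lemma double_insert {a : ℤ} {s : Finset ℤ} (ha : a ∉ s) (g : ℤ → ℤ → ℤ) :
    ∑ i ∈ insert a s, ∑ i' ∈ insert a s, g i i'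
      = g a a + ∑ i' ∈ s, g a i' + ∑ i ∈ s, g i a + ∑ i ∈ s, ∑ i' ∈ s, g i i' := by
  rw [Finset.sum_insert ha, Finset.sum_insert ha,
    Finset.sum_congr rfl (fun i _ => Finset.sum_insert ha (f := fun i' => g i i')),
    Finset.sum_add_distrib]
  ring

lemma sum_abs_sq (m : ℕ) :
    3 * ∑ i ∈ Finset.Icc (-(m:ℤ)) (m:ℤ), ∑ i' ∈ Finset.Icc (-(m:ℤ)) (m:ℤ), |i - i'|
      = 2*(m:ℤ)*(2*(m:ℤ)+1)*(2*(m:ℤ)+2) := by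
  induction m with
  | zero => simp
  | succ p ih =>
    have h1 : Finset.Icc (-((p+1:ℕ)):ℤ) ((p+1:ℕ):ℤ)
        = insert (-(p:ℤ)-1) (insert ((p:ℤ)+1) (Finset.Icc (-(p:ℤ)) (p:ℤ))) := by
      ext i
      simp only [Finset.mem_insert, Finset.mem_Icc]
      push_cast
      omega
    have hn1 : (-(p:ℤ)-1) ∉ insert ((p:ℤ)+1) (Finset.Icc (-(p:ℤ)) (p:ℤ)) := by
      simp only [Finset.mem_insert, Finset.mem_Icc]
      push_cast; omega
    have hn2 : ((p:ℤ)+1) ∉ Finset.Icc (-(p:ℤ)) (p:ℤ) := by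
      simp only [Finset.mem_Icc]; omega
    rw [h1, double_insert hn1, double_insert hn2]
    simp only [Finset.sum_insert hn2]
    rw [sum_abs_hi (p:ℤ) ((p:ℤ)+1) (by positivity) (by omega),
      sum_abs_lo (p:ℤ) (-(p:ℤ)-1) (by positivity) (by omega)]
    have e0 : |(-(p:ℤ)-1) - (-(p:ℤ)-1)| = 0 := by simp
    have e1 : |((p:ℤ)+1) - ((p:ℤ)+1)| = 0 := by simp
    have e2 : |(-(p:ℤ)-1) - ((p:ℤ)+1)| = 2*(p:ℤ)+2 := by
      rw [abs_of_nonpos (by omega)]; ring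
    have e3 : |((p:ℤ)+1) - (-(p:ℤ)-1)| = 2*(p:ℤ)+2 := by
      rw [abs_of_nonneg (by omega)]; ring
    have e4 : ∀ i ∈ Finset.Icc (-(p:ℤ)) (p:ℤ), |i - (-(p:ℤ)-1)| = |i - (-(p:ℤ)-1)| := fun _ _ => rfl
    have h5 : ∑ i ∈ Finset.Icc (-(p:ℤ)) (p:ℤ), |(-(p:ℤ)-1) - i|
        = (2*(p:ℤ)+1)*((p:ℤ)+1) := by
      rw [Finset.sum_congr rfl (fun i _ => abs_sub_comm (-(p:ℤ)-1) i),
        sum_abs_lo (p:ℤ) (-(p:ℤ)-1) (by positivity) (by omega)]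
      ring
    have h6 : ∑ i ∈ Finset.Icc (-(p:ℤ)) (p:ℤ), |((p:ℤ)+1) - i|
        = (2*(p:ℤ)+1)*((p:ℤ)+1) := by
      rw [Finset.sum_congr rfl (fun i _ => abs_sub_comm ((p:ℤ)+1) i),
        sum_abs_hi (p:ℤ) ((p:ℤ)+1) (by positivity) (by omega)]
    rw [e0, e1, e2, e3, h5, h6]
    push_cast
    linear_combination ih

lemma hDZ (a b : ℤ × ℤ) : ((D a b : ℕ) : ℤ)
    = |a.2 - b.2| + (if a.1 = 0 then (0:ℤ) else 1) + (if b.1 = 0 then (0:ℤ) else 1) := by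
  unfold D
  push_cast [Int.natCast_natAbs, apply_ite (Nat.cast : ℕ → ℤ)]
  ring

lemma hJJ (c : ℤ) (A B : ℕ) :
    ∑ j ∈ Finset.Icc (0:ℤ) (A:ℤ), ∑ j' ∈ Finset.Icc (0:ℤ) (B:ℤ),
      (c + (if j = 0 then (0:ℤ) else 1) + (if j' = 0 then (0:ℤ) else 1))
    = ((A:ℤ)+1) * ((B:ℤ)+1) * c + (A:ℤ) * ((B:ℤ)+1) + ((A:ℤ)+1) * (B:ℤ) := by
  have hinner : ∀ j : ℤ, ∑ j' ∈ Finset.Icc (0:ℤ) (B:ℤ),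
      (c + (if j = 0 then (0:ℤ) else 1) + (if j' = 0 then (0:ℤ) else 1))
      = ((B:ℤ)+1) * (c + (if j = 0 then (0:ℤ) else 1)) + (B:ℤ) := by
    intro j
    rw [Finset.sum_add_distrib, Finset.sum_const, sum_Icc_chi, nsmul_eq_mul, card_Icc0]
    push_cast; ring
  rw [Finset.sum_congr rfl fun j _ => hinner j, Finset.sum_add_distrib,
    Finset.sum_const, nsmul_eq_mul, card_Icc0, ← Finset.mul_sum,
    Finset.sum_add_distrib, Finset.sum_const, sum_Icc_chi, nsmul_eq_mul, card_Icc0]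
  push_cast; ring

lemma sum_dist_eq (d : ℤ) (L : ℤ → ℕ) (hd : 0 ≤ d) :
    ((∑ u : ↥(catVerts d L), ∑ v : ↥(catVerts d L), (caterpillar d L).dist u v : ℕ) : ℤ)
      = (∑ i ∈ Finset.Icc (-d) d, ∑ i' ∈ Finset.Icc (-d) d,
          ((L i : ℤ) + 1) * ((L i' : ℤ) + 1) * |i - i'|)
        + 2 * (∑ i ∈ Finset.Icc (-d) d, (L i : ℤ))
            * (∑ i ∈ Finset.Icc (-d) d, ((L i : ℤ) + 1))
        - 2 * ∑ i ∈ Finset.Icc (-d) d, (L i : ℤ) := by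
  classical
  have h1 : (∑ u : ↥(catVerts d L), ∑ v : ↥(catVerts d L), (caterpillar d L).dist u v)
      = ∑ a ∈ catVerts d L, ∑ b ∈ catVerts d L, (if a = b then 0 else D a b) := by
    calc ∑ u : ↥(catVerts d L), ∑ v : ↥(catVerts d L), (caterpillar d L).dist u v
        = ∑ u : ↥(catVerts d L), ∑ v : ↥(catVerts d L),
            (if u.val = v.val then 0 else D u.val v.val) :=
          Finset.sum_congr rfl fun u _ => Finset.sum_congr rfl fun v _ => dist_eq hd u v
      _ = ∑ u : ↥(catVerts d L), ∑ b ∈ catVerts d L, (if u.val = b then 0 else D u.val b) :=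
          Finset.sum_congr rfl fun u _ =>
            Finset.sum_coe_sort (catVerts d L) (fun b => if u.val = b then 0 else D u.val b)
      _ = ∑ a ∈ catVerts d L, ∑ b ∈ catVerts d L, (if a = b then 0 else D a b) :=
          Finset.sum_coe_sort (catVerts d L)
            (fun a => ∑ b ∈ catVerts d L, (if a = b then 0 else D a b))
  have h2 : (∑ a ∈ catVerts d L, ∑ b ∈ catVerts d L, (if a = b then 0 else D a b))
        + (∑ a ∈ catVerts d L, D a a)
      = ∑ a ∈ catVerts d L, ∑ b ∈ catVerts d L, D a b := by
    rw [← Finset.sum_add_distrib]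
    refine Finset.sum_congr rfl fun a ha => ?_
    have hsplit : ∀ b : ℤ × ℤ,
        D a b = (if a = b then 0 else D a b) + (if a = b then D a b else 0) := by
      intro b; split_ifs <;> simp
    rw [Finset.sum_congr rfl fun b _ => hsplit b, Finset.sum_add_distrib,
      Finset.sum_ite_eq (catVerts d L) a (fun b => D a b), if_pos ha]
  have h3 : (∑ a ∈ catVerts d L, ∑ b ∈ catVerts d L, ((D a b : ℕ) : ℤ))
      = (∑ i ∈ Finset.Icc (-d) d, ∑ i' ∈ Finset.Icc (-d) d,
          ((L i : ℤ) + 1) * ((L i' : ℤ) + 1) * |i - i'|)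
        + 2 * (∑ i ∈ Finset.Icc (-d) d, (L i : ℤ))
            * (∑ i ∈ Finset.Icc (-d) d, ((L i : ℤ) + 1)) := by
    rw [sum_catVerts d L (fun a => ∑ b ∈ catVerts d L, ((D a b : ℕ) : ℤ))]
    calc ∑ i ∈ Finset.Icc (-d) d, ∑ j ∈ Finset.Icc (0:ℤ) (L i : ℤ),
            ∑ b ∈ catVerts d L, ((D (j, i) b : ℕ) : ℤ)
        = ∑ i ∈ Finset.Icc (-d) d, ∑ j ∈ Finset.Icc (0:ℤ) (L i : ℤ),
            ∑ i' ∈ Finset.Icc (-d) d, ∑ j' ∈ Finset.Icc (0:ℤ) (L i' : ℤ),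
              ((D (j, i) (j', i') : ℕ) : ℤ) := by
          refine Finset.sum_congr rfl fun i _ => Finset.sum_congr rfl fun j _ => ?_
          exact sum_catVerts d L (fun b => ((D (j, i) b : ℕ) : ℤ))
      _ = ∑ i ∈ Finset.Icc (-d) d, ∑ i' ∈ Finset.Icc (-d) d,
            ∑ j ∈ Finset.Icc (0:ℤ) (L i : ℤ), ∑ j' ∈ Finset.Icc (0:ℤ) (L i' : ℤ),
              ((D (j, i) (j', i') : ℕ) : ℤ) := by
          exact Finset.sum_congr rfl fun i _ => Finset.sum_comm
      _ = ∑ i ∈ Finset.Icc (-d) d, ∑ i' ∈ Finset.Icc (-d) d,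
            (((L i : ℤ)+1) * ((L i' : ℤ)+1) * |i - i'| + (L i : ℤ) * ((L i' : ℤ)+1)
              + ((L i : ℤ)+1) * (L i' : ℤ)) := by
          refine Finset.sum_congr rfl fun i _ => Finset.sum_congr rfl fun i' _ => ?_
          rw [Finset.sum_congr rfl fun j _ => Finset.sum_congr rfl fun j' _ => hDZ (j,i) (j',i')]
          exact hJJ |i - i'| (L i) (L i')
      _ = _ := by
          rw [Finset.sum_congr rfl fun i (_ : i ∈ Finset.Icc (-d) d) => by
            rw [Finset.sum_add_distrib, Finset.sum_add_distrib]]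
          rw [Finset.sum_add_distrib, Finset.sum_add_distrib,
            ← Finset.sum_mul_sum, ← Finset.sum_mul_sum]
          ring
  have h4 : (∑ a ∈ catVerts d L, ((D a a : ℕ) : ℤ))
      = 2 * ∑ i ∈ Finset.Icc (-d) d, (L i : ℤ) := by
    rw [sum_catVerts d L (fun a => ((D a a : ℕ) : ℤ)), Finset.mul_sum]
    refine Finset.sum_congr rfl fun i _ => ?_
    have hj : ∀ j : ℤ, ((D (j,i) (j,i) : ℕ) : ℤ)
        = (if j = 0 then (0:ℤ) else 1) + (if j = 0 then (0:ℤ) else 1) := by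
      intro j; rw [hDZ (j,i) (j,i)]; simp
    rw [Finset.sum_congr rfl fun j _ => hj j, Finset.sum_add_distrib, sum_Icc_chi]
    ring
  have h2' := congrArg (Nat.cast : ℕ → ℤ) h2
  push_cast at h2'
  rw [h1]
  push_cast
  linarith [h2', h3, h4]
end Sums
end CatProof

open CatProof

/-- the Wiener index of the caterpillar `B₂(n,d,x)` for even `n ≥ 18`,
`4 ≤ d ≤ ⌊n/4⌋` and `1 ≤ x ≤ (n−4d+2)/2`. -/
theorem wiener_B2 (n d x : ℤ) (hne : Even n) (hn : 18 ≤ n)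
    (hd1 : 4 ≤ d) (hd2 : 4 * d ≤ n)
    (hx1 : 1 ≤ x) (hx2 : 2 * x ≤ n - 4 * d + 2) :
    (wiener (B2 n d x) : ℚ)
      = ((d:ℚ) / 2 + 1) * (n : ℚ)^2 + (-(2 * (d:ℚ)) - 2) * (n : ℚ)
        - 8 * (d:ℚ)^3 / 3 + 32 * (d:ℚ) / 3 - 5 + 8 * (x:ℚ) - 8 * (d:ℚ) * (x:ℚ)
        - 2 * (x:ℚ)^2 := by
  classical
  obtain ⟨t, ht⟩ := hne
  have hd0 : (0:ℤ) ≤ d := by omega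
  set R : ℤ := (n - 4*d - 2*x + 2)/2 with hRdef
  have h2R : 2*R = n - 4*d - 2*x + 2 := by omega
  have hR0 : 0 ≤ R := by omega
  -- weight values
  have hwM : ∀ i ∈ Finset.Icc (-(d-2)) (d-2), ((B2L n d x i : ℤ) + 1) = 2 := by
    intro i hi
    simp only [Finset.mem_Icc] at hi
    simp only [B2L]
    push_cast
    rcases abs_cases i with ⟨h,_⟩|⟨h,_⟩ <;> rw [h] <;> split_ifs <;> omega
  have hwd : ((B2L n d x d : ℤ) + 1) = R + 1 := by
    simp only [B2L]; push_cast
    rcases abs_cases d with ⟨h,_⟩|⟨h,_⟩ <;> rw [h] <;> split_ifs <;> omega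
  have hwnd : ((B2L n d x (-d) : ℤ) + 1) = R + 1 := by
    simp only [B2L]; push_cast
    rcases abs_cases (-d) with ⟨h,_⟩|⟨h,_⟩ <;> rw [h] <;> split_ifs <;> omega
  have hwd1 : ((B2L n d x (d-1) : ℤ) + 1) = x + 1 := by
    simp only [B2L]; push_cast
    rcases abs_cases (d-1) with ⟨h,_⟩|⟨h,_⟩ <;> rw [h] <;> split_ifs <;> omega
  have hwnd1 : ((B2L n d x (-(d-1)) : ℤ) + 1) = x + 1 := by
    simp only [B2L]; push_cast
    rcases abs_cases (-(d-1)) with ⟨h,_⟩|⟨h,_⟩ <;> rw [h] <;> split_ifs <;> omega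
  -- decomposition of the spine interval
  have hdecomp : Finset.Icc (-d) d
      = insert (-d) (insert d (insert (-(d-1)) (insert (d-1)
          (Finset.Icc (-(d-2)) (d-2))))) := by
    ext i; simp only [Finset.mem_insert, Finset.mem_Icc]; omega
  have hnm1 : (-d) ∉ insert d (insert (-(d-1)) (insert (d-1)
      (Finset.Icc (-(d-2)) (d-2)))) := by
    simp only [Finset.mem_insert, Finset.mem_Icc]; omega
  have hnm2 : d ∉ insert (-(d-1)) (insert (d-1) (Finset.Icc (-(d-2)) (d-2))) := by
    simp only [Finset.mem_insert, Finset.mem_Icc]; omega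
  have hnm3 : (-(d-1)) ∉ insert (d-1) (Finset.Icc (-(d-2)) (d-2)) := by
    simp only [Finset.mem_insert, Finset.mem_Icc]; omega
  have hnm4 : (d-1) ∉ Finset.Icc (-(d-2)) (d-2) := by
    simp only [Finset.mem_Icc]; omega
  -- sum of leaf counts
  have hSL : ∑ i ∈ Finset.Icc (-d) d, (B2L n d x i : ℤ) = n - 2*d - 1 := by
    rw [hdecomp, Finset.sum_insert hnm1, Finset.sum_insert hnm2, Finset.sum_insert hnm3,
      Finset.sum_insert hnm4,
      Finset.sum_congr rfl (fun i hi => show ((B2L n d x i : ℕ) : ℤ) = 1 by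
        have := hwM i hi; omega),
      Finset.sum_const, nsmul_eq_mul, Int.card_Icc, mul_one]
    have h1 := hwnd; have h2 := hwd; have h3 := hwnd1; have h4 := hwd1
    omega
  have hSL1 : ∑ i ∈ Finset.Icc (-d) d, ((B2L n d x i : ℤ) + 1) = n := by
    rw [Finset.sum_add_distrib, hSL, Finset.sum_const, nsmul_eq_mul, Int.card_Icc, mul_one]
    omega
  -- the double abs sum over the middle interval
  have hSM3 : 3 * (∑ i ∈ Finset.Icc (-(d-2)) (d-2), ∑ i' ∈ Finset.Icc (-(d-2)) (d-2), |i - i'|)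
      = (2*(d-2))*(2*(d-2)+1)*(2*(d-2)+2) := by
    obtain ⟨p, hp⟩ : ∃ p:ℕ, (p:ℤ) = d-2 := ⟨(d-2).toNat, by omega⟩
    rw [← hp]
    linear_combination sum_abs_sq p
  set SM : ℤ := ∑ i ∈ Finset.Icc (-(d-2)) (d-2), ∑ i' ∈ Finset.Icc (-(d-2)) (d-2), |i - i'|
    with hSMdef
  -- middle double sum
  have hMM : ∑ i ∈ Finset.Icc (-(d-2)) (d-2), ∑ i' ∈ Finset.Icc (-(d-2)) (d-2),
      ((B2L n d x i : ℤ)+1) * ((B2L n d x i' : ℤ)+1) * |i - i'| = 4*SM := by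
    have e : ∀ i ∈ Finset.Icc (-(d-2)) (d-2),
        (∑ i' ∈ Finset.Icc (-(d-2)) (d-2),
          ((B2L n d x i : ℤ)+1) * ((B2L n d x i' : ℤ)+1) * |i - i'|)
        = ∑ i' ∈ Finset.Icc (-(d-2)) (d-2), 4 * |i - i'| := fun i hi =>
      Finset.sum_congr rfl fun i' hi' => by rw [hwM i hi, hwM i' hi']; ring
    rw [Finset.sum_congr rfl e, hSMdef, Finset.mul_sum]
    refine Finset.sum_congr rfl fun i _ => ?_
    rw [Finset.mul_sum]
  -- the eight cross sums
  have hX1 : ∑ i' ∈ Finset.Icc (-(d-2)) (d-2),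
      ((B2L n d x (-d) : ℤ)+1) * ((B2L n d x i' : ℤ)+1) * |(-d) - i'|
      = 2*(R+1)*((2*d-3)*d) := by
    have e : ∀ i ∈ Finset.Icc (-(d-2)) (d-2),
        ((B2L n d x (-d) : ℤ)+1) * ((B2L n d x i : ℤ)+1) * |(-d) - i|
          = ((R+1) * 2) * |i - (-d)| := fun i hi => by
      rw [hwnd, hwM i hi, abs_sub_comm]
    rw [Finset.sum_congr rfl e, ← Finset.mul_sum,
      sum_abs_lo (d-2) (-d) (by omega) (by omega)]
    ring
  have hX2 : ∑ i ∈ Finset.Icc (-(d-2)) (d-2),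
      ((B2L n d x i : ℤ)+1) * ((B2L n d x (-d) : ℤ)+1) * |i - (-d)|
      = 2*(R+1)*((2*d-3)*d) := by
    have e : ∀ i ∈ Finset.Icc (-(d-2)) (d-2),
        ((B2L n d x i : ℤ)+1) * ((B2L n d x (-d) : ℤ)+1) * |i - (-d)|
          = (2 * (R+1)) * |i - (-d)| := fun i hi => by
      rw [hwnd, hwM i hi]
    rw [Finset.sum_congr rfl e, ← Finset.mul_sum,
      sum_abs_lo (d-2) (-d) (by omega) (by omega)]
    ring
  have hX3 : ∑ i' ∈ Finset.Icc (-(d-2)) (d-2),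
      ((B2L n d x d : ℤ)+1) * ((B2L n d x i' : ℤ)+1) * |d - i'|
      = 2*(R+1)*((2*d-3)*d) := by
    have e : ∀ i ∈ Finset.Icc (-(d-2)) (d-2),
        ((B2L n d x d : ℤ)+1) * ((B2L n d x i : ℤ)+1) * |d - i|
          = ((R+1) * 2) * |i - d| := fun i hi => by
      rw [hwd, hwM i hi, abs_sub_comm]
    rw [Finset.sum_congr rfl e, ← Finset.mul_sum,
      sum_abs_hi (d-2) d (by omega) (by omega)]
    ring
  have hX4 : ∑ i ∈ Finset.Icc (-(d-2)) (d-2),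
      ((B2L n d x i : ℤ)+1) * ((B2L n d x d : ℤ)+1) * |i - d|
      = 2*(R+1)*((2*d-3)*d) := by
    have e : ∀ i ∈ Finset.Icc (-(d-2)) (d-2),
        ((B2L n d x i : ℤ)+1) * ((B2L n d x d : ℤ)+1) * |i - d|
          = (2 * (R+1)) * |i - d| := fun i hi => by
      rw [hwd, hwM i hi]
    rw [Finset.sum_congr rfl e, ← Finset.mul_sum,
      sum_abs_hi (d-2) d (by omega) (by omega)]
    ring
  have hX5 : ∑ i' ∈ Finset.Icc (-(d-2)) (d-2),
      ((B2L n d x (-(d-1)) : ℤ)+1) * ((B2L n d x i' : ℤ)+1) * |(-(d-1)) - i'|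
      = 2*(x+1)*((2*d-3)*(d-1)) := by
    have e : ∀ i ∈ Finset.Icc (-(d-2)) (d-2),
        ((B2L n d x (-(d-1)) : ℤ)+1) * ((B2L n d x i : ℤ)+1) * |(-(d-1)) - i|
          = ((x+1) * 2) * |i - (-(d-1))| := fun i hi => by
      rw [hwnd1, hwM i hi, abs_sub_comm]
    rw [Finset.sum_congr rfl e, ← Finset.mul_sum,
      sum_abs_lo (d-2) (-(d-1)) (by omega) (by omega)]
    ring
  have hX6 : ∑ i ∈ Finset.Icc (-(d-2)) (d-2),
      ((B2L n d x i : ℤ)+1) * ((B2L n d x (-(d-1)) : ℤ)+1) * |i - (-(d-1))|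
      = 2*(x+1)*((2*d-3)*(d-1)) := by
    have e : ∀ i ∈ Finset.Icc (-(d-2)) (d-2),
        ((B2L n d x i : ℤ)+1) * ((B2L n d x (-(d-1)) : ℤ)+1) * |i - (-(d-1))|
          = (2 * (x+1)) * |i - (-(d-1))| := fun i hi => by
      rw [hwnd1, hwM i hi]
    rw [Finset.sum_congr rfl e, ← Finset.mul_sum,
      sum_abs_lo (d-2) (-(d-1)) (by omega) (by omega)]
    ring
  have hX7 : ∑ i' ∈ Finset.Icc (-(d-2)) (d-2),
      ((B2L n d x (d-1) : ℤ)+1) * ((B2L n d x i' : ℤ)+1) * |(d-1) - i'|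
      = 2*(x+1)*((2*d-3)*(d-1)) := by
    have e : ∀ i ∈ Finset.Icc (-(d-2)) (d-2),
        ((B2L n d x (d-1) : ℤ)+1) * ((B2L n d x i : ℤ)+1) * |(d-1) - i|
          = ((x+1) * 2) * |i - (d-1)| := fun i hi => by
      rw [hwd1, hwM i hi, abs_sub_comm]
    rw [Finset.sum_congr rfl e, ← Finset.mul_sum,
      sum_abs_hi (d-2) (d-1) (by omega) (by omega)]
    ring
  have hX8 : ∑ i ∈ Finset.Icc (-(d-2)) (d-2),
      ((B2L n d x i : ℤ)+1) * ((B2L n d x (d-1) : ℤ)+1) * |i - (d-1)|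
      = 2*(x+1)*((2*d-3)*(d-1)) := by
    have e : ∀ i ∈ Finset.Icc (-(d-2)) (d-2),
        ((B2L n d x i : ℤ)+1) * ((B2L n d x (d-1) : ℤ)+1) * |i - (d-1)|
          = (2 * (x+1)) * |i - (d-1)| := fun i hi => by
      rw [hwd1, hwM i hi]
    rw [Finset.sum_congr rfl e, ← Finset.mul_sum,
      sum_abs_hi (d-2) (d-1) (by omega) (by omega)]
    ring
  -- abs values at boundary points
  have ha1 : |(-d) - d| = 2*d := by rw [abs_of_nonpos (by omega)]; ring
  have ha2 : |d - (-d)| = 2*d := by rw [abs_of_nonneg (by omega)]; ring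
  have ha3 : |(-d) - (-(d-1))| = 1 := by rw [abs_of_nonpos (by omega)]; ring
  have ha4 : |(-(d-1)) - (-d)| = 1 := by rw [abs_of_nonneg (by omega)]; ring
  have ha5 : |(-d) - (d-1)| = 2*d-1 := by rw [abs_of_nonpos (by omega)]; ring
  have ha6 : |(d-1) - (-d)| = 2*d-1 := by rw [abs_of_nonneg (by omega)]; ring
  have ha7 : |d - (-(d-1))| = 2*d-1 := by rw [abs_of_nonneg (by omega)]; ring
  have ha8 : |(-(d-1)) - d| = 2*d-1 := by rw [abs_of_nonpos (by omega)]; ring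
  have ha9 : |d - (d-1)| = 1 := by rw [abs_of_nonneg (by omega)]; ring
  have ha10 : |(d-1) - d| = 1 := by rw [abs_of_nonpos (by omega)]; ring
  have ha11 : |(-(d-1)) - (d-1)| = 2*d-2 := by rw [abs_of_nonpos (by omega)]; ring
  have ha12 : |(d-1) - (-(d-1))| = 2*d-2 := by rw [abs_of_nonneg (by omega)]; ring
  -- main abs double sum
  have hT : (∑ i ∈ Finset.Icc (-d) d, ∑ i' ∈ Finset.Icc (-d) d,
        ((B2L n d x i : ℤ)+1) * ((B2L n d x i' : ℤ)+1) * |i - i'|)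
      = 4*SM + 8*(R+1)*((2*d-3)*d) + 8*(x+1)*((2*d-3)*(d-1))
        + 8*(R+1)*(x+1)*d + 4*(R+1)^2*d + 4*(x+1)^2*(d-1) := by
    rw [hdecomp, double_insert hnm1, double_insert hnm2, double_insert hnm3,
      double_insert hnm4]
    simp only [Finset.sum_insert hnm2, Finset.sum_insert hnm3, Finset.sum_insert hnm4]
    rw [hX1, hX2, hX3, hX4, hX5, hX6, hX7, hX8, hMM]
    simp only [hwd, hwnd, hwd1, hwnd1, sub_self, abs_zero]
    rw [ha1, ha2, ha3, ha4, ha5, ha6, ha7, ha8, ha9, ha10, ha11, ha12]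
    ring
  -- assemble
  have hfull := sum_dist_eq d (B2L n d x) hd0
  rw [hT, hSL, hSL1] at hfull
  set H : ℤ := 2*SM + 4*(R+1)*((2*d-3)*d) + 4*(x+1)*((2*d-3)*(d-1))
      + 4*(R+1)*(x+1)*d + 2*(R+1)^2*d + 2*(x+1)^2*(d-1)
      + (n - 2*d - 1)*n - (n - 2*d - 1) with hHdef
  have hBig : ((∑ u : ↥(catVerts d (B2L n d x)), ∑ v : ↥(catVerts d (B2L n d x)),
      (caterpillar d (B2L n d x)).dist u v : ℕ) : ℤ) = 2 * H := by
    rw [hfull, hHdef]; ring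
  have hHnn : 0 ≤ H := by
    have h0 : (0:ℤ) ≤ ((∑ u : ↥(catVerts d (B2L n d x)), ∑ v : ↥(catVerts d (B2L n d x)),
        (caterpillar d (B2L n d x)).dist u v : ℕ) : ℤ) := Int.natCast_nonneg _
    linarith [hBig]
  have hwk : wiener (B2 n d x) = (∑ u : ↥(catVerts d (B2L n d x)),
      ∑ v : ↥(catVerts d (B2L n d x)), (caterpillar d (B2L n d x)).dist u v) / 2 := rfl
  have hwk2 : wiener (B2 n d x) = H.toNat := by
    rw [hwk]; omega
  rw [hwk2]
  have hcast : ((H.toNat : ℕ) : ℚ) = ((H : ℤ) : ℚ) := by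
    rw [← Int.cast_natCast (R := ℚ), Int.toNat_of_nonneg hHnn]
  rw [hcast, hHdef]
  have hRQ : (R : ℚ) = ((n:ℚ) - 4*(d:ℚ) - 2*(x:ℚ) + 2)/2 := by
    rw [eq_div_iff (by norm_num : (2:ℚ) ≠ 0)]
    have h := congrArg (Int.cast : ℤ → ℚ) h2R
    push_cast at h
    linarith
  have hSMQ : (SM : ℚ) = (2*((d:ℚ)-2))*(2*((d:ℚ)-2)+1)*(2*((d:ℚ)-2)+2)/3 := by
    rw [eq_div_iff (by norm_num : (3:ℚ) ≠ 0)]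
    have h := congrArg (Int.cast : ℤ → ℚ) hSM3
    push_cast at h
    linarith
  push_cast
  rw [hSMQ, hRQ]
  ring
end

section
/- With d₁ = ⌈(n−2)/4⌉, x₁ = (4 + 4d₁ − n)/2, and d₂ = ⌊n/4⌋, the caterpillars B₁(n, d₁, x₁) and B₂(n, d₂, 1) are isomorphic (in particular they have equal Wiener index). -/
/-- with `d₁ = ⌈(n−2)/4⌉ = (n+1)/4` (floor division), `x₁ = (4+4d₁−n)/2` and
`d₂ = ⌊n/4⌋ = n/4`, the caterpillars `B₁(n,d₁,x₁)` and `B₂(n,d₂,1)` are isomorphic; in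
particular their Wiener indices coincide. -/
theorem B1_iso_B2 (n : ℤ) (hne : Even n) (hn : 18 ≤ n) :
    Nonempty ((B1 n ((n + 1) / 4) ((4 + 4 * ((n + 1) / 4) - n) / 2)) ≃g (B2 n (n / 4) 1)) ∧
    wiener (B1 n ((n + 1) / 4) ((4 + 4 * ((n + 1) / 4) - n) / 2))
      = wiener (B2 n (n / 4) 1) := by
  obtain ⟨k, hk⟩ := hne
  have hd : (n + 1) / 4 = n / 4 := by omega
  rw [hd]
  have hL : B1L n (n / 4) ((4 + 4 * (n / 4) - n) / 2) = B2L n (n / 4) 1 := by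
    funext i
    simp only [B1L, B2L]
    rcases abs_cases i with ⟨h1, h2⟩ | ⟨h1, h2⟩ <;> rw [h1] <;> split_ifs <;> omega
  rw [B1, B2, hL]
  exact ⟨⟨RelIso.refl _⟩, rfl⟩
end

section
/- For integers n, d, x, s for which G₁(n,d,x,s) is defined, W(G₁(n,d,x,s)) = W(B₁(n−2,d,x)) + n²/4 + 3n/2 + 2d² + 3d + 2s² − s − 2x. -/
namespace Cat

variable {d : ℤ} {L : ℤ → ℕ}

lemma mem_catVerts {p : ℤ × ℤ} :
    p ∈ catVerts d L ↔ (-d ≤ p.2 ∧ p.2 ≤ d) ∧ 0 ≤ p.1 ∧ p.1 ≤ (L p.2 : ℤ) := by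
  simp only [catVerts, Finset.mem_biUnion, Finset.mem_image, Finset.mem_Icc]
  constructor
  · rintro ⟨i, hi, j, hj, rfl⟩; exact ⟨hi, hj⟩
  · rintro ⟨hi, hj⟩; exact ⟨p.2, hi, p.1, hj, rfl⟩

/-- the spine vertex at position `i`. -/
def sv (i : ℤ) (h1 : -d ≤ i) (h2 : i ≤ d) : ↥(catVerts d L) :=
  ⟨(0, i), mem_catVerts.2 ⟨⟨h1, h2⟩, le_refl _, Int.ofNat_nonneg _⟩⟩

lemma adj_iff {a b : ↥(catVerts d L)} :
    (caterpillar d L).Adj a b ↔ a ≠ b ∧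
      ((a.1.1 = 0 ∧ b.1.1 = 0 ∧ a.1.2 + 1 = b.1.2) ∨
       (a.1.2 = b.1.2 ∧ a.1.1 = 0 ∧ b.1.1 ≠ 0) ∨
       (b.1.1 = 0 ∧ a.1.1 = 0 ∧ b.1.2 + 1 = a.1.2) ∨
       (b.1.2 = a.1.2 ∧ b.1.1 = 0 ∧ a.1.1 ≠ 0)) := by
  simp only [caterpillar, SimpleGraph.fromRel_adj]; tauto

/-- adjacent vertices have spine coordinates within 1 -/
lemma adj_coord {a b : ↥(catVerts d L)} (h : (caterpillar d L).Adj a b) :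
    (a.1.2 - b.1.2).natAbs ≤ 1 := by
  rcases adj_iff.1 h with ⟨-, h | h | h | h⟩ <;> omega

/-- lower bound on walk length from the spine-coordinate potential -/
lemma length_ge {a b : ↥(catVerts d L)} (p : (caterpillar d L).Walk a b) :
    (a.1.2 - b.1.2).natAbs ≤ p.length := by
  induction p with
  | nil => simp
  | cons h q ih =>
    rename_i u v w
    have := adj_coord h
    simp only [SimpleGraph.Walk.length_cons]
    omega

lemma spine_walk_le {i i' : ℤ} (h1 : -d ≤ i) (h2 : i ≤ d) (h1' : -d ≤ i') (h2' : i' ≤ d)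
    (hle : i ≤ i') :
    ∃ p : (caterpillar d L).Walk (sv i h1 h2) (sv i' h1' h2'), p.length = (i' - i).toNat := by
  revert h1' h2'
  refine Int.le_induction (motive := fun k _ => ∀ (h1' : -d ≤ k) (h2' : k ≤ d),
      ∃ p : (caterpillar d L).Walk (sv i h1 h2) (sv k h1' h2'), p.length = (k - i).toNat)
    ?_ ?_ i' hle
  · intro h1' h2'
    exact ⟨(SimpleGraph.Walk.nil).copy rfl (by congr), by simp⟩
  · intro k hk ih h1' h2'
    have hk2 : k ≤ d := by omega
    obtain ⟨p, hp⟩ := ih (by omega) hk2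
    have hadj : (caterpillar d L).Adj (sv k (by omega) hk2) (sv (k+1) (by omega) h2') := by
      rw [adj_iff]
      refine ⟨by simp [sv, Subtype.ext_iff, Prod.ext_iff], Or.inl ⟨rfl, rfl, rfl⟩⟩
    exact ⟨p.concat hadj, by simp [hp]; omega⟩


lemma coord_mem (a : ↥(catVerts d L)) : -d ≤ a.1.2 ∧ a.1.2 ≤ d ∧ 0 ≤ a.1.1 ∧ a.1.1 ≤ (L a.1.2 : ℤ) := by
  have := mem_catVerts.1 a.2; tauto

/-- the spine vertex over `a` -/
def spOf (a : ↥(catVerts d L)) : ↥(catVerts d L) :=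
  sv a.1.2 (coord_mem a).1 (coord_mem a).2.1

lemma adj_spOf {a : ↥(catVerts d L)} (h : a.1.1 ≠ 0) : (caterpillar d L).Adj a (spOf a) := by
  rw [adj_iff]
  constructor
  · intro hc
    apply h
    rw [hc]
    rfl
  · exact Or.inr (Or.inr (Or.inr ⟨rfl, rfl, h⟩))

lemma eq_spOf_of_adj {a b : ↥(catVerts d L)} (h : a.1.1 ≠ 0)
    (hadj : (caterpillar d L).Adj a b) : b = spOf a := by
  rcases adj_iff.1 hadj with ⟨-, h1 | h1 | h1 | h1⟩
  · exact absurd h1.1 h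
  · exact absurd h1.2.1 h
  · exact absurd h1.2.1 h
  · apply Subtype.ext
    have : b.1 = (b.1.1, b.1.2) := rfl
    rw [this, h1.2.1, h1.1]
    rfl

lemma spOf_eq_self {a : ↥(catVerts d L)} (h : a.1.1 = 0) : spOf a = a := by
  apply Subtype.ext
  have : a.1 = (a.1.1, a.1.2) := rfl
  conv_rhs => rw [this, h]
  rfl

lemma reachable (a b : ↥(catVerts d L)) : (caterpillar d L).Reachable a b := by
  have key : ∀ c : ↥(catVerts d L), (caterpillar d L).Reachable c (spOf c) := by
    intro c
    by_cases h : c.1.1 = 0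
    · rw [spOf_eq_self h]
    · exact (adj_spOf h).reachable
  have spine : (caterpillar d L).Reachable (spOf a) (spOf b) := by
    rcases le_total a.1.2 b.1.2 with hle | hle
    · obtain ⟨p, -⟩ := spine_walk_le (L := L) (coord_mem a).1 (coord_mem a).2.1
        (coord_mem b).1 (coord_mem b).2.1 hle
      exact ⟨p⟩
    · obtain ⟨p, -⟩ := spine_walk_le (L := L) (coord_mem b).1 (coord_mem b).2.1
        (coord_mem a).1 (coord_mem a).2.1 hle
      exact (SimpleGraph.Walk.reachable p).symm
  exact ((key a).trans spine).trans (key b).symm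

lemma dist_spine {i i' : ℤ} (h1 : -d ≤ i) (h2 : i ≤ d) (h1' : -d ≤ i') (h2' : i' ≤ d) :
    (caterpillar d L).dist (sv i h1 h2) (sv i' h1' h2') = (i - i').natAbs := by
  apply le_antisymm
  · rcases le_total i i' with hle | hle
    · obtain ⟨p, hp⟩ := spine_walk_le (L := L) h1 h2 h1' h2' hle
      have := SimpleGraph.dist_le p
      omega
    · obtain ⟨p, hp⟩ := spine_walk_le (L := L) h1' h2' h1 h2 hle
      have := SimpleGraph.dist_le p.reverse
      simp at this
      omega
  · obtain ⟨p, hp⟩ := (reachable (sv i h1 h2) (sv (L := L) i' h1' h2')).exists_walk_length_eq_dist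
    have := length_ge p
    simp only [sv] at this
    exact this.trans hp.le

lemma dist_leaf_left {a b : ↥(catVerts d L)} (h : a.1.1 ≠ 0) (hab : a ≠ b) :
    (caterpillar d L).dist a b = 1 + (caterpillar d L).dist (spOf a) b := by
  apply le_antisymm
  · obtain ⟨p, hp⟩ := (reachable (spOf a) b).exists_walk_length_eq_dist
    have := SimpleGraph.dist_le ((adj_spOf h).toWalk.append p)
    simp [hp] at this
    omega
  · obtain ⟨p, hp⟩ := (reachable a b).exists_walk_length_eq_dist
    cases p with
    | nil => exact absurd rfl hab
    | cons hadj q =>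
      rename_i c
      have hc : c = spOf a := eq_spOf_of_adj h hadj
      subst hc
      have := SimpleGraph.dist_le q
      simp only [SimpleGraph.Walk.length_cons] at hp
      omega

lemma dist_sv (a : ↥(catVerts d L)) {i' : ℤ} (h1' : -d ≤ i') (h2' : i' ≤ d) :
    (caterpillar d L).dist a (sv i' h1' h2')
      = (a.1.2 - i').natAbs + (if a.1.1 = 0 then 0 else 1) := by
  by_cases h : a.1.1 = 0
  · rw [if_pos h]
    have ha : a = sv (L := L) a.1.2 (coord_mem a).1 (coord_mem a).2.1 := by
      apply Subtype.ext
      have : a.1 = (a.1.1, a.1.2) := rfl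
      conv_lhs => rw [this, h]
      rfl
    conv_lhs => rw [ha]
    rw [dist_spine]
    omega
  · rw [if_neg h]
    have hne : a ≠ sv i' h1' h2' := by
      intro hc
      apply h
      rw [hc]
      rfl
    rw [dist_leaf_left h hne]
    have : spOf a = sv (L := L) a.1.2 (coord_mem a).1 (coord_mem a).2.1 := rfl
    rw [this, dist_spine]
    omega

lemma dist_eq {a b : ↥(catVerts d L)} (hab : a ≠ b) :
    (caterpillar d L).dist a b = (a.1.2 - b.1.2).natAbs
      + (if a.1.1 = 0 then 0 else 1) + (if b.1.1 = 0 then 0 else 1) := by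
  by_cases h : b.1.1 = 0
  · rw [if_pos h]
    have hb : b = sv (L := L) b.1.2 (coord_mem b).1 (coord_mem b).2.1 := by
      apply Subtype.ext
      have : b.1 = (b.1.1, b.1.2) := rfl
      conv_lhs => rw [this, h]
      rfl
    conv_lhs => rw [hb]
    rw [dist_sv]
    omega
  · rw [if_neg h]
    rw [SimpleGraph.dist_comm, dist_leaf_left h (Ne.symm hab)]
    have : spOf b = sv (L := L) b.1.2 (coord_mem b).1 (coord_mem b).2.1 := rfl
    rw [this, SimpleGraph.dist_comm, dist_sv]
    omega


/-- leaf indicator -/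
def ind (p : ℤ × ℤ) : ℕ := if p.1 = 0 then 0 else 1

lemma sum_vert (g : ℤ × ℤ → ℕ) :
    ∑ u : ↥(catVerts d L), g u.1
      = ∑ i ∈ Finset.Icc (-d) d, ∑ j ∈ Finset.Icc (0:ℤ) (L i : ℤ), g (j, i) := by
  classical
  rw [Finset.sum_coe_sort (catVerts d L) g]
  rw [catVerts, Finset.sum_biUnion]
  · refine Finset.sum_congr rfl fun i _ => ?_
    rw [Finset.sum_image]
    intro a _ b _ hab
    exact congrArg Prod.fst hab
  · intro i _ i' _ hii'
    simp only [Function.onFun]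
    rw [Finset.disjoint_left]
    rintro p hp hp'
    simp only [Finset.mem_image] at hp hp'
    obtain ⟨j, -, rfl⟩ := hp
    obtain ⟨j', -, h⟩ := hp'
    exact hii' (congrArg Prod.snd h).symm

lemma sum_leaf_one : ∀ i : ℤ, ∑ j ∈ Finset.Icc (0:ℤ) (L i : ℤ), (1:ℕ) = L i + 1 := by
  intro i
  rw [Finset.sum_const, smul_eq_mul, mul_one, Int.card_Icc]
  omega

lemma sum_leaf_ind : ∀ i : ℤ, ∑ j ∈ Finset.Icc (0:ℤ) (L i : ℤ), ind (j, i) = L i := by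
  classical
  intro i
  have h1 : ∑ j ∈ Finset.Icc (0:ℤ) (L i : ℤ), (ind (j, i) + if j = 0 then 1 else 0)
      = ∑ j ∈ Finset.Icc (0:ℤ) (L i : ℤ), 1 := by
    refine Finset.sum_congr rfl fun j _ => ?_
    simp only [ind]
    by_cases h : j = 0 <;> simp [h]
  rw [Finset.sum_add_distrib] at h1
  have h2 : ∑ j ∈ Finset.Icc (0:ℤ) (L i : ℤ), (if j = 0 then (1:ℕ) else 0) = 1 := by
    rw [Finset.sum_ite_eq' (Finset.Icc (0:ℤ) (L i : ℤ)) 0 (fun _ => (1:ℕ))]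
    simp [Finset.mem_Icc, Int.ofNat_nonneg]
  rw [h2, sum_leaf_one] at h1
  omega

lemma sum_vert_coord (f : ℤ → ℕ) :
    ∑ u : ↥(catVerts d L), f u.1.2 = ∑ i ∈ Finset.Icc (-d) d, (L i + 1) * f i := by
  rw [sum_vert (fun p => f p.2)]
  refine Finset.sum_congr rfl fun i _ => ?_
  have : ∀ j ∈ Finset.Icc (0:ℤ) (L i : ℤ), f (j, i).2 = f i := fun j _ => rfl
  rw [Finset.sum_congr rfl this, Finset.sum_const, smul_eq_mul, Int.card_Icc]
  first
  | rfl
  | (congr 1; omega)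


lemma sum_ind_eq : ∑ u : ↥(catVerts d L), ind u.1 = ∑ i ∈ Finset.Icc (-d) d, L i := by
  rw [sum_vert ind]
  exact Finset.sum_congr rfl fun i _ => sum_leaf_ind i

lemma card_eq : (Fintype.card ↥(catVerts d L)) = ∑ i ∈ Finset.Icc (-d) d, (L i + 1) := by
  have := sum_vert_coord (L := L) (d := d) (fun _ => 1)
  simpa using this

lemma sum_dist_add :
    (∑ u : ↥(catVerts d L), ∑ v : ↥(catVerts d L), (caterpillar d L).dist u v)
        + 2 * (∑ i ∈ Finset.Icc (-d) d, L i)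
      = (∑ i ∈ Finset.Icc (-d) d, ∑ i' ∈ Finset.Icc (-d) d,
            (L i + 1) * (L i' + 1) * (i - i').natAbs)
        + 2 * (∑ i ∈ Finset.Icc (-d) d, (L i + 1)) * (∑ i ∈ Finset.Icc (-d) d, L i) := by
  classical
  set V := ↥(catVerts d L)
  set N : ℕ := Fintype.card V with hN
  have key : ∀ u v : V, (caterpillar d L).dist u v + (if u = v then 2 * ind u.1 else 0)
      = (u.1.2 - v.1.2).natAbs + ind u.1 + ind v.1 := by
    intro u v
    by_cases h : u = v
    · subst h
      simp [SimpleGraph.dist_self, ind]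
      by_cases h2 : u.1.1 = 0 <;> simp [h2] <;> omega
    · rw [if_neg h, Nat.add_zero, dist_eq h, ind, ind]
  have hrow : ∀ u : V, (∑ v : V, (caterpillar d L).dist u v) + 2 * ind u.1
      = (∑ v : V, (u.1.2 - v.1.2).natAbs) + N * ind u.1 + (∑ v : V, ind v.1) := by
    intro u
    have e1 : ∑ v : V, (if u = v then 2 * ind u.1 else 0) = 2 * ind u.1 := by
      convert Finset.sum_ite_eq Finset.univ u (fun _ => 2 * ind u.1) using 1
      simp
    calc (∑ v : V, (caterpillar d L).dist u v) + 2 * ind u.1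
        = ∑ v : V, ((caterpillar d L).dist u v + (if u = v then 2 * ind u.1 else 0)) := by
          rw [Finset.sum_add_distrib, e1]
      _ = ∑ v : V, ((u.1.2 - v.1.2).natAbs + ind u.1 + ind v.1) := by
          exact Finset.sum_congr rfl fun v _ => key u v
      _ = (∑ v : V, ((u.1.2 - v.1.2).natAbs + ind u.1)) + (∑ v : V, ind v.1) := by
          rw [Finset.sum_add_distrib]
      _ = (∑ v : V, (u.1.2 - v.1.2).natAbs) + N * ind u.1 + (∑ v : V, ind v.1) := by
          rw [Finset.sum_add_distrib, Finset.sum_const, Finset.card_univ, smul_eq_mul]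
  have hsum : (∑ u : V, ∑ v : V, (caterpillar d L).dist u v) + 2 * (∑ u : V, ind u.1)
      = (∑ u : V, ∑ v : V, (u.1.2 - v.1.2).natAbs) + 2 * N * (∑ u : V, ind u.1) := by
    have := Finset.sum_congr rfl (fun u (_ : u ∈ Finset.univ) => hrow u)
    rw [Finset.sum_add_distrib, Finset.sum_add_distrib, Finset.sum_add_distrib] at this
    rw [Finset.sum_const, Finset.card_univ, smul_eq_mul, ← Finset.mul_sum] at this
    rw [← Finset.mul_sum] at this
    ring_nf at this ⊢
    linarith
  have hQ : (∑ u : V, ∑ v : V, (u.1.2 - v.1.2).natAbs)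
      = ∑ i ∈ Finset.Icc (-d) d, ∑ i' ∈ Finset.Icc (-d) d,
          (L i + 1) * (L i' + 1) * (i - i').natAbs := by
    have inner : ∀ u : V, (∑ v : V, (u.1.2 - v.1.2).natAbs)
        = ∑ i' ∈ Finset.Icc (-d) d, (L i' + 1) * (u.1.2 - i').natAbs := by
      intro u
      exact sum_vert_coord (fun i' => (u.1.2 - i').natAbs)
    calc ∑ u : V, ∑ v : V, (u.1.2 - v.1.2).natAbs
        = ∑ u : V, ∑ i' ∈ Finset.Icc (-d) d, (L i' + 1) * (u.1.2 - i').natAbs := by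
          exact Finset.sum_congr rfl fun u _ => inner u
      _ = ∑ i ∈ Finset.Icc (-d) d, (L i + 1) *
            (∑ i' ∈ Finset.Icc (-d) d, (L i' + 1) * (i - i').natAbs) := by
          exact sum_vert_coord (fun i => ∑ i' ∈ Finset.Icc (-d) d, (L i' + 1) * (i - i').natAbs)
      _ = _ := by
          refine Finset.sum_congr rfl fun i _ => ?_
          rw [Finset.mul_sum]
          refine Finset.sum_congr rfl fun i' _ => ?_
          ring
  rw [sum_ind_eq] at hsum
  rw [hQ, hN, card_eq] at hsum
  ring_nf at hsum ⊢
  linarith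



end Cat


lemma Icc_succ_top {a b : ℤ} (h : a ≤ b + 1) :
    Finset.Icc a (b + 1) = insert (b + 1) (Finset.Icc a b) := by
  ext i
  simp only [Finset.mem_Icc, Finset.mem_insert]
  omega

lemma sum_sub_left (a : ℤ) : ∀ b : ℤ, a - 1 ≤ b →
    2 * (∑ i ∈ Finset.Icc a b, (i - a)) = (b - a) * (b - a + 1) := by
  refine Int.le_induction ?_ ?_
  · rw [Finset.Icc_eq_empty (by omega)]
    simp
  · intro b hb ih
    rw [Icc_succ_top (by omega), Finset.sum_insert (by simp), mul_add, ih]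
    ring

lemma sum_sub_right (a b : ℤ) (h : a - 1 ≤ b) :
    2 * (∑ i ∈ Finset.Icc a b, (b - i)) = (b - a) * (b - a + 1) := by
  have h1 : ∑ i ∈ Finset.Icc a b, (b - i) + ∑ i ∈ Finset.Icc a b, (i - a)
      = (b + 1 - a) * (b - a) := by
    rw [← Finset.sum_add_distrib]
    have hptw : ∀ i ∈ Finset.Icc a b, (b - i) + (i - a) = b - a := fun i _ => by ring
    rw [Finset.sum_congr rfl hptw, Finset.sum_const, nsmul_eq_mul, Int.card_Icc]
    have h3 : ((b + 1 - a).toNat : ℤ) = b + 1 - a := by omega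
    rw [h3]
  have h2 := sum_sub_left a b h
  linarith

lemma Icc_split (a b c : ℤ) (h1 : a - 1 ≤ c) (h2 : c ≤ b) :
    Finset.Icc a b = Finset.Icc a c ∪ Finset.Icc (c+1) b := by
  ext i
  simp only [Finset.mem_Icc, Finset.mem_union]
  omega

lemma sum_abs_mid (a b c : ℤ) (h1 : a ≤ c) (h2 : c ≤ b) :
    2 * (∑ i ∈ Finset.Icc a b, |i - c|) = (c - a) * (c - a + 1) + (b - c) * (b - c + 1) := by
  rw [Icc_split a b c (by omega) h2, Finset.sum_union]
  · have e1 : ∑ i ∈ Finset.Icc a c, |i - c| = ∑ i ∈ Finset.Icc a c, (c - i) := by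
      refine Finset.sum_congr rfl fun i hi => ?_
      simp only [Finset.mem_Icc] at hi
      rw [abs_of_nonpos (by omega)]
      ring
    have e2 : ∑ i ∈ Finset.Icc (c+1) b, |i - c| = ∑ i ∈ Finset.Icc (c+1) b, ((i - (c+1)) + 1) := by
      refine Finset.sum_congr rfl fun i hi => ?_
      simp only [Finset.mem_Icc] at hi
      rw [abs_of_nonneg (by omega)]
      ring
    rw [e1, e2, Finset.sum_add_distrib, Finset.sum_const, nsmul_eq_mul, mul_one, Int.card_Icc]
    have h3 : ((b + 1 - (c+1)).toNat : ℤ) = b - c := by omega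
    rw [mul_add, mul_add, h3, sum_sub_right a c (by omega), sum_sub_left (c+1) b (by omega)]
    ring
  · rw [Finset.disjoint_left]
    intro i hi hi'
    simp only [Finset.mem_Icc] at hi hi'
    omega

lemma sum_abs_high (a b c : ℤ) (h1 : a - 1 ≤ b) (h2 : b ≤ c) :
    2 * (∑ i ∈ Finset.Icc a b, |i - c|) = (b - a) * (b - a + 1) + 2 * (c - b) * (b + 1 - a) := by
  have e1 : ∑ i ∈ Finset.Icc a b, |i - c| = ∑ i ∈ Finset.Icc a b, ((b - i) + (c - b)) := by
    refine Finset.sum_congr rfl fun i hi => ?_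
    simp only [Finset.mem_Icc] at hi
    rw [abs_of_nonpos (by omega)]
    ring
  rw [e1, Finset.sum_add_distrib, Finset.sum_const, nsmul_eq_mul, Int.card_Icc]
  have h3 : ((b + 1 - a).toNat : ℤ) = b + 1 - a := by omega
  rw [mul_add, h3, sum_sub_right a b h1]
  ring

lemma sum_delta {I : Finset ℤ} {s t : ℤ} (hs : s ∈ I) (ht : t ∈ I) (f : ℤ → ℤ) :
    ∑ i ∈ I, ((if i = s then (1:ℤ) else 0) + (if i = t then 1 else 0)) * f i = f s + f t := by
  simp only [add_mul, ite_mul, one_mul, zero_mul]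
  rw [Finset.sum_add_distrib, Finset.sum_ite_eq' I s f, Finset.sum_ite_eq' I t f,
    if_pos hs, if_pos ht]

lemma sum_ite_or_mul {I : Finset ℤ} {p q : ℤ} (hp : p ∈ I) (hq : q ∈ I) (hpq : p ≠ q)
    (f : ℤ → ℤ) :
    ∑ i ∈ I, (if i = p ∨ i = q then (1:ℤ) else 0) * f i = f p + f q := by
  have e : ∀ i ∈ I, (if i = p ∨ i = q then (1:ℤ) else 0) * f i
      = ((if i = p then (1:ℤ) else 0) + (if i = q then 1 else 0)) * f i := by
    intro i _
    by_cases h1 : i = p <;> by_cases h2 : i = q <;> simp_all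
  rw [Finset.sum_congr rfl e, sum_delta hp hq]

lemma sum_ite_abs_le {d K : ℤ} (hKd : K ≤ d) (f : ℤ → ℤ) :
    ∑ i ∈ Finset.Icc (-d) d, (if |i| ≤ K then (1:ℤ) else 0) * f i
      = ∑ i ∈ Finset.Icc (-K) K, f i := by
  have h1 : ∀ i ∈ Finset.Icc (-d) d, (if |i| ≤ K then (1:ℤ) else 0) * f i
      = if i ∈ Finset.Icc (-K) K then f i else 0 := by
    intro i _
    by_cases h : |i| ≤ K
    · rw [if_pos h, if_pos, one_mul]
      rw [Finset.mem_Icc]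
      constructor <;> [exact neg_le_of_abs_le h; exact le_of_abs_le h]
    · rw [if_neg h, if_neg, zero_mul]
      rw [Finset.mem_Icc]
      intro hc
      exact h (abs_le.mpr hc)
  rw [Finset.sum_congr rfl h1, Finset.sum_ite_mem]
  rw [Finset.inter_eq_right.mpr (Finset.Icc_subset_Icc (by omega) (by omega))]

lemma sum_shift {I : Finset ℤ} {s t : ℤ} (hs : s ∈ I) (ht : t ∈ I) (w : ℤ → ℤ) :
    ∑ i ∈ I, ∑ i' ∈ I,
        (w i + ((if i = s then (1:ℤ) else 0) + (if i = t then 1 else 0)))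
        * (w i' + ((if i' = s then (1:ℤ) else 0) + (if i' = t then 1 else 0))) * |i - i'|
      = (∑ i ∈ I, ∑ i' ∈ I, w i * w i' * |i - i'|)
        + (∑ i ∈ I, w i * (|i - s| + |i - t|)) + (∑ i ∈ I, w i * (|i - s| + |i - t|))
        + (|s - t| + |t - s|) := by
  have inner : ∀ i : ℤ, ∑ i' ∈ I,
      (w i' + ((if i' = s then (1:ℤ) else 0) + (if i' = t then 1 else 0))) * |i - i'|
      = (∑ i' ∈ I, w i' * |i - i'|) + (|i - s| + |i - t|) := by
    intro i
    have e : ∀ i' ∈ I,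
        (w i' + ((if i' = s then (1:ℤ) else 0) + (if i' = t then 1 else 0))) * |i - i'|
        = w i' * |i - i'|
          + ((if i' = s then (1:ℤ) else 0) + (if i' = t then 1 else 0)) * |i - i'| :=
      fun i' _ => by ring
    rw [Finset.sum_congr rfl e, Finset.sum_add_distrib, sum_delta hs ht]
  have outer : ∀ i ∈ I, (∑ i' ∈ I,
      (w i + ((if i = s then (1:ℤ) else 0) + (if i = t then 1 else 0)))
        * (w i' + ((if i' = s then (1:ℤ) else 0) + (if i' = t then 1 else 0))) * |i - i'|)
      = (w i * (∑ i' ∈ I, w i' * |i - i'|) + w i * (|i - s| + |i - t|))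
        + ((if i = s then (1:ℤ) else 0) + (if i = t then 1 else 0))
            * ((∑ i' ∈ I, w i' * |i - i'|) + (|i - s| + |i - t|)) := by
    intro i _
    have e2 : ∀ i' ∈ I,
        (w i + ((if i = s then (1:ℤ) else 0) + (if i = t then 1 else 0)))
          * (w i' + ((if i' = s then (1:ℤ) else 0) + (if i' = t then 1 else 0))) * |i - i'|
        = (w i + ((if i = s then (1:ℤ) else 0) + (if i = t then 1 else 0)))
          * ((w i' + ((if i' = s then (1:ℤ) else 0) + (if i' = t then 1 else 0))) * |i - i'|) :=
      fun i' _ => by ring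
    rw [Finset.sum_congr rfl e2, ← Finset.mul_sum, inner i]
    ring
  rw [Finset.sum_congr rfl outer, Finset.sum_add_distrib,
    sum_delta hs ht (f := fun i => (∑ i' ∈ I, w i' * |i - i'|) + (|i - s| + |i - t|)),
    Finset.sum_add_distrib]
  have hBQ : ∑ i ∈ I, w i * (∑ i' ∈ I, w i' * |i - i'|)
      = ∑ i ∈ I, ∑ i' ∈ I, w i * w i' * |i - i'| := by
    refine Finset.sum_congr rfl fun i _ => ?_
    rw [Finset.mul_sum]
    exact Finset.sum_congr rfl fun i' _ => by ring
  have hBsBt : (∑ i' ∈ I, w i' * |s - i'|) + (∑ i' ∈ I, w i' * |t - i'|)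
      = ∑ i ∈ I, w i * (|i - s| + |i - t|) := by
    rw [← Finset.sum_add_distrib]
    refine Finset.sum_congr rfl fun i _ => ?_
    rw [abs_sub_comm s i, abs_sub_comm t i]
    ring
  simp only [sub_self, abs_zero]
  linarith [hBsBt]

/-- `W(G₁(n,d,x,s)) = W(B₁(n−2,d,x)) + n²/4 + 3n/2 + 2d² + 3d + 2s² − s − 2x`. -/
theorem wiener_G1 (n d x s : ℤ) (hne : Even n) (hn : 20 ≤ n)
    (hd1 : n - 4 ≤ 4 * d) (hd2 : 2 * d ≤ n - 10)
    (hx1 : 1 ≤ x) (hx2 : 2 * x ≤ 4 + 4 * d - (n - 2))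
    (hs : s ∈ ({-1, 0, 1, 2} : Set ℤ)) :
    (wiener (G1 n d x s) : ℚ)
      = (wiener (B1 (n - 2) d x) : ℚ) + (n : ℚ)^2 / 4 + 3 * (n : ℚ) / 2
        + 2 * (d:ℚ)^2 + 3 * (d:ℚ) + 2 * (s:ℚ)^2 - (s:ℚ) - 2 * (x:ℚ) := by
  obtain ⟨m, hm⟩ := hne
  subst hm
  have hs4 : s = -1 ∨ s = 0 ∨ s = 1 ∨ s = 2 := by simpa using hs
  have hs1 : -1 ≤ s := by rcases hs4 with h|h|h|h <;> omega
  have hs2 : s ≤ 2 := by rcases hs4 with h|h|h|h <;> omega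
  obtain ⟨K, hK⟩ : ∃ K : ℤ, K = m - d - 3 := ⟨_, rfl⟩
  have hm10 : 10 ≤ m := by omega
  have hdlo : m - 2 ≤ 2 * d := by omega
  have hdhi : d ≤ m - 5 := by omega
  have hK2 : 2 ≤ K := by omega
  have hKd : K ≤ d - 1 := by omega
  have hxp : x ≤ 3 + 2 * d - m := by omega
  have hd4 : 4 ≤ d := by omega
  have hsI : s ∈ Finset.Icc (-d) d := Finset.mem_Icc.mpr ⟨by omega, by omega⟩
  have hdI : d ∈ Finset.Icc (-d) d := Finset.mem_Icc.mpr ⟨by omega, by omega⟩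
  have hp1I : -d - 1 + x ∈ Finset.Icc (-d) d := Finset.mem_Icc.mpr ⟨by omega, by omega⟩
  have hp2I : d + 1 - x ∈ Finset.Icc (-d) d := Finset.mem_Icc.mpr ⟨by omega, by omega⟩
  have hp1p2 : -d - 1 + x ≠ d + 1 - x := by omega
  set Lb : ℤ → ℕ := B1L (m + m - 2) d x with hLb
  set Lg : ℤ → ℕ := fun i => B1L (m + m - 2) d x i
      + (if i = s then 1 else 0) + (if i = d then 1 else 0) with hLg
  have hLbz : ∀ i : ℤ, ((Lb i : ℤ))
      = (if i = -d - 1 + x ∨ i = d + 1 - x then 1 else 0) + (if |i| ≤ K then 1 else 0) := by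
    intro i
    have hdiv : (m + m - 2 - 2*d - 4)/2 = K := by omega
    rw [hLb]
    simp only [B1L, hdiv]
    push_cast
    ring
  have hLgd : ∀ i : ℤ, ((Lg i : ℤ)) = (Lb i : ℤ)
      + ((if i = s then (1:ℤ) else 0) + (if i = d then 1 else 0)) := by
    intro i
    rw [hLg, hLb]
    push_cast
    ring
  have hTsplit : (∑ i ∈ Finset.Icc (-d) d, ((Lb i:ℤ)+1) * (|i - s| + |i - d|))
      = ((|(-d - 1 + x) - s| + |(-d - 1 + x) - d|) + (|(d + 1 - x) - s| + |(d + 1 - x) - d|))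
        + ((∑ i ∈ Finset.Icc (-K) K, |i - s|) + (∑ i ∈ Finset.Icc (-K) K, |i - d|))
        + ((∑ i ∈ Finset.Icc (-d) d, |i - s|) + (∑ i ∈ Finset.Icc (-d) d, |i - d|)) := by
    have e : ∀ i ∈ Finset.Icc (-d) d, ((Lb i:ℤ)+1) * (|i - s| + |i - d|)
        = (if i = -d - 1 + x ∨ i = d + 1 - x then (1:ℤ) else 0) * (|i - s| + |i - d|)
          + ((if |i| ≤ K then (1:ℤ) else 0) * (|i - s| + |i - d|)
          + (|i - s| + |i - d|)) := by
      intro i _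
      rw [hLbz i]
      ring
    rw [Finset.sum_congr rfl e, Finset.sum_add_distrib, Finset.sum_add_distrib,
      sum_ite_or_mul hp1I hp2I hp1p2 (fun i => |i - s| + |i - d|),
      sum_ite_abs_le (by omega) (fun i => |i - s| + |i - d|),
      Finset.sum_add_distrib, Finset.sum_add_distrib]
    ring
  have h2T : 2 * (∑ i ∈ Finset.Icc (-d) d, ((Lb i:ℤ)+1) * (|i - s| + |i - d|))
      = 2*(s + 3*d + 2 - 2*x) + 2*(d - s)
        + ((s+K)*(s+K+1) + (K-s)*(K-s+1) + 2*K*(2*K+1) + 2*(d-K)*(2*K+1))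
        + ((s+d)*(s+d+1) + (d-s)*(d-s+1) + 2*d*(2*d+1)) := by
    rw [hTsplit]
    have a1 : |(-d - 1 + x) - s| = s - (-d - 1 + x) := by
      rw [abs_of_nonpos (by omega)]; ring
    have a2 : |(-d - 1 + x) - d| = d - (-d - 1 + x) := by
      rw [abs_of_nonpos (by omega)]; ring
    have a3 : |(d + 1 - x) - s| = (d + 1 - x) - s := abs_of_nonneg (by omega)
    have a4 : |(d + 1 - x) - d| = d - (d + 1 - x) := by
      rw [abs_of_nonpos (by omega)]; ring
    rw [a1, a2, a3, a4]
    linear_combination sum_abs_mid (-K) K s (by omega) (by omega)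
      + sum_abs_high (-K) K d (by omega) (by omega)
      + sum_abs_mid (-d) d s (by omega) (by omega)
      + sum_abs_mid (-d) d d (by omega) (by omega)
  have hlBz : (∑ i ∈ Finset.Icc (-d) d, (Lb i : ℤ)) = 2*K + 3 := by
    have e : ∀ i ∈ Finset.Icc (-d) d, (Lb i : ℤ)
        = (if i = -d - 1 + x ∨ i = d + 1 - x then (1:ℤ) else 0) * (fun _ : ℤ => (1:ℤ)) i
          + (if |i| ≤ K then (1:ℤ) else 0) * (fun _ : ℤ => (1:ℤ)) i := by
      intro i _
      rw [hLbz i]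
      ring
    rw [Finset.sum_congr rfl e, Finset.sum_add_distrib,
      sum_ite_or_mul hp1I hp2I hp1p2 (fun _ => (1:ℤ)),
      sum_ite_abs_le (by omega) (fun _ => (1:ℤ)), Finset.sum_const, nsmul_eq_mul, Int.card_Icc]
    have h3 : ((K + 1 - -K).toNat : ℤ) = 2*K + 1 := by omega
    rw [h3]
    norm_num
    omega
  have hvBz : (∑ i ∈ Finset.Icc (-d) d, ((Lb i : ℤ) + 1)) = 2*K + 2*d + 4 := by
    rw [Finset.sum_add_distrib, hlBz, Finset.sum_const, nsmul_eq_mul, Int.card_Icc]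
    have h3 : ((d + 1 - -d).toNat : ℤ) = 2*d + 1 := by omega
    rw [h3]
    ring
  have hlGz : (∑ i ∈ Finset.Icc (-d) d, (Lg i : ℤ))
      = (∑ i ∈ Finset.Icc (-d) d, (Lb i : ℤ)) + 2 := by
    have e : ∀ i ∈ Finset.Icc (-d) d, (Lg i : ℤ)
        = (Lb i : ℤ) + ((if i = s then (1:ℤ) else 0) + (if i = d then 1 else 0))
            * (fun _ : ℤ => (1:ℤ)) i := by
      intro i _
      rw [hLgd i]
      ring
    rw [Finset.sum_congr rfl e, Finset.sum_add_distrib, sum_delta hsI hdI (fun _ => (1:ℤ))]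
    norm_num
  have hvGz : (∑ i ∈ Finset.Icc (-d) d, ((Lg i : ℤ) + 1))
      = (∑ i ∈ Finset.Icc (-d) d, ((Lb i : ℤ) + 1)) + 2 := by
    have e : ∀ i ∈ Finset.Icc (-d) d, ((Lg i : ℤ) + 1)
        = ((Lb i : ℤ) + 1) + ((if i = s then (1:ℤ) else 0) + (if i = d then 1 else 0))
            * (fun _ : ℤ => (1:ℤ)) i := by
      intro i _
      rw [hLgd i]
      ring
    rw [Finset.sum_congr rfl e, Finset.sum_add_distrib, sum_delta hsI hdI (fun _ => (1:ℤ))]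
    norm_num
  have hQGz : (∑ i ∈ Finset.Icc (-d) d, ∑ i' ∈ Finset.Icc (-d) d,
        ((Lg i : ℤ) + 1) * ((Lg i' : ℤ) + 1) * |i - i'|)
      = (∑ i ∈ Finset.Icc (-d) d, ∑ i' ∈ Finset.Icc (-d) d,
          ((Lb i : ℤ) + 1) * ((Lb i' : ℤ) + 1) * |i - i'|)
        + 2 * (∑ i ∈ Finset.Icc (-d) d, ((Lb i:ℤ)+1) * (|i - s| + |i - d|)) + 2 * (d - s) := by
    have estep : (∑ i ∈ Finset.Icc (-d) d, ∑ i' ∈ Finset.Icc (-d) d,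
          ((Lg i : ℤ) + 1) * ((Lg i' : ℤ) + 1) * |i - i'|)
        = ∑ i ∈ Finset.Icc (-d) d, ∑ i' ∈ Finset.Icc (-d) d,
            ((fun j => (Lb j : ℤ) + 1) i + ((if i = s then (1:ℤ) else 0) + (if i = d then 1 else 0)))
            * ((fun j => (Lb j : ℤ) + 1) i'
                + ((if i' = s then (1:ℤ) else 0) + (if i' = d then 1 else 0)))
            * |i - i'| := by
      refine Finset.sum_congr rfl fun i _ => Finset.sum_congr rfl fun i' _ => ?_
      rw [hLgd i, hLgd i']
      ring
    rw [estep, sum_shift hsI hdI (fun j => (Lb j : ℤ) + 1)]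
    have habs1 : |s - d| = d - s := by rw [abs_of_nonpos (by omega)]; ring
    have habs2 : |d - s| = d - s := abs_of_nonneg (by omega)
    rw [habs1, habs2]
    ring
  have HBn := Cat.sum_dist_add (d := d) (L := Lb)
  have HGn := Cat.sum_dist_add (d := d) (L := Lg)
  have HB := congrArg (fun t : ℕ => (t : ℤ)) HBn
  have HG := congrArg (fun t : ℕ => (t : ℤ)) HGn
  push_cast [Int.natCast_natAbs] at HB HG
  rw [hQGz, hlGz, hvGz] at HG
  obtain ⟨c, hc⟩ : ∃ c : ℕ, (c : ℤ)
      = (∑ i ∈ Finset.Icc (-d) d, ((Lb i:ℤ)+1) * (|i - s| + |i - d|)) + (d - s)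
        + 2 * (∑ i ∈ Finset.Icc (-d) d, ((Lb i : ℤ) + 1))
        + 2 * (∑ i ∈ Finset.Icc (-d) d, (Lb i : ℤ)) + 2 := by
    refine ⟨(∑ i ∈ Finset.Icc (-d) d, (Lb i + 1) * ((i - s).natAbs + (i - d).natAbs))
        + (d - s).toNat + 2 * (∑ i ∈ Finset.Icc (-d) d, (Lb i + 1))
        + 2 * (∑ i ∈ Finset.Icc (-d) d, Lb i) + 2, ?_⟩
    push_cast [Int.natCast_natAbs]
    rw [Int.toNat_of_nonneg (by omega : (0:ℤ) ≤ d - s)]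
  have hZ : (∑ u : ↥(catVerts d Lg), ∑ v : ↥(catVerts d Lg),
        ((caterpillar d Lg).dist u v : ℤ))
      = (∑ u : ↥(catVerts d Lb), ∑ v : ↥(catVerts d Lb),
          ((caterpillar d Lb).dist u v : ℤ)) + 2 * (c : ℤ) := by
    rw [hc]
    linear_combination HG - HB
  have hSn : (∑ u : ↥(catVerts d Lg), ∑ v : ↥(catVerts d Lg), (caterpillar d Lg).dist u v)
      = (∑ u : ↥(catVerts d Lb), ∑ v : ↥(catVerts d Lb), (caterpillar d Lb).dist u v)
        + 2 * c := by
    exact_mod_cast hZ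
  have hG1eq : G1 (m + m) d x s = caterpillar d Lg := rfl
  have hB1eq : B1 (m + m - 2) d x = caterpillar d Lb := rfl
  have hW : wiener (G1 (m + m) d x s) = wiener (B1 (m + m - 2) d x) + c := by
    rw [hG1eq, hB1eq]
    unfold wiener
    rw [hSn, Nat.add_mul_div_left _ _ (by norm_num : (0:ℕ) < 2)]
  rw [hW]
  push_cast
  have hc4 : (c:ℤ) * 4 = (m+m)^2 + 6*(m+m) + 8*d^2 + 12*d + 8*s^2 - 4*s - 8*x := by
    subst hK
    linear_combination 4*hc + 2*h2T + 8*hvBz + 8*hlBz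
  have hcq : (c:ℚ) * 4 = ((m:ℚ)+(m:ℚ))^2 + 6*((m:ℚ)+(m:ℚ)) + 8*(d:ℚ)^2 + 12*(d:ℚ)
      + 8*(s:ℚ)^2 - 4*(s:ℚ) - 8*(x:ℚ) := by exact_mod_cast hc4
  linear_combination hcq / 4
end

section
/- For integers n, d, x for which the graphs are defined: W(G₁(n,d,x,1)) = W(G₁(n,d,x,0)) + 1, W(G₁(n,d,x,2)) = W(G₁(n,d,x,0)) + 6, and W(G₁(n,d,x,−1)) = W(G₁(n,d,x,0)) + 3. -/
namespace MyAux

lemma mem_catVerts {d : ℤ} {L : ℤ → ℕ} {p : ℤ × ℤ} :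
    p ∈ catVerts d L ↔ (-d ≤ p.2 ∧ p.2 ≤ d) ∧ 0 ≤ p.1 ∧ p.1 ≤ (L p.2 : ℤ) := by
  simp only [catVerts, Finset.mem_biUnion, Finset.mem_Icc, Finset.mem_image]
  constructor
  · rintro ⟨i, hi, j, hj, rfl⟩
    exact ⟨hi, hj⟩
  · rintro ⟨hi, hj⟩
    exact ⟨p.2, hi, p.1, hj, rfl⟩

variable {d : ℤ} {L : ℤ → ℕ}

lemma cat_adj {a b : ↥(catVerts d L)} :
    (caterpillar d L).Adj a b ↔ a ≠ b ∧
      (((a.1.1 = 0 ∧ b.1.1 = 0 ∧ a.1.2 + 1 = b.1.2) ∨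
        (a.1.2 = b.1.2 ∧ a.1.1 = 0 ∧ b.1.1 ≠ 0)) ∨
       ((b.1.1 = 0 ∧ a.1.1 = 0 ∧ b.1.2 + 1 = a.1.2) ∨
        (b.1.2 = a.1.2 ∧ b.1.1 = 0 ∧ a.1.1 ≠ 0))) := by
  rw [caterpillar, SimpleGraph.fromRel_adj]

/-- the spine vertex under a vertex -/
def sp (a : ↥(catVerts d L)) : ↥(catVerts d L) :=
  ⟨(0, a.1.2), by
    have h := mem_catVerts.mp a.2
    exact mem_catVerts.mpr ⟨h.1, le_refl 0, by positivity⟩⟩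

lemma sp_spec (a : ↥(catVerts d L)) : (sp a).1.1 = 0 ∧ (sp a).1.2 = a.1.2 := ⟨rfl, rfl⟩

lemma adj_sp {a : ↥(catVerts d L)} (ha : a.1.1 ≠ 0) : (caterpillar d L).Adj a (sp a) := by
  rw [cat_adj]
  refine ⟨?_, Or.inr (Or.inr ⟨rfl, rfl, ha⟩)⟩
  intro h
  exact ha (by rw [h]; rfl)

lemma unique_nbr {a c : ↥(catVerts d L)} (ha : a.1.1 ≠ 0) (h : (caterpillar d L).Adj a c) :
    c = sp a := by
  rw [cat_adj] at h
  obtain ⟨-, h⟩ := h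
  apply Subtype.ext
  have : c.1 = (0, a.1.2) := by
    rcases h with (⟨h1, -, -⟩ | ⟨-, h1, -⟩) | (⟨-, h1, -⟩ | ⟨h1, h2, -⟩)
    · exact absurd h1 ha
    · exact absurd h1 ha
    · exact absurd h1 ha
    · exact Prod.ext h2 h1
  exact this

lemma spine_walk : ∀ (k : ℕ) (a b : ↥(catVerts d L)), a.1.1 = 0 → b.1.1 = 0 →
    b.1.2 - a.1.2 = k → ∃ p : (caterpillar d L).Walk a b, p.length = k := by
  intro k
  induction k with
  | zero =>
    intro a b ha hb hk
    have : a = b := by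
      apply Subtype.ext; apply Prod.ext
      · rw [ha, hb]
      · omega
    subst this
    exact ⟨SimpleGraph.Walk.nil, rfl⟩
  | succ k ih =>
    intro a b ha hb hk
    have hma := mem_catVerts.mp a.2
    have hmb := mem_catVerts.mp b.2
    have hmem : ((0 : ℤ), a.1.2 + 1) ∈ catVerts d L := by
      apply mem_catVerts.mpr
      refine ⟨⟨by omega, by omega⟩, le_refl 0, by positivity⟩
    set c : ↥(catVerts d L) := ⟨(0, a.1.2 + 1), hmem⟩ with hc
    have hadj : (caterpillar d L).Adj a c := by
      rw [cat_adj]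
      constructor
      · intro h
        have h2 : (a.1).2 = (a.1).2 + 1 := by conv_lhs => rw [h]
        omega
      · exact Or.inl (Or.inl ⟨ha, rfl, rfl⟩)
    obtain ⟨p, hp⟩ := ih c b rfl hb (by simp [hc]; omega)
    exact ⟨SimpleGraph.Walk.cons hadj p, by simp [hp]⟩

lemma walk_len_lower {a b : ↥(catVerts d L)} (p : (caterpillar d L).Walk a b) :
    (b.1.2 - a.1.2).natAbs ≤ p.length := by
  induction p with
  | nil => simp
  | @cons u v w h q ih =>
    rw [cat_adj] at h
    have hstep : (v.1.2 - u.1.2).natAbs ≤ 1 := by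
      rcases h.2 with (⟨-, -, h1⟩ | ⟨h1, -, -⟩) | (⟨-, -, h1⟩ | ⟨h1, -, -⟩) <;> omega
    simp only [SimpleGraph.Walk.length_cons]
    omega

lemma spine_reachable {a b : ↥(catVerts d L)} (ha : a.1.1 = 0) (hb : b.1.1 = 0) :
    (caterpillar d L).Reachable a b := by
  rcases le_total a.1.2 b.1.2 with h | h
  · obtain ⟨p, -⟩ := spine_walk (b.1.2 - a.1.2).natAbs a b ha hb (by omega)
    exact ⟨p⟩
  · obtain ⟨p, -⟩ := spine_walk (a.1.2 - b.1.2).natAbs b a hb ha (by omega)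
    exact ⟨p.reverse⟩

lemma all_reachable (a b : ↥(catVerts d L)) : (caterpillar d L).Reachable a b := by
  have h1 : (caterpillar d L).Reachable a (sp a) := by
    by_cases ha : a.1.1 = 0
    · have : a = sp a := Subtype.ext (Prod.ext ha rfl)
      rw [← this]
    · exact (adj_sp ha).reachable
  have h2 : (caterpillar d L).Reachable b (sp b) := by
    by_cases hb : b.1.1 = 0
    · have : b = sp b := Subtype.ext (Prod.ext hb rfl)
      rw [← this]
    · exact (adj_sp hb).reachable
  exact h1.trans ((spine_reachable rfl rfl).trans h2.symm)

lemma spine_dist {a b : ↥(catVerts d L)} (ha : a.1.1 = 0) (hb : b.1.1 = 0) :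
    (caterpillar d L).dist a b = (b.1.2 - a.1.2).natAbs := by
  apply le_antisymm
  · rcases le_total a.1.2 b.1.2 with h | h
    · obtain ⟨p, hp⟩ := spine_walk (b.1.2 - a.1.2).natAbs a b ha hb (by omega)
      calc (caterpillar d L).dist a b ≤ p.length := SimpleGraph.dist_le p
        _ = _ := hp
    · obtain ⟨p, hp⟩ := spine_walk (a.1.2 - b.1.2).natAbs b a hb ha (by omega)
      rw [SimpleGraph.dist_comm]
      calc (caterpillar d L).dist b a ≤ p.length := SimpleGraph.dist_le p
        _ = _ := by rw [hp]; omega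
  · obtain ⟨p, hp⟩ := (spine_reachable ha hb).exists_walk_length_eq_dist
    have := walk_len_lower p
    omega


/-- distance function on raw pairs -/
def D (p q : ℤ × ℤ) : ℕ :=
  if p = q then 0 else
    (p.2 - q.2).natAbs + (if p.1 = 0 then 0 else 1) + (if q.1 = 0 then 0 else 1)

lemma D_symm (p q : ℤ × ℤ) : D p q = D q p := by
  unfold D
  by_cases h : p = q
  · simp [h]
  · rw [if_neg h, if_neg (Ne.symm h)]
    omega

lemma D_self (p : ℤ × ℤ) : D p p = 0 := by simp [D]

lemma dist_leaf_peel {a b : ↥(catVerts d L)} (ha : a.1.1 ≠ 0) (hne : a ≠ b) :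
    (caterpillar d L).dist a b = 1 + (caterpillar d L).dist (sp a) b := by
  apply le_antisymm
  · obtain ⟨q, hq⟩ := (all_reachable (sp a) b).exists_walk_length_eq_dist
    calc (caterpillar d L).dist a b ≤ (SimpleGraph.Walk.cons (adj_sp ha) q).length :=
          SimpleGraph.dist_le _
      _ = 1 + (caterpillar d L).dist (sp a) b := by simp [hq]; omega
  · have hr := all_reachable a b
    obtain ⟨p, hp⟩ := hr.exists_walk_length_eq_dist
    cases p with
    | nil => exact absurd rfl hne
    | @cons u c w h q =>
      have hc : c = sp a := unique_nbr ha h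
      subst hc
      have hle : (caterpillar d L).dist (sp a) b ≤ q.length := SimpleGraph.dist_le q
      simp only [SimpleGraph.Walk.length_cons] at hp
      omega

lemma cat_dist (a b : ↥(catVerts d L)) :
    (caterpillar d L).dist a b = D a.1 b.1 := by
  by_cases hab : a = b
  · subst hab; simp [D_self]
  · have hab' : a.1 ≠ b.1 := fun h => hab (Subtype.ext h)
    rw [D, if_neg hab']
    by_cases ha : a.1.1 = 0 <;> by_cases hb : b.1.1 = 0
    · rw [spine_dist ha hb, if_pos ha, if_pos hb]; omega
    · -- a spine, b leaf
      rw [SimpleGraph.dist_comm, dist_leaf_peel hb (Ne.symm hab), spine_dist rfl ha,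
        if_pos ha, if_neg hb]
      have : (sp b).1.2 = b.1.2 := rfl
      omega
    · rw [dist_leaf_peel ha hab, spine_dist rfl hb, if_neg ha, if_pos hb]
      have : (sp a).1.2 = a.1.2 := rfl
      omega
    · -- both leaves
      rw [dist_leaf_peel ha hab]
      have hspb : sp a ≠ b := by
        intro h
        apply hb; rw [← h]; rfl
      rw [SimpleGraph.dist_comm, dist_leaf_peel hb (Ne.symm hspb), spine_dist rfl rfl,
        if_neg ha, if_neg hb]
      have h1 : (sp a).1.2 = a.1.2 := rfl
      have h2 : (sp b).1.2 = b.1.2 := rfl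
      omega


def totalD (F : Finset (ℤ × ℤ)) : ℕ := ∑ a ∈ F, ∑ b ∈ F, D a b

lemma wiener_caterpillar (d : ℤ) (L : ℤ → ℕ) :
    wiener (caterpillar d L) = totalD (catVerts d L) / 2 := by
  unfold wiener totalD
  congr 1
  rw [← Finset.sum_coe_sort (catVerts d L) (fun a => ∑ b ∈ catVerts d L, D a b)]
  apply Finset.sum_congr rfl
  intro a _
  rw [← Finset.sum_coe_sort (catVerts d L) (fun b => D a.1 b)]
  apply Finset.sum_congr rfl
  intro b _
  exact cat_dist a b

lemma totalD_insert {F : Finset (ℤ × ℤ)} {v : ℤ × ℤ} (hv : v ∉ F) :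
    totalD (insert v F) = totalD F + 2 * ∑ b ∈ F, D v b := by
  unfold totalD
  rw [Finset.sum_insert hv, Finset.sum_insert hv]
  have h1 : ∀ a ∈ F, ∑ b ∈ insert v F, D a b = D a v + ∑ b ∈ F, D a b := by
    intro a _
    rw [Finset.sum_insert hv]
  rw [Finset.sum_congr rfl h1, Finset.sum_add_distrib, D_self]
  have h2 : ∑ a ∈ F, D a v = ∑ a ∈ F, D v a := Finset.sum_congr rfl (fun a _ => D_symm a v)
  omega

lemma catVerts_insert {d s : ℤ} (hs1 : -d ≤ s) (hs2 : s ≤ d) (base : ℤ → ℕ) :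
    catVerts d (fun i => base i + if i = s then 1 else 0) =
      insert ((base s : ℤ) + 1, s) (catVerts d base) := by
  ext p
  rw [Finset.mem_insert, mem_catVerts, mem_catVerts, Prod.ext_iff]
  by_cases h : p.2 = s
  · simp only [h, if_pos rfl]
    push_cast
    constructor
    · rintro ⟨h1, h2, h3⟩
      by_cases h4 : p.1 = (base s : ℤ) + 1
      · exact Or.inl ⟨h4, by simp⟩
      · exact Or.inr ⟨h1, h2, by omega⟩
    · rintro (⟨h1, -⟩ | ⟨h1, h2, h3⟩)
      · refine ⟨⟨by omega, by omega⟩, by omega, by omega⟩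
      · exact ⟨h1, h2, by omega⟩
  · rw [if_neg h]
    simp only [Nat.add_zero]
    constructor
    · intro h1; exact Or.inr h1
    · rintro (⟨-, h2⟩ | h1)
      · exact absurd h2 h
      · exact h1

lemma newv_not_mem {d s : ℤ} (base : ℤ → ℕ) :
    ((base s : ℤ) + 1, s) ∉ catVerts d base := by
  rw [mem_catVerts]
  push_neg
  intro _ _
  simp only
  omega

/-- Sum of a function of the column over all caterpillar vertices. -/
lemma sum_catVerts (d : ℤ) (L : ℤ → ℕ) (g : ℤ → ℤ) :
    ∑ b ∈ catVerts d L, g b.2 = ∑ i ∈ Finset.Icc (-d) d, ((L i : ℤ) + 1) * g i := by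
  unfold catVerts
  rw [Finset.sum_biUnion]
  · apply Finset.sum_congr rfl
    intro i _
    rw [Finset.sum_image (by intro x _ y _ h; exact (Prod.mk.injEq ..).mp h |>.1)]
    have hc : ∀ x ∈ Finset.Icc (0:ℤ) (L i : ℤ), g ((x, i) : ℤ × ℤ).2 = g i := fun _ _ => rfl
    rw [Finset.sum_congr rfl hc, Finset.sum_const, Int.card_Icc]
    have : ((L i : ℤ) + 1 - 0).toNat = L i + 1 := by omega
    rw [this]
    clear hc
    ring
  · intro i _ j _ hij
    apply Finset.disjoint_left.mpr
    intro p hp hq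
    simp only [Finset.mem_image] at hp hq
    obtain ⟨x, -, rfl⟩ := hp
    obtain ⟨y, -, hy⟩ := hq
    exact hij ((Prod.mk.injEq ..).mp hy).2.symm

lemma sum_Icc_left (f : ℤ → ℤ) {a b : ℤ} (h : a ≤ b) :
    ∑ i ∈ Finset.Icc a b, f i = f a + ∑ i ∈ Finset.Icc (a+1) b, f i := by
  have h1 : Finset.Icc a b = insert a (Finset.Icc (a+1) b) := by
    ext j; simp only [Finset.mem_Icc, Finset.mem_insert]; omega
  rw [h1, Finset.sum_insert (by simp only [Finset.mem_Icc]; omega)]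

lemma sum_Icc_right (f : ℤ → ℤ) {a b : ℤ} (h : a ≤ b) :
    ∑ i ∈ Finset.Icc a b, f i = (∑ i ∈ Finset.Icc a (b-1), f i) + f b := by
  have h1 : Finset.Icc a b = insert b (Finset.Icc a (b-1)) := by
    ext j; simp only [Finset.mem_Icc, Finset.mem_insert]; omega
  rw [h1, Finset.sum_insert (by simp only [Finset.mem_Icc]; omega)]
  ring

lemma sum_abs_shift (m s : ℤ) :
    ∑ i ∈ Finset.Icc (-m) m, |s - i| = ∑ i ∈ Finset.Icc (-m - s) (m - s), |i| := by
  have h1 : Finset.Icc (-m - s) (m - s) =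
      (Finset.Icc (-m) m).map (addRightEmbedding (-s)) := by
    rw [Finset.map_add_right_Icc]
    congr 1 <;> ring
  rw [h1, Finset.sum_map]
  apply Finset.sum_congr rfl
  intro i _
  have : addRightEmbedding (-s) i = i - s := by
    simp [addRightEmbedding]; ring
  rw [this, abs_sub_comm]

lemma core1 (m : ℤ) (hm : 1 ≤ m) :
    ∑ i ∈ Finset.Icc (-m) m, |1 - i| = (∑ i ∈ Finset.Icc (-m) m, |i|) + 1 := by
  rw [sum_abs_shift m 1, sum_Icc_left (fun i => |i|) (by omega : -m - 1 ≤ m - 1),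
    sum_Icc_right (fun i => |i|) (by omega : -m ≤ m)]
  have h2 : (-m - 1) + 1 = -m := by ring
  rw [h2, abs_of_nonpos (by omega : -m - 1 ≤ 0), abs_of_nonneg (by omega : (0:ℤ) ≤ m)]
  ring

lemma core2 (m : ℤ) (hm : 1 ≤ m) :
    ∑ i ∈ Finset.Icc (-m) m, |2 - i| = (∑ i ∈ Finset.Icc (-m) m, |i|) + 4 := by
  rw [sum_abs_shift m 2, sum_Icc_left (fun i => |i|) (by omega : -m - 2 ≤ m - 2),
    sum_Icc_left (fun i => |i|) (by omega : -m - 2 + 1 ≤ m - 2),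
    sum_Icc_right (fun i => |i|) (by omega : -m ≤ m),
    sum_Icc_right (fun i => |i|) (by omega : -m ≤ m - 1)]
  have h2 : (-m - 2) + 1 + 1 = -m := by ring
  have h3 : m - 1 - 1 = m - 2 := by ring
  rw [h2, h3, abs_of_nonpos (by omega : -m - 2 ≤ 0), abs_of_nonpos (by omega : -m - 2 + 1 ≤ 0),
    abs_of_nonneg (by omega : (0:ℤ) ≤ m), abs_of_nonneg (by omega : (0:ℤ) ≤ m - 1)]
  ring

lemma core3 (m : ℤ) (hm : 1 ≤ m) :
    ∑ i ∈ Finset.Icc (-m) m, |-1 - i| = (∑ i ∈ Finset.Icc (-m) m, |i|) + 1 := by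
  rw [sum_abs_shift m (-1), sum_Icc_right (fun i => |i|) (by omega : -m - (-1) ≤ m - (-1)),
    sum_Icc_left (fun i => |i|) (by omega : -m ≤ m)]
  have h2 : m - (-1) - 1 = m := by ring
  have h3 : -m - (-1) = -m + 1 := by ring
  rw [h2, h3, abs_of_nonneg (by omega : (0:ℤ) ≤ m - (-1)), abs_of_nonpos (by omega : -m ≤ 0)]
  ring


lemma A_eval (d : ℤ) (base : ℤ → ℕ) (s : ℤ) :
    ((∑ b ∈ catVerts d base, D ((base s : ℤ) + 1, s) b : ℕ) : ℤ)
      = (∑ b ∈ catVerts d base, |s - b.2|)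
        + ∑ b ∈ catVerts d base, (1 + if b.1 = 0 then 0 else (1:ℤ)) := by
  have hpt : ∀ b ∈ catVerts d base,
      D ((base s : ℤ) + 1, s) b = (s - b.2).natAbs + (1 + if b.1 = 0 then 0 else 1) := by
    intro b hb
    have hne : ((base s : ℤ) + 1, s) ≠ b := by
      intro h
      exact newv_not_mem base (h ▸ hb)
    rw [D, if_neg hne]
    have h2 : ¬((base s : ℤ) + 1 = 0) := by positivity
    rw [if_neg h2]
    omega
  rw [Finset.sum_congr rfl hpt]
  push_cast [Int.natCast_natAbs]
  rw [Finset.sum_add_distrib]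

lemma SB_eval (n d x K s : ℤ) (hd : 4 ≤ d) (hK0 : 2 ≤ K) (hKd : K ≤ d - 1)
    (hKc : (n - 2 - 2*d - 4)/2 = K) (hx1 : 1 ≤ x) (hx2 : x ≤ d - 2) :
    ∑ b ∈ catVerts d (fun i => B1L (n-2) d x i + (if i = d then 1 else 0)), |s - b.2|
      = (|s - (-d-1+x)| + |s - (d+1-x)|) + (∑ i ∈ Finset.Icc (-K) K, |s - i|)
        + |s - d| + ∑ i ∈ Finset.Icc (-d) d, |s - i| := by
  rw [sum_catVerts d _ (fun i => |s - i|)]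
  have hpt : ∀ i ∈ Finset.Icc (-d) d,
      (((B1L (n-2) d x i + (if i = d then 1 else 0) : ℕ) : ℤ) + 1) * |s - i|
        = ((if i = -d-1+x then |s-i| else 0) + (if i = d+1-x then |s-i| else 0))
          + (if |i| ≤ K then |s-i| else 0) + (if i = d then |s-i| else 0) + |s-i| := by
    intro i _
    simp only [B1L]
    rw [hKc]
    push_cast
    have hor : (if i = -d-1+x ∨ i = d+1-x then (1:ℤ) else 0)
        = (if i = -d-1+x then 1 else 0) + (if i = d+1-x then 1 else 0) := by
      by_cases h1 : i = -d-1+x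
      · rw [if_pos (Or.inl h1), if_pos h1, if_neg (by omega : ¬ i = d+1-x)]; ring
      · by_cases h2 : i = d+1-x
        · rw [if_pos (Or.inr h2), if_neg h1, if_pos h2]; ring
        · rw [if_neg (by tauto), if_neg h1, if_neg h2]; ring
    rw [hor]
    split_ifs <;> ring
  rw [Finset.sum_congr rfl hpt]
  rw [Finset.sum_add_distrib, Finset.sum_add_distrib, Finset.sum_add_distrib,
    Finset.sum_add_distrib]
  congr 1
  · congr 1
    · congr 1
      · congr 1
        · rw [Finset.sum_ite_eq' (Finset.Icc (-d) d) (-d-1+x) (fun i => |s - i|),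
            if_pos (by rw [Finset.mem_Icc]; omega)]
        · rw [Finset.sum_ite_eq' (Finset.Icc (-d) d) (d+1-x) (fun i => |s - i|),
            if_pos (by rw [Finset.mem_Icc]; omega)]
      · rw [← Finset.sum_filter]
        congr 1
        ext j
        simp only [Finset.mem_filter, Finset.mem_Icc, abs_le]
        omega
    · rw [Finset.sum_ite_eq' (Finset.Icc (-d) d) d (fun i => |s - i|),
        if_pos (by rw [Finset.mem_Icc]; omega)]

lemma zero_abs_sum (m : ℤ) :
    ∑ i ∈ Finset.Icc (-m) m, |(0:ℤ) - i| = ∑ i ∈ Finset.Icc (-m) m, |i| := by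
  apply Finset.sum_congr rfl
  intro i _
  rw [zero_sub, abs_neg]

end MyAux

open MyAux

/-- `W(G₁(n,d,x,1)) = W(G₁(n,d,x,0)) + 1`,
`W(G₁(n,d,x,2)) = W(G₁(n,d,x,0)) + 6` and `W(G₁(n,d,x,−1)) = W(G₁(n,d,x,0)) + 3`. -/
theorem wiener_G1_steps (n d x : ℤ) (hne : Even n) (hn : 20 ≤ n)
    (hd1 : n - 4 ≤ 4 * d) (hd2 : 2 * d ≤ n - 10)
    (hx1 : 1 ≤ x) (hx2 : 2 * x ≤ 4 + 4 * d - (n - 2)) :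
    wiener (G1 n d x 1) = wiener (G1 n d x 0) + 1 ∧
    wiener (G1 n d x 2) = wiener (G1 n d x 0) + 6 ∧
    wiener (G1 n d x (-1)) = wiener (G1 n d x 0) + 3 := by
  obtain ⟨t, ht⟩ := hne
  set K : ℤ := (n - 2 - 2*d - 4)/2 with hKdef
  have hKc : (n - 2 - 2*d - 4)/2 = K := rfl
  have hK2 : 2*K = n - 2*d - 6 := by omega
  have hd4 : 4 ≤ d := by omega
  have hK0 : 2 ≤ K := by omega
  have hKd : K ≤ d - 1 := by omega
  have hx2' : x ≤ d - 2 := by omega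
  set base : ℤ → ℕ := fun i => B1L (n-2) d x i + (if i = d then 1 else 0) with hbase
  set F : Finset (ℤ × ℤ) := catVerts d base with hF
  set A : ℤ → ℕ := fun s => ∑ b ∈ F, D ((base s : ℤ) + 1, s) b with hA
  have hstep : ∀ s : ℤ, -d ≤ s → s ≤ d →
      wiener (G1 n d x s) = totalD F / 2 + A s := by
    intro s hs1 hs2
    have hfun : (fun i => B1L (n-2) d x i + (if i = s then 1 else 0) + (if i = d then 1 else 0))
        = (fun i => base i + if i = s then 1 else 0) := by
      funext i
      simp only [hbase]
      omega
    rw [G1, hfun, wiener_caterpillar, catVerts_insert hs1 hs2 base,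
      totalD_insert (newv_not_mem base)]
    rw [← hF]
    simp only [hA]
    omega
  set Cc : ℤ := ∑ b ∈ F, (1 + if b.1 = 0 then 0 else (1:ℤ)) with hCc
  have hE : ∀ s : ℤ, ((A s : ℕ) : ℤ)
      = ((|s - (-d-1+x)| + |s - (d+1-x)|) + (∑ i ∈ Finset.Icc (-K) K, |s - i|)
        + |s - d| + ∑ i ∈ Finset.Icc (-d) d, |s - i|) + Cc := by
    intro s
    rw [hA]
    simp only
    rw [A_eval d base s, ← hCc, ← hF]
    congr 1
    rw [hF, hbase]
    exact SB_eval n d x K s hd4 hK0 hKd hKc hx1 hx2'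
  have habs : ∀ z : ℤ, |z| = (z.natAbs : ℤ) := fun z => Int.abs_eq_natAbs z
  have h1 : A 1 = A 0 + 1 := by
    have := hE 1
    have h0 := hE 0
    rw [core1 K (by omega), core1 d (by omega)] at this
    rw [zero_abs_sum K, zero_abs_sum d] at h0
    rw [habs (1 - (-d-1+x)), habs (1 - (d+1-x)), habs (1 - d)] at this
    rw [habs (0 - (-d-1+x)), habs (0 - (d+1-x)), habs (0 - d)] at h0
    omega
  have h2 : A 2 = A 0 + 6 := by
    have := hE 2
    have h0 := hE 0
    rw [core2 K (by omega), core2 d (by omega)] at this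
    rw [zero_abs_sum K, zero_abs_sum d] at h0
    rw [habs (2 - (-d-1+x)), habs (2 - (d+1-x)), habs (2 - d)] at this
    rw [habs (0 - (-d-1+x)), habs (0 - (d+1-x)), habs (0 - d)] at h0
    omega
  have h3 : A (-1) = A 0 + 3 := by
    have := hE (-1)
    have h0 := hE 0
    rw [core3 K (by omega), core3 d (by omega)] at this
    rw [habs (-1 - (-d-1+x)), habs (-1 - (d+1-x)), habs (-1 - d)] at this
    rw [zero_abs_sum K, zero_abs_sum d] at h0
    rw [habs (0 - (-d-1+x)), habs (0 - (d+1-x)), habs (0 - d)] at h0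
    omega
  have w1 := hstep 1 (by omega) (by omega)
  have w2 := hstep 2 (by omega) (by omega)
  have w3 := hstep (-1) (by omega) (by omega)
  have w0 := hstep 0 (by omega) (by omega)
  refine ⟨?_, ?_, ?_⟩ <;> rw [w0] <;> [rw [w1]; rw [w2]; rw [w3]] <;> omega
end

section
/- For integers n (even), d, x with x ≥ 2 and s ∈ {−1,0,1,2} such that G₁(n,d,x,s) is defined: W(G₁(n,d,x−1,s)) − W(G₁(n,d,x,s)) = 2n − 4x, and this difference is divisible by 4. -/
/-- candidate distance function on raw pairs -/
def Fd (p q : ℤ × ℤ) : ℕ :=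
  if p = q then 0
  else (p.2 - q.2).natAbs + (if p.1 = 0 then 0 else 1) + (if q.1 = 0 then 0 else 1)

lemma Fd_self (p : ℤ × ℤ) : Fd p p = 0 := by simp [Fd]

lemma Fd_comm (p q : ℤ × ℤ) : Fd p q = Fd q p := by
  unfold Fd
  by_cases h : p = q
  · simp [h]
  · rw [if_neg h, if_neg (Ne.symm h)]
    omega

variable {d : ℤ} {L : ℤ → ℕ}

lemma mem_catVerts {p : ℤ × ℤ} :
    p ∈ catVerts d L ↔ -d ≤ p.2 ∧ p.2 ≤ d ∧ 0 ≤ p.1 ∧ p.1 ≤ (L p.2 : ℤ) := by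
  simp only [catVerts, Finset.mem_biUnion, Finset.mem_image, Finset.mem_Icc]
  constructor
  · rintro ⟨i, ⟨h1, h2⟩, j, ⟨h3, h4⟩, rfl⟩; exact ⟨h1, h2, h3, h4⟩
  · rintro ⟨h1, h2, h3, h4⟩; exact ⟨p.2, ⟨h1, h2⟩, p.1, ⟨h3, h4⟩, rfl⟩

lemma spine_mem {i : ℤ} (h1 : -d ≤ i) (h2 : i ≤ d) : ((0:ℤ), i) ∈ catVerts d L :=
  mem_catVerts.mpr ⟨h1, h2, le_refl _, by positivity⟩

lemma cat_adj {u w : ↥(catVerts d L)} :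
    (caterpillar d L).Adj u w ↔ (u:ℤ×ℤ) ≠ w ∧
      (((u:ℤ×ℤ).1 = 0 ∧ (w:ℤ×ℤ).1 = 0 ∧ (u:ℤ×ℤ).2 + 1 = (w:ℤ×ℤ).2) ∨
       ((w:ℤ×ℤ).1 = 0 ∧ (u:ℤ×ℤ).1 = 0 ∧ (w:ℤ×ℤ).2 + 1 = (u:ℤ×ℤ).2) ∨
       ((u:ℤ×ℤ).2 = (w:ℤ×ℤ).2 ∧ ((u:ℤ×ℤ).1 = 0 ∧ (w:ℤ×ℤ).1 ≠ 0 ∨ (w:ℤ×ℤ).1 = 0 ∧ (u:ℤ×ℤ).1 ≠ 0))) := by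
  rw [caterpillar, SimpleGraph.fromRel_adj]
  constructor
  · rintro ⟨hne, h⟩
    refine ⟨fun e => hne (Subtype.ext e), ?_⟩
    tauto
  · rintro ⟨hne, h⟩
    refine ⟨fun e => hne (congrArg _ e), ?_⟩
    tauto

lemma Fd_step {u w : ↥(catVerts d L)} (h : (caterpillar d L).Adj u w) (q : ℤ × ℤ) :
    Fd (u:ℤ×ℤ) q ≤ 1 + Fd (w:ℤ×ℤ) q := by
  rw [cat_adj] at h
  obtain ⟨hne, hr⟩ := h
  obtain ⟨⟨ju, iu⟩, hu⟩ := u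
  obtain ⟨⟨jw, iw⟩, hw⟩ := w
  obtain ⟨jq, iq⟩ := q
  simp only [Fd, Prod.mk.injEq, ne_eq] at hne hr ⊢
  rcases hr with ⟨h1,h2,h3⟩ | ⟨h1,h2,h3⟩ | ⟨h1, ⟨h2,h3⟩|⟨h2,h3⟩⟩ <;>
    split_ifs <;> omega

lemma Fd_le_length {u v : ↥(catVerts d L)} (w : (caterpillar d L).Walk u v) :
    Fd (u:ℤ×ℤ) (v:ℤ×ℤ) ≤ w.length := by
  induction w with
  | nil => simp [Fd]
  | @cons a b c h p ih =>
      rw [SimpleGraph.Walk.length_cons]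
      have := Fd_step h (c:ℤ×ℤ)
      omega


lemma spine_walk_up (k : ℕ) : ∀ (i : ℤ) (h1 : -d ≤ i) (h2 : i + k ≤ d),
    ∃ w : (caterpillar d L).Walk ⟨((0:ℤ), i), spine_mem h1 (by omega)⟩
      ⟨((0:ℤ), i + k), spine_mem (by omega) h2⟩, w.length = k := by
  induction k with
  | zero =>
      intro i h1 h2
      refine ⟨SimpleGraph.Walk.nil.copy rfl (Subtype.ext (by simp)), ?_⟩
      simp
  | succ k ih =>
      intro i h1 h2
      have hk : (k.succ : ℤ) = k + 1 := by push_cast; ring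
      have hadj : (caterpillar d L).Adj ⟨((0:ℤ), i), spine_mem h1 (by omega)⟩
          ⟨((0:ℤ), i+1), spine_mem (by omega) (by omega)⟩ := by
        rw [cat_adj]
        constructor
        · intro hcon
          rw [Prod.mk.injEq] at hcon
          omega
        · left; exact ⟨rfl, rfl, rfl⟩
      obtain ⟨w', hw'⟩ := ih (i+1) (by omega) (by omega)
      refine ⟨(SimpleGraph.Walk.cons hadj w').copy rfl
        (Subtype.ext (show ((0:ℤ), i+1+(k:ℤ)) = ((0:ℤ), i + ((k+1:ℕ):ℤ)) by
          rw [Prod.mk.injEq]; constructor; rfl; push_cast; ring)), ?_⟩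
      simp [hw']

lemma spine_walk (i i' : ℤ) (h1 : -d ≤ i) (h2 : i ≤ d) (h3 : -d ≤ i') (h4 : i' ≤ d) :
    ∃ w : (caterpillar d L).Walk ⟨((0:ℤ), i), spine_mem h1 h2⟩
      ⟨((0:ℤ), i'), spine_mem h3 h4⟩, w.length = (i - i').natAbs := by
  rcases le_total i i' with h | h
  · obtain ⟨w, hw⟩ := spine_walk_up (L := L) (i' - i).toNat i h1 (by omega)
    have he : i + ((i' - i).toNat : ℤ) = i' := by omega
    refine ⟨w.copy rfl (Subtype.ext (show ((0:ℤ), i + ((i'-i).toNat:ℤ)) = ((0:ℤ), i') by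
      rw [Prod.mk.injEq]; exact ⟨rfl, he⟩)), ?_⟩
    rw [SimpleGraph.Walk.length_copy, hw]; omega
  · obtain ⟨w, hw⟩ := spine_walk_up (L := L) (i - i').toNat i' h3 (by omega)
    have he : i' + ((i - i').toNat : ℤ) = i := by omega
    refine ⟨(w.copy rfl (Subtype.ext (show ((0:ℤ), i' + ((i-i').toNat:ℤ)) = ((0:ℤ), i) by
      rw [Prod.mk.injEq]; exact ⟨rfl, he⟩))).reverse, ?_⟩
    rw [SimpleGraph.Walk.length_reverse, SimpleGraph.Walk.length_copy, hw]; omega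

lemma walk_to_spine (u : ↥(catVerts d L)) :
    ∃ w : (caterpillar d L).Walk u ⟨((0:ℤ), (u:ℤ×ℤ).2),
        spine_mem (mem_catVerts.mp u.2).1 (mem_catVerts.mp u.2).2.1⟩,
      w.length = (if (u:ℤ×ℤ).1 = 0 then 0 else 1) := by
  by_cases h : (u:ℤ×ℤ).1 = 0
  · refine ⟨SimpleGraph.Walk.nil.copy (Subtype.ext ?_) rfl, by simp [h]⟩
    exact Prod.ext_iff.mpr ⟨h.symm, rfl⟩
  · have hadj : (caterpillar d L).Adj u ⟨((0:ℤ), (u:ℤ×ℤ).2),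
        spine_mem (mem_catVerts.mp u.2).1 (mem_catVerts.mp u.2).2.1⟩ := by
      rw [cat_adj]
      constructor
      · intro hcon; rw [Prod.ext_iff] at hcon; exact h hcon.1
      · right; right; exact ⟨rfl, Or.inr ⟨rfl, h⟩⟩
    exact ⟨SimpleGraph.Walk.cons hadj SimpleGraph.Walk.nil, by simp [h]⟩

lemma cat_dist (u v : ↥(catVerts d L)) :
    (caterpillar d L).dist u v = Fd (u:ℤ×ℤ) (v:ℤ×ℤ) := by
  obtain ⟨w1, hw1⟩ := walk_to_spine u
  obtain ⟨w3, hw3⟩ := walk_to_spine v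
  obtain ⟨w2, hw2⟩ := spine_walk (L := L) (u:ℤ×ℤ).2 (v:ℤ×ℤ).2
    (mem_catVerts.mp u.2).1 (mem_catVerts.mp u.2).2.1
    (mem_catVerts.mp v.2).1 (mem_catVerts.mp v.2).2.1
  set wt := w1.append (w2.append w3.reverse) with hwt
  have hlen : wt.length = (if (u:ℤ×ℤ).1 = 0 then 0 else 1) + ((u:ℤ×ℤ).2 - (v:ℤ×ℤ).2).natAbs
      + (if (v:ℤ×ℤ).1 = 0 then 0 else 1) := by
    simp [hwt, SimpleGraph.Walk.length_append, SimpleGraph.Walk.length_reverse, hw1, hw2, hw3]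
    ring
  apply le_antisymm
  · by_cases h : u = v
    · subst h; rw [SimpleGraph.dist_self, Fd_self]
    · have hup := SimpleGraph.dist_le wt
      rw [hlen] at hup
      have hne : (u:ℤ×ℤ) ≠ (v:ℤ×ℤ) := fun e => h (Subtype.ext e)
      rw [Fd, if_neg hne]
      omega
  · obtain ⟨p, hp⟩ := (wt.reachable).exists_walk_length_eq_dist
    rw [← hp]
    exact Fd_le_length p

/-! ### generic sum helpers -/

lemma sum_pt {I : Finset ℤ} {c : ℤ} (h : c ∈ I) (f : ℤ → ℤ) :
    ∑ i ∈ I, (if i = c then f i else 0) = f c := by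
  rw [Finset.sum_ite_eq' I c f, if_pos h]

lemma sum_delta_s12 {I : Finset ℤ} {c1 c2 c3 c4 : ℤ}
    (h1 : c1 ∈ I) (h2 : c2 ∈ I) (h3 : c3 ∈ I) (h4 : c4 ∈ I) (f : ℤ → ℤ) :
    ∑ i ∈ I, ((if i = c1 then (1:ℤ) else 0) + (if i = c2 then 1 else 0)
      - (if i = c3 then 1 else 0) - (if i = c4 then 1 else 0)) * f i
    = f c1 + f c2 - f c3 - f c4 := by
  have hp : ∀ i, ((if i = c1 then (1:ℤ) else 0) + (if i = c2 then 1 else 0)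
      - (if i = c3 then 1 else 0) - (if i = c4 then 1 else 0)) * f i
      = (if i = c1 then f i else 0) + (if i = c2 then f i else 0)
        - ((if i = c3 then f i else 0) + (if i = c4 then f i else 0)) := by
    intro i; split_ifs <;> ring
  rw [Finset.sum_congr rfl fun i _ => hp i, Finset.sum_sub_distrib,
    Finset.sum_add_distrib, Finset.sum_add_distrib,
    sum_pt h1 f, sum_pt h2 f, sum_pt h3 f, sum_pt h4 f]
  ring

lemma sum_one {a b : ℤ} (h : a ≤ b) : (∑ _i ∈ Finset.Icc a b, (1:ℤ)) = b - a + 1 := by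
  rw [Finset.sum_const, Int.card_Icc, nsmul_eq_mul, mul_one, Int.toNat_of_nonneg (by omega)]
  ring

lemma sum_window {a b v w : ℤ} (h1 : a ≤ v) (h2 : w ≤ b) (h3 : v ≤ w) :
    (∑ i ∈ Finset.Icc a b, if v ≤ i ∧ i ≤ w then (1:ℤ) else 0) = w - v + 1 := by
  rw [← Finset.sum_filter]
  have he : (Finset.Icc a b).filter (fun i => v ≤ i ∧ i ≤ w) = Finset.Icc v w := by
    ext i; simp only [Finset.mem_filter, Finset.mem_Icc]; omega
  rw [he]; exact sum_one h3

lemma sum_mul_window {a b v w : ℤ} (h1 : a ≤ v) (h2 : w ≤ b) (f : ℤ → ℤ) :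
    ∑ i ∈ Finset.Icc a b, f i * (if v ≤ i ∧ i ≤ w then (2:ℤ) else 0)
    = 2 * ∑ i ∈ Finset.Icc v w, f i := by
  have hp : ∀ i, f i * (if v ≤ i ∧ i ≤ w then (2:ℤ) else 0)
      = if v ≤ i ∧ i ≤ w then f i * 2 else 0 := by intro i; split_ifs <;> ring
  rw [Finset.sum_congr rfl fun i _ => hp i, ← Finset.sum_filter]
  have he : (Finset.Icc a b).filter (fun i => v ≤ i ∧ i ≤ w) = Finset.Icc v w := by
    ext i; simp only [Finset.mem_filter, Finset.mem_Icc]; omega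
  rw [he, ← Finset.sum_mul]; ring

/-! ### the wiener index of a caterpillar -/

lemma sum_e (ℓ : ℕ) : (∑ j ∈ Finset.Icc (0:ℤ) (ℓ:ℤ), if j = 0 then (0:ℤ) else 1) = ℓ := by
  have hp : ∀ j : ℤ, (if j = 0 then (0:ℤ) else 1) = 1 - (if j = 0 then 1 else 0) := by
    intro j; split_ifs <;> ring
  rw [Finset.sum_congr rfl fun j _ => hp j, Finset.sum_sub_distrib, sum_one (by positivity),
    sum_pt (by simp [Finset.mem_Icc]) (fun _ => (1:ℤ))]
  ring

lemma card_e (ℓ : ℕ) : (∑ _j ∈ Finset.Icc (0:ℤ) (ℓ:ℤ), (1:ℤ)) = (ℓ:ℤ) + 1 :=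
  (sum_one (by positivity)).trans (by ring)

lemma inner_Fd {L : ℤ → ℕ} (i i' : ℤ) :
    ∑ j ∈ Finset.Icc (0:ℤ) (L i : ℤ), ∑ j' ∈ Finset.Icc (0:ℤ) (L i' : ℤ), (Fd (j,i) (j',i') : ℤ)
    = ((L i : ℤ)+1) * ((L i' : ℤ)+1) * (((i - i').natAbs : ℤ))
      + (L i : ℤ) * ((L i' : ℤ)+1) + ((L i : ℤ)+1) * (L i' : ℤ)
      - (if i = i' then 2*(L i : ℤ) else 0) := by
  by_cases h : i = i'
  · subst h
    rw [if_pos rfl]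
    have hp : ∀ j j' : ℤ, (Fd (j,i) (j',i) : ℤ)
        = (if j = 0 then (0:ℤ) else 1) + (if j' = 0 then 0 else 1)
          - (if j' = j then (if j = 0 then (0:ℤ) else 1) + (if j = 0 then (0:ℤ) else 1) else 0) := by
      intro j j'
      unfold Fd
      by_cases hjj : j = j'
      · subst hjj; rw [if_pos rfl, if_pos rfl]; simp
      · rw [if_neg (by simp [Prod.ext_iff]; tauto), if_neg (Ne.symm hjj)]
        push_cast; simp only [sub_self, abs_zero]; split_ifs <;> ring
    rw [Finset.sum_congr rfl fun j _ => Finset.sum_congr rfl fun j' _ => hp j j']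
    have hin : ∀ j ∈ Finset.Icc (0:ℤ) (L i : ℤ),
        (∑ j' ∈ Finset.Icc (0:ℤ) (L i : ℤ),
          ((if j = 0 then (0:ℤ) else 1) + (if j' = 0 then 0 else 1)
          - (if j' = j then (if j = 0 then (0:ℤ) else 1) + (if j = 0 then (0:ℤ) else 1) else 0)))
        = ((L i : ℤ) - 1) * (if j = 0 then (0:ℤ) else 1) + (L i : ℤ) := by
      intro j hj
      rw [Finset.sum_sub_distrib, Finset.sum_add_distrib, Finset.sum_const, sum_e,
        sum_pt hj (fun _ => (if j = 0 then (0:ℤ) else 1) + (if j = 0 then (0:ℤ) else 1)),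
        Int.card_Icc]
      have hc : ((((L i : ℤ)) + 1 - 0).toNat : ℤ) = (L i : ℤ) + 1 := by omega
      rw [nsmul_eq_mul, hc]
      ring
    rw [Finset.sum_congr rfl hin, Finset.sum_add_distrib, ← Finset.mul_sum, sum_e,
      Finset.sum_const, Int.card_Icc]
    have hc : ((((L i : ℤ)) + 1 - 0).toNat : ℤ) = (L i : ℤ) + 1 := by omega
    rw [nsmul_eq_mul, hc]
    simp only [sub_self, Int.natAbs_zero, Int.cast_zero]
    push_cast
    ring
  · rw [if_neg h]
    have hp : ∀ j j' : ℤ, (Fd (j,i) (j',i') : ℤ)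
        = (((i - i').natAbs : ℤ)) + (if j = 0 then (0:ℤ) else 1) + (if j' = 0 then 0 else 1) := by
      intro j j'
      unfold Fd
      rw [if_neg (by simp [Prod.ext_iff]; tauto)]
      push_cast; split_ifs <;> ring
    rw [Finset.sum_congr rfl fun j _ => Finset.sum_congr rfl fun j' _ => hp j j']
    have hin : ∀ j : ℤ,
        (∑ j' ∈ Finset.Icc (0:ℤ) (L i' : ℤ),
          ((((i - i').natAbs : ℤ)) + (if j = 0 then (0:ℤ) else 1) + (if j' = 0 then 0 else 1)))
        = ((L i' : ℤ) + 1) * (if j = 0 then (0:ℤ) else 1)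
            + (((L i' : ℤ) + 1) * (((i - i').natAbs : ℤ)) + (L i' : ℤ)) := by
      intro j
      rw [Finset.sum_add_distrib, Finset.sum_add_distrib, Finset.sum_const, Finset.sum_const,
        sum_e, Int.card_Icc]
      have hc : ((((L i' : ℤ)) + 1 - 0).toNat : ℤ) = (L i' : ℤ) + 1 := by omega
      rw [nsmul_eq_mul, nsmul_eq_mul, hc]
      ring
    rw [Finset.sum_congr rfl fun j _ => hin j, Finset.sum_add_distrib, ← Finset.mul_sum, sum_e,
      Finset.sum_const, Int.card_Icc]
    have hc : ((((L i : ℤ)) + 1 - 0).toNat : ℤ) = (L i : ℤ) + 1 := by omega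
    rw [nsmul_eq_mul, hc]
    ring

lemma cat_pairwise (d : ℤ) (L : ℤ → ℕ) :
    (↑(Finset.Icc (-d) d) : Set ℤ).PairwiseDisjoint
      (fun i => (Finset.Icc (0:ℤ) (L i : ℤ)).image (fun j => (j, i))) := by
  intro i _ i' _ hne
  simp only [Function.onFun]
  rw [Finset.disjoint_left]
  intro p hp hp'
  simp only [Finset.mem_image] at hp hp'
  obtain ⟨j, _, rfl⟩ := hp
  obtain ⟨j', _, he⟩ := hp'
  exact hne (congrArg Prod.snd he).symm

lemma sum_over_cat (d : ℤ) (L : ℤ → ℕ) (f : ℤ × ℤ → ℤ) :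
    ∑ p ∈ catVerts d L, f p
    = ∑ i ∈ Finset.Icc (-d) d, ∑ j ∈ Finset.Icc (0:ℤ) (L i : ℤ), f (j, i) := by
  rw [catVerts, Finset.sum_biUnion (cat_pairwise d L)]
  refine Finset.sum_congr rfl fun i _ => ?_
  rw [Finset.sum_image]
  intro j _ j' _ he
  exact (Prod.ext_iff.mp he).1

lemma sum_Fd_eq (d : ℤ) (L : ℤ → ℕ) :
    ((∑ p ∈ catVerts d L, ∑ q ∈ catVerts d L, Fd p q : ℕ) : ℤ) =
      (∑ i ∈ Finset.Icc (-d) d, ∑ i' ∈ Finset.Icc (-d) d,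
          ((L i : ℤ)+1) * ((L i' : ℤ)+1) * (((i - i').natAbs : ℤ)))
      + 2 * (∑ i ∈ Finset.Icc (-d) d, (L i : ℤ)) * (∑ i ∈ Finset.Icc (-d) d, ((L i : ℤ)+1))
      - 2 * ∑ i ∈ Finset.Icc (-d) d, (L i : ℤ) := by
  rw [Nat.cast_sum, Finset.sum_congr rfl (fun p (_ : p ∈ catVerts d L) =>
    Nat.cast_sum (catVerts d L) (fun q => Fd p q))]
  rw [sum_over_cat d L (fun p => ∑ q ∈ catVerts d L, (Fd p q : ℤ))]
  have h1 : ∀ i ∈ Finset.Icc (-d) d, ∀ j ∈ Finset.Icc (0:ℤ) (L i : ℤ),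
      (∑ q ∈ catVerts d L, (Fd (j, i) q : ℤ))
      = ∑ i' ∈ Finset.Icc (-d) d, ∑ j' ∈ Finset.Icc (0:ℤ) (L i' : ℤ), (Fd (j, i) (j', i') : ℤ) :=
    fun i _ j _ => sum_over_cat d L (fun q => (Fd (j, i) q : ℤ))
  rw [Finset.sum_congr rfl fun i hi => Finset.sum_congr rfl fun j hj => h1 i hi j hj]
  have h2 : ∀ i ∈ Finset.Icc (-d) d,
      (∑ j ∈ Finset.Icc (0:ℤ) (L i : ℤ), ∑ i' ∈ Finset.Icc (-d) d,
        ∑ j' ∈ Finset.Icc (0:ℤ) (L i' : ℤ), (Fd (j, i) (j', i') : ℤ))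
      = ∑ i' ∈ Finset.Icc (-d) d,
          (((L i : ℤ)+1) * ((L i' : ℤ)+1) * (((i - i').natAbs : ℤ))
            + ((L i : ℤ) * ((L i' : ℤ)+1) + ((L i : ℤ)+1) * (L i' : ℤ)
            - (if i = i' then 2*(L i : ℤ) else 0))) := by
    intro i _
    rw [Finset.sum_comm]
    refine Finset.sum_congr rfl fun i' _ => (inner_Fd i i').trans (by ring)
  rw [Finset.sum_congr rfl h2]
  have h3 : ∀ i ∈ Finset.Icc (-d) d,
      (∑ i' ∈ Finset.Icc (-d) d,
          (((L i : ℤ)+1) * ((L i' : ℤ)+1) * (((i - i').natAbs : ℤ))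
            + ((L i : ℤ) * ((L i' : ℤ)+1) + ((L i : ℤ)+1) * (L i' : ℤ)
            - (if i = i' then 2*(L i : ℤ) else 0))))
      = (∑ i' ∈ Finset.Icc (-d) d,
            ((L i : ℤ)+1) * ((L i' : ℤ)+1) * (((i - i').natAbs : ℤ)))
        + ((∑ i' ∈ Finset.Icc (-d) d, (L i : ℤ) * ((L i' : ℤ)+1))
        + (∑ i' ∈ Finset.Icc (-d) d, ((L i : ℤ)+1) * (L i' : ℤ))
        - 2*(L i : ℤ)) := by
    intro i hi
    rw [Finset.sum_add_distrib, Finset.sum_sub_distrib, Finset.sum_add_distrib,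
      Finset.sum_ite_eq (Finset.Icc (-d) d) i (fun _ => 2*(L i : ℤ)), if_pos hi]
  rw [Finset.sum_congr rfl h3, Finset.sum_add_distrib, Finset.sum_sub_distrib,
    Finset.sum_add_distrib]
  have hc1 : (∑ i ∈ Finset.Icc (-d) d, ∑ i' ∈ Finset.Icc (-d) d, (L i : ℤ) * ((L i' : ℤ)+1))
      = (∑ i ∈ Finset.Icc (-d) d, (L i : ℤ)) * (∑ i ∈ Finset.Icc (-d) d, ((L i : ℤ)+1)) :=
    (Finset.sum_mul_sum _ _ _ _).symm
  have hc2 : (∑ i ∈ Finset.Icc (-d) d, ∑ i' ∈ Finset.Icc (-d) d, ((L i : ℤ)+1) * (L i' : ℤ))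
      = (∑ i ∈ Finset.Icc (-d) d, ((L i : ℤ)+1)) * (∑ i ∈ Finset.Icc (-d) d, (L i : ℤ)) :=
    (Finset.sum_mul_sum _ _ _ _).symm
  rw [hc1, hc2, ← Finset.mul_sum]
  ring

lemma sum_dist_eq (d : ℤ) (L : ℤ → ℕ) :
    (∑ u : ↥(catVerts d L), ∑ v : ↥(catVerts d L), (caterpillar d L).dist u v)
    = ∑ p ∈ catVerts d L, ∑ q ∈ catVerts d L, Fd p q := by
  have h1 : ∀ u : ↥(catVerts d L), (∑ v : ↥(catVerts d L), (caterpillar d L).dist u v)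
      = ∑ q ∈ catVerts d L, Fd (u:ℤ×ℤ) q := by
    intro u
    rw [← Finset.sum_coe_sort (catVerts d L) (fun q => Fd (u:ℤ×ℤ) q)]
    exact Finset.sum_congr rfl fun v _ => cat_dist u v
  rw [Finset.sum_congr rfl (fun u _ => h1 u)]
  exact Finset.sum_coe_sort (catVerts d L) (fun p => ∑ q ∈ catVerts d L, Fd p q)

lemma wiener_cat (d : ℤ) (L : ℤ → ℕ) :
    2 * (wiener (caterpillar d L) : ℤ) =
      (∑ i ∈ Finset.Icc (-d) d, ∑ i' ∈ Finset.Icc (-d) d,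
          ((L i : ℤ)+1) * ((L i' : ℤ)+1) * (((i - i').natAbs : ℤ)))
      + 2 * (∑ i ∈ Finset.Icc (-d) d, (L i : ℤ)) * (∑ i ∈ Finset.Icc (-d) d, ((L i : ℤ)+1))
      - 2 * ∑ i ∈ Finset.Icc (-d) d, (L i : ℤ) := by
  set I := Finset.Icc (-d) d with hI
  set T : ℕ := ∑ p ∈ catVerts d L, ∑ q ∈ catVerts d L, Fd p q with hT
  -- the P term is even
  have hz : (∑ i ∈ I, ∑ i' ∈ I, ((L i : ℤ)+1) * ((L i' : ℤ)+1) * (i - i')) = 0 := by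
    have hp : ∀ i ∈ I, (∑ i' ∈ I, ((L i : ℤ)+1) * ((L i' : ℤ)+1) * (i - i'))
        = ∑ i' ∈ I, ((((L i : ℤ)+1) * i) * ((L i' : ℤ)+1) - ((L i : ℤ)+1) * (((L i' : ℤ)+1) * i')) := by
      intro i _
      exact Finset.sum_congr rfl fun i' _ => by ring
    rw [Finset.sum_congr rfl hp]
    rw [Finset.sum_congr rfl (fun i (_ : i ∈ I) => Finset.sum_sub_distrib (s := I) _ _),
      Finset.sum_sub_distrib]
    have e1 : (∑ i ∈ I, ∑ i' ∈ I, (((L i : ℤ)+1) * i) * ((L i' : ℤ)+1))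
        = (∑ i ∈ I, ((L i : ℤ)+1) * i) * (∑ i ∈ I, ((L i : ℤ)+1)) :=
      (Finset.sum_mul_sum _ _ _ _).symm
    have e2 : (∑ i ∈ I, ∑ i' ∈ I, ((L i : ℤ)+1) * (((L i' : ℤ)+1) * i'))
        = (∑ i ∈ I, ((L i : ℤ)+1)) * (∑ i ∈ I, ((L i : ℤ)+1) * i) :=
      (Finset.sum_mul_sum _ _ _ _).symm
    rw [e1, e2]
    ring
  have hP : 2 ∣ (∑ i ∈ I, ∑ i' ∈ I, ((L i : ℤ)+1) * ((L i' : ℤ)+1) * (((i - i').natAbs : ℤ))) := by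
    have hp : ∀ i ∈ I, (∑ i' ∈ I, ((L i : ℤ)+1) * ((L i' : ℤ)+1) * (((i - i').natAbs : ℤ)))
        = (∑ i' ∈ I, (((L i : ℤ)+1) * ((L i' : ℤ)+1)) * ((((i - i').natAbs : ℤ)) - (i - i')))
          + ∑ i' ∈ I, ((L i : ℤ)+1) * ((L i' : ℤ)+1) * (i - i') := by
      intro i _
      rw [← Finset.sum_add_distrib]
      exact Finset.sum_congr rfl fun i' _ => by ring
    rw [Finset.sum_congr rfl hp, Finset.sum_add_distrib, hz, add_zero]
    exact Finset.dvd_sum fun i _ => Finset.dvd_sum fun i' _ =>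
      Dvd.dvd.mul_left (by omega) _
  have hTZ : 2 ∣ (T : ℤ) := by
    rw [hT, sum_Fd_eq d L, ← hI]
    obtain ⟨p, hp⟩ := hP
    exact ⟨p + (∑ i ∈ I, (L i : ℤ)) * (∑ i ∈ I, ((L i : ℤ)+1)) - ∑ i ∈ I, (L i : ℤ),
      by rw [hp]; ring⟩
  have hTN : 2 ∣ T := by exact_mod_cast hTZ
  have hw : wiener (caterpillar d L) = T / 2 := by
    rw [wiener, sum_dist_eq d L]
  rw [hw]
  have : (2:ℤ) * ((T / 2 : ℕ) : ℤ) = (T : ℤ) := by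
    rw [← Nat.cast_ofNat, ← Nat.cast_mul, Nat.mul_div_cancel' hTN]
  rw [this, hT, sum_Fd_eq d L]

lemma LB_eq_LA (n d x s : ℤ) (hx1 : 2 ≤ x) (hxd : 2*x ≤ 2*d - 4) :
   ∀ i : ℤ, ((B1L (n-2) d (x-1) i + (if i = s then 1 else 0) + (if i = d then 1 else 0) : ℕ) : ℤ)
     = ((B1L (n-2) d x i + (if i = s then 1 else 0) + (if i = d then 1 else 0) : ℕ) : ℤ)
      + ((if i = (-d-1+x)-1 then (1:ℤ) else 0) + (if i = (d+1-x)+1 then 1 else 0)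
        - (if i = (-d-1+x) then 1 else 0) - (if i = (d+1-x) then 1 else 0)) := by
  intro i
  simp only [B1L]
  push_cast
  split_ifs <;> omega

lemma mA_split (n d x s : ℤ) (hxd : 2*x ≤ 2*d - 4) :
    ∀ i : ℤ, ((B1L (n-2) d x i + (if i = s then 1 else 0) + (if i = d then 1 else 0) : ℕ) : ℤ) + 1
    = (if i = -d-1+x then (1:ℤ) else 0)
      + ((if i = d+1-x then (1:ℤ) else 0)
      + ((if -((n - 2 - 2*d - 4)/2) ≤ i ∧ i ≤ (n - 2 - 2*d - 4)/2 then (1:ℤ) else 0)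
      + ((if i = s then (1:ℤ) else 0)
      + ((if i = d then (1:ℤ) else 0) + 1)))) := by
  intro i
  simp only [B1L, abs_le]
  push_cast
  split_ifs <;> omega


set_option maxHeartbeats 1600000 in
/-- `W(G₁(n,d,x−1,s)) − W(G₁(n,d,x,s)) = 2n − 4x`, divisible by 4. -/
theorem wiener_G1_stepX (n d x s : ℤ) (hne : Even n) (hn : 20 ≤ n)
    (hd1 : n - 4 ≤ 4 * d) (hd2 : 2 * d ≤ n - 10)
    (hx1 : 2 ≤ x) (hx2 : 2 * x ≤ 4 + 4 * d - (n - 2))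
    (hs : s ∈ ({-1, 0, 1, 2} : Set ℤ)) :
    (wiener (G1 n d (x - 1) s) : ℤ) - (wiener (G1 n d x s) : ℤ) = 2 * n - 4 * x ∧
    (4 : ℤ) ∣ (2 * n - 4 * x) := by
  obtain ⟨c, hc⟩ := hne
  have hsb : -1 ≤ s ∧ s ≤ 2 := by
    simp only [Set.mem_insert_iff, Set.mem_singleton_iff] at hs
    rcases hs with rfl | rfl | rfl | rfl <;> omega
  have hK : 2 * ((n - 2 - 2*d - 4)/2) = n - 2*d - 6 := by omega
  refine ⟨?_, ⟨c - x, by omega⟩⟩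
  simp only [G1]
  set LA : ℤ → ℕ := fun i => B1L (n-2) d x i + (if i = s then 1 else 0) + (if i = d then 1 else 0)
    with hLA
  set LB : ℤ → ℕ := fun i => B1L (n-2) d (x-1) i + (if i = s then 1 else 0) + (if i = d then 1 else 0)
    with hLB
  clear_value LA LB
  have hm1 : (-d-1+x)-1 ∈ Finset.Icc (-d) d := by rw [Finset.mem_Icc]; omega
  have hm2 : (d+1-x)+1 ∈ Finset.Icc (-d) d := by rw [Finset.mem_Icc]; omega
  have hm3 : (-d-1+x) ∈ Finset.Icc (-d) d := by rw [Finset.mem_Icc]; omega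
  have hm4 : (d+1-x) ∈ Finset.Icc (-d) d := by rw [Finset.mem_Icc]; omega
  -- pointwise relation between the two leaf functions
  have hm : ∀ i : ℤ, (LB i : ℤ) = (LA i : ℤ)
      + ((if i = (-d-1+x)-1 then (1:ℤ) else 0) + (if i = (d+1-x)+1 then 1 else 0)
        - (if i = (-d-1+x) then 1 else 0) - (if i = (d+1-x) then 1 else 0)) := by
    intro i
    rw [hLA, hLB]
    exact LB_eq_LA n d x s hx1 (by omega) i
  -- the delta combo sums to zero
  have hD0 : (∑ i ∈ Finset.Icc (-d) d,
      ((if i = (-d-1+x)-1 then (1:ℤ) else 0) + (if i = (d+1-x)+1 then 1 else 0)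
        - (if i = (-d-1+x) then 1 else 0) - (if i = (d+1-x) then 1 else 0))) = 0 := by
    rw [Finset.sum_congr rfl (fun i (_ : i ∈ Finset.Icc (-d) d) => (mul_one
      ((if i = (-d-1+x)-1 then (1:ℤ) else 0) + (if i = (d+1-x)+1 then 1 else 0)
        - (if i = (-d-1+x) then 1 else 0) - (if i = (d+1-x) then 1 else 0))).symm),
      sum_delta_s12 hm1 hm2 hm3 hm4 (fun _ => (1:ℤ))]
    ring
  have hSL : ∑ i ∈ Finset.Icc (-d) d, (LB i : ℤ) = ∑ i ∈ Finset.Icc (-d) d, (LA i : ℤ) := by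
    rw [Finset.sum_congr rfl (fun i (_ : i ∈ Finset.Icc (-d) d) => hm i),
      Finset.sum_add_distrib, hD0, add_zero]
  have hSM : ∑ i ∈ Finset.Icc (-d) d, ((LB i : ℤ)+1) = ∑ i ∈ Finset.Icc (-d) d, ((LA i : ℤ)+1) := by
    have hp : ∀ i ∈ Finset.Icc (-d) d, ((LB i : ℤ)+1) = (((LA i : ℤ)+1)
        + ((if i = (-d-1+x)-1 then (1:ℤ) else 0) + (if i = (d+1-x)+1 then 1 else 0)
        - (if i = (-d-1+x) then 1 else 0) - (if i = (d+1-x) then 1 else 0))) := by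
      intro i _; rw [hm i]; ring
    rw [Finset.sum_congr rfl hp, Finset.sum_add_distrib, hD0, add_zero]
  -- the moving-window sum
  have hgv : ∀ v : ℤ, (∑ i' ∈ Finset.Icc (-d) d,
      ((if i' = (-d-1+x)-1 then (1:ℤ) else 0) + (if i' = (d+1-x)+1 then 1 else 0)
        - (if i' = (-d-1+x) then 1 else 0) - (if i' = (d+1-x) then 1 else 0))
        * (((v - i').natAbs : ℤ)))
      = (if -d-1+x ≤ v ∧ v ≤ d+1-x then 2 else 0) := by
    intro v
    rw [sum_delta_s12 hm1 hm2 hm3 hm4 (fun i' => ((v - i').natAbs : ℤ))]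
    split_ifs <;> omega
  -- expansion of the main double sum
  have hexp : ∀ i ∈ Finset.Icc (-d) d, ∀ i' ∈ Finset.Icc (-d) d,
      ((LB i : ℤ)+1) * ((LB i' : ℤ)+1) * (((i - i').natAbs : ℤ))
      = ((LA i : ℤ)+1) * ((LA i' : ℤ)+1) * (((i - i').natAbs : ℤ))
        + (((LA i : ℤ)+1) *
            (((if i' = (-d-1+x)-1 then (1:ℤ) else 0) + (if i' = (d+1-x)+1 then 1 else 0)
              - (if i' = (-d-1+x) then 1 else 0) - (if i' = (d+1-x) then 1 else 0))
              * (((i - i').natAbs : ℤ)))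
          + (((if i = (-d-1+x)-1 then (1:ℤ) else 0) + (if i = (d+1-x)+1 then 1 else 0)
              - (if i = (-d-1+x) then 1 else 0) - (if i = (d+1-x) then 1 else 0))
              * (((LA i' : ℤ)+1) * (((i - i').natAbs : ℤ)))
            + ((if i = (-d-1+x)-1 then (1:ℤ) else 0) + (if i = (d+1-x)+1 then 1 else 0)
              - (if i = (-d-1+x) then 1 else 0) - (if i = (d+1-x) then 1 else 0))
              * (((if i' = (-d-1+x)-1 then (1:ℤ) else 0) + (if i' = (d+1-x)+1 then 1 else 0)
              - (if i' = (-d-1+x) then 1 else 0) - (if i' = (d+1-x) then 1 else 0))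
              * (((i - i').natAbs : ℤ))))) := by
    intro i _ i' _
    rw [hm i, hm i']
    ring
  have hinner : ∀ i ∈ Finset.Icc (-d) d,
      (∑ i' ∈ Finset.Icc (-d) d, ((LB i : ℤ)+1) * ((LB i' : ℤ)+1) * (((i - i').natAbs : ℤ)))
      = (∑ i' ∈ Finset.Icc (-d) d, ((LA i : ℤ)+1) * ((LA i' : ℤ)+1) * (((i - i').natAbs : ℤ)))
        + (((LA i : ℤ)+1) * (if -d-1+x ≤ i ∧ i ≤ d+1-x then 2 else 0)
          + (((if i = (-d-1+x)-1 then (1:ℤ) else 0) + (if i = (d+1-x)+1 then 1 else 0)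
              - (if i = (-d-1+x) then 1 else 0) - (if i = (d+1-x) then 1 else 0))
              * (∑ i' ∈ Finset.Icc (-d) d, ((LA i' : ℤ)+1) * (((i - i').natAbs : ℤ)))
            + ((if i = (-d-1+x)-1 then (1:ℤ) else 0) + (if i = (d+1-x)+1 then 1 else 0)
              - (if i = (-d-1+x) then 1 else 0) - (if i = (d+1-x) then 1 else 0))
              * (if -d-1+x ≤ i ∧ i ≤ d+1-x then 2 else 0))) := by
    intro i hi
    rw [Finset.sum_congr rfl (hexp i hi), Finset.sum_add_distrib, Finset.sum_add_distrib,
      Finset.sum_add_distrib, ← Finset.mul_sum, ← Finset.mul_sum, ← Finset.mul_sum, hgv i]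
  -- name the window sum M
  set M : ℤ := ∑ i ∈ Finset.Icc (-d-1+x) (d+1-x), ((LA i : ℤ)+1) with hMdef
  have hwinA : (∑ i ∈ Finset.Icc (-d) d,
      ((LA i : ℤ)+1) * (if -d-1+x ≤ i ∧ i ≤ d+1-x then 2 else 0)) = 2 * M := by
    rw [hMdef]
    exact sum_mul_window (by omega) (by omega) (fun i => ((LA i : ℤ)+1))
  have hFF : (∑ i ∈ Finset.Icc (-d) d,
      ((if i = (-d-1+x)-1 then (1:ℤ) else 0) + (if i = (d+1-x)+1 then 1 else 0)
        - (if i = (-d-1+x) then 1 else 0) - (if i = (d+1-x) then 1 else 0))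
        * (∑ i' ∈ Finset.Icc (-d) d, ((LA i' : ℤ)+1) * (((i - i').natAbs : ℤ)))) = 2 * M := by
    rw [sum_delta_s12 hm1 hm2 hm3 hm4
      (fun v => ∑ i' ∈ Finset.Icc (-d) d, ((LA i' : ℤ)+1) * (((v - i').natAbs : ℤ)))]
    rw [← Finset.sum_add_distrib, ← Finset.sum_sub_distrib, ← Finset.sum_sub_distrib]
    have hp : ∀ i' ∈ Finset.Icc (-d) d,
        ((LA i' : ℤ)+1) * ((((-d-1+x)-1 - i').natAbs : ℤ))
          + ((LA i' : ℤ)+1) * ((((d+1-x)+1 - i').natAbs : ℤ))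
          - ((LA i' : ℤ)+1) * ((((-d-1+x) - i').natAbs : ℤ))
          - ((LA i' : ℤ)+1) * ((((d+1-x) - i').natAbs : ℤ))
        = ((LA i' : ℤ)+1) * (if -d-1+x ≤ i' ∧ i' ≤ d+1-x then 2 else 0) := by
      intro i' _
      have hn' : ((((-d-1+x)-1 - i').natAbs : ℤ)) + ((((d+1-x)+1 - i').natAbs : ℤ))
          - ((((-d-1+x) - i').natAbs : ℤ)) - ((((d+1-x) - i').natAbs : ℤ))
          = (if -d-1+x ≤ i' ∧ i' ≤ d+1-x then 2 else 0) := by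
        split_ifs <;> omega
      calc ((LA i' : ℤ)+1) * ((((-d-1+x)-1 - i').natAbs : ℤ))
          + ((LA i' : ℤ)+1) * ((((d+1-x)+1 - i').natAbs : ℤ))
          - ((LA i' : ℤ)+1) * ((((-d-1+x) - i').natAbs : ℤ))
          - ((LA i' : ℤ)+1) * ((((d+1-x) - i').natAbs : ℤ))
          = ((LA i' : ℤ)+1) * (((((-d-1+x)-1 - i').natAbs : ℤ)) + ((((d+1-x)+1 - i').natAbs : ℤ))
            - ((((-d-1+x) - i').natAbs : ℤ)) - ((((d+1-x) - i').natAbs : ℤ))) := by ring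
        _ = ((LA i' : ℤ)+1) * (if -d-1+x ≤ i' ∧ i' ≤ d+1-x then 2 else 0) := by rw [hn']
    rw [Finset.sum_congr rfl hp, hMdef]
    exact sum_mul_window (by omega) (by omega) (fun i => ((LA i : ℤ)+1))
  have hGG : (∑ i ∈ Finset.Icc (-d) d,
      ((if i = (-d-1+x)-1 then (1:ℤ) else 0) + (if i = (d+1-x)+1 then 1 else 0)
        - (if i = (-d-1+x) then 1 else 0) - (if i = (d+1-x) then 1 else 0))
        * (if -d-1+x ≤ i ∧ i ≤ d+1-x then 2 else 0)) = -4 := by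
    rw [sum_delta_s12 hm1 hm2 hm3 hm4 (fun v => (if -d-1+x ≤ v ∧ v ≤ d+1-x then (2:ℤ) else 0))]
    have e1 : ¬(-d-1+x ≤ (-d-1+x)-1 ∧ (-d-1+x)-1 ≤ d+1-x) := by omega
    have e2 : ¬(-d-1+x ≤ (d+1-x)+1 ∧ (d+1-x)+1 ≤ d+1-x) := by omega
    have e3 : (-d-1+x ≤ (-d-1+x) ∧ (-d-1+x) ≤ d+1-x) := by omega
    have e4 : (-d-1+x ≤ (d+1-x) ∧ (d+1-x) ≤ d+1-x) := by omega
    rw [if_neg e1, if_neg e2, if_pos e3, if_pos e4]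
    ring
  -- the difference of the main double sums
  have hPB : (∑ i ∈ Finset.Icc (-d) d, ∑ i' ∈ Finset.Icc (-d) d,
        ((LB i : ℤ)+1) * ((LB i' : ℤ)+1) * (((i - i').natAbs : ℤ)))
      = (∑ i ∈ Finset.Icc (-d) d, ∑ i' ∈ Finset.Icc (-d) d,
        ((LA i : ℤ)+1) * ((LA i' : ℤ)+1) * (((i - i').natAbs : ℤ)))
        + (2 * M + (2 * M + -4)) := by
    rw [Finset.sum_congr rfl hinner, Finset.sum_add_distrib, Finset.sum_add_distrib,
      Finset.sum_add_distrib, hwinA, hFF, hGG]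
  -- value of M
  have hM : M = n - 2*x + 1 := by
    rw [hMdef, hLA]
    rw [Finset.sum_congr rfl (fun i (_ : i ∈ Finset.Icc (-d-1+x) (d+1-x)) =>
      mA_split n d x s (by omega) i)]
    rw [Finset.sum_add_distrib, Finset.sum_add_distrib, Finset.sum_add_distrib,
      Finset.sum_add_distrib, Finset.sum_add_distrib]
    rw [sum_pt (by rw [Finset.mem_Icc]; omega) (fun _ => (1:ℤ)),
      sum_pt (by rw [Finset.mem_Icc]; omega) (fun _ => (1:ℤ)),
      sum_pt (by rw [Finset.mem_Icc]; omega) (fun _ => (1:ℤ)),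
      sum_window (by omega) (by omega) (by omega),
      Finset.sum_ite_eq' (Finset.Icc (-d-1+x) (d+1-x)) d (fun _ => (1:ℤ)),
      if_neg (by rw [Finset.mem_Icc]; omega),
      sum_one (by omega)]
    omega
  -- put everything together
  have hWA := wiener_cat d LA
  have hWB := wiener_cat d LB
  have hcross : 2 * (∑ i ∈ Finset.Icc (-d) d, (LB i : ℤ)) * (∑ i ∈ Finset.Icc (-d) d, ((LB i : ℤ)+1))
      = 2 * (∑ i ∈ Finset.Icc (-d) d, (LA i : ℤ)) * (∑ i ∈ Finset.Icc (-d) d, ((LA i : ℤ)+1)) := by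
    rw [hSL, hSM]
  linarith [hWA, hWB, hPB, hM, hSL, hcross]
end
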